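/- arXiv:1506.07512 — 9 statements merged into one kernel-verified Lean document; each statement's English description precedes it below -/
import Mathlib

section
/- Let F : ℝ^d → ℝ be μ-strongly convex (μ > 0) and attain its minimum value F* = min_x F(x). Then for every s ∈ ℝ^d and every λ ≥ 0, the function f_{s,λ}(x) := F(x) + (λ/2)‖x − s‖₂² attains a minimum value f*_{s,λ}, and f*_{s,λ} − F* ≤ (λ/(μ + λ)) · (F(s) − F*). -/
open scoped RealInnerProductSpace

/-- Lemma: Relationship between minima.
If `F : ℝ^d → ℝ` is `μ`-strongly convex (`μ > 0`) attaining minimum value `Fstar`,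
then for every `s` and `λ ≥ 0` the function `f_{s,λ}(x) = F x + (λ/2)‖x - s‖²`
attains a minimum value `fstar` with `fstar - Fstar ≤ (λ/(μ+λ)) (F s - Fstar)`. -/
theorem stmt0 {d : ℕ} (F : EuclideanSpace ℝ (Fin d) → ℝ) (μ : ℝ) (hμ : 0 < μ)
    (hsc : ConvexOn ℝ Set.univ (fun x => F x - μ / 2 * ‖x‖ ^ 2))
    (Fstar : ℝ) (hF : IsLeast (Set.range F) Fstar)
    (s : EuclideanSpace ℝ (Fin d)) (lam : ℝ) (hlam : 0 ≤ lam) :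
    ∃ fstar : ℝ,
      IsLeast (Set.range (fun x => F x + lam / 2 * ‖x - s‖ ^ 2)) fstar ∧
      fstar - Fstar ≤ lam / (μ + lam) * (F s - Fstar) := by
  obtain ⟨⟨x₀, hx₀⟩, hlbr⟩ := hF
  have hlb : ∀ x, Fstar ≤ F x := fun x => hlbr ⟨x, rfl⟩
  set f : EuclideanSpace ℝ (Fin d) → ℝ := fun x => F x + lam / 2 * ‖x - s‖ ^ 2 with hfdef
  rcases hlam.eq_or_lt with h0 | hpos
  · refine ⟨Fstar, ?_, by rw [← h0]; simp⟩
    have hfe : f = F := by funext x; simp [hfdef, ← h0]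
    rw [hfe]
    exact ⟨⟨x₀, hx₀⟩, hlbr⟩
  -- main case : lam > 0
  have hml : 0 < μ + lam := by linarith
  -- continuity of f
  have hgc : Continuous fun x : EuclideanSpace ℝ (Fin d) => F x - μ / 2 * ‖x‖ ^ 2 :=
    (hsc.locallyLipschitz).continuous
  have hFc : Continuous F := by
    have h2 : Continuous fun x : EuclideanSpace ℝ (Fin d) =>
        (F x - μ / 2 * ‖x‖ ^ 2) + μ / 2 * ‖x‖ ^ 2 :=
      hgc.add (continuous_const.mul ((continuous_norm).pow 2))
    simpa using h2
  have hfc : Continuous f := by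
    exact hFc.add (continuous_const.mul (((continuous_id.sub continuous_const).norm).pow 2))
  -- coercivity radius
  set c : ℝ := 2 * (F s - Fstar) / lam with hcdef
  have hc0 : 0 ≤ c := div_nonneg (by have := hlb s; linarith) hlam
  set R : ℝ := Real.sqrt c + 1 with hRdef
  have hR0 : 0 < R := by positivity
  obtain ⟨xh, hxhmem, hxhmin⟩ := (isCompact_closedBall s R).exists_isMinOn
    ⟨s, Metric.mem_closedBall_self hR0.le⟩ hfc.continuousOn
  have hfs : f s = F s := by simp [hfdef]
  have hglobal : ∀ x, f xh ≤ f x := by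
    intro x
    by_cases hx : x ∈ Metric.closedBall s R
    · exact hxhmin hx
    · have hd : R < dist x s := by simpa [Metric.mem_closedBall] using hx
      have hns : R ^ 2 ≤ ‖x - s‖ ^ 2 := by
        rw [← dist_eq_norm]
        exact pow_le_pow_left₀ hR0.le hd.le 2
      have hRsq : c + 1 ≤ R ^ 2 := by
        rw [hRdef]
        nlinarith [Real.sq_sqrt hc0, Real.sqrt_nonneg c]
      have hlamc : lam / 2 * c = F s - Fstar := by
        rw [hcdef]; field_simp
      have h1 : f s < f x := by
        rw [hfs]
        have : F s - Fstar + lam / 2 ≤ lam / 2 * ‖x - s‖ ^ 2 := by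
          calc F s - Fstar + lam / 2 = lam / 2 * (c + 1) := by rw [← hlamc]; ring
            _ ≤ lam / 2 * R ^ 2 := by gcongr
            _ ≤ lam / 2 * ‖x - s‖ ^ 2 := by gcongr
        have := hlb x
        simp only [hfdef]
        linarith
      exact (hxhmin (Metric.mem_closedBall_self hR0.le)).trans h1.le
  refine ⟨f xh, ⟨⟨xh, rfl⟩, by rintro y ⟨x, rfl⟩; exact hglobal x⟩, ?_⟩
  -- the bound via strong convexity
  set t : ℝ := lam / (μ + lam) with htdef
  have ht0 : 0 ≤ t := div_nonneg hlam hml.le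
  have htm : t * (μ + lam) = lam := div_mul_cancel₀ _ hml.ne'
  have h1t : 0 ≤ 1 - t := by
    have : t ≤ 1 := by rw [div_le_one hml]; linarith
    linarith
  have hsF : StrongConvexOn Set.univ μ F := strongConvexOn_iff_convex.mpr hsc
  set y : EuclideanSpace ℝ (Fin d) := (1 - t) • x₀ + t • s with hydef
  have hFineq := hsF.2 (Set.mem_univ x₀) (Set.mem_univ s) h1t ht0 (by ring)
  have hysub : y - s = (1 - t) • (x₀ - s) := by
    rw [hydef]; module
  have hnorm : ‖y - s‖ ^ 2 = (1 - t) ^ 2 * ‖x₀ - s‖ ^ 2 := by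
    rw [hysub, norm_smul, mul_pow, Real.norm_eq_abs, sq_abs]
  have key : f y ≤ Fstar + t * (F s - Fstar) := by
    have : f y = F y + lam / 2 * ((1 - t) ^ 2 * ‖x₀ - s‖ ^ 2) := by
      rw [hfdef]; simp only [hnorm]
    rw [this]
    have h2 : F y ≤ (1 - t) * F x₀ + t * F s - (1 - t) * t * (μ / 2 * ‖x₀ - s‖ ^ 2) := by
      simpa [smul_eq_mul] using hFineq
    have hcoef : lam / 2 * ((1 - t) ^ 2 * ‖x₀ - s‖ ^ 2)
        - (1 - t) * t * (μ / 2 * ‖x₀ - s‖ ^ 2) = 0 := by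
      have hc : lam * (1 - t) = t * μ := by
        have : t * μ = lam - t * lam := by linarith [htm]
        rw [this]; ring
      linear_combination ((1 - t) / 2 * ‖x₀ - s‖ ^ 2) * hc
    rw [← hx₀]
    linarith
  have := hglobal y
  linarith
end

section
/- Let F : ℝ^d → ℝ be μ-strongly convex (μ > 0) attaining minimum value F*, let λ > 0, c' ∈ (0,1), and x ∈ ℝ^d, and let f*_{x,λ} denote the minimum value of f_{x,λ}. If x' ∈ ℝ^d satisfies f_{x,λ}(x') − f*_{x,λ} ≤ (c'·μ/(λ + μ)) · (f_{x,λ}(x) − f*_{x,λ}), then F(x') − F* ≤ ((λ + c'·μ)/(λ + μ)) · (F(x) − F*). -/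
/-- Contraction in APPA, one step, deterministic oracle. -/
theorem stmt1 {d : ℕ} (F : EuclideanSpace ℝ (Fin d) → ℝ) (μ : ℝ) (hμ : 0 < μ)
    (hsc : ConvexOn ℝ Set.univ (fun z => F z - μ / 2 * ‖z‖ ^ 2))
    (Fstar : ℝ) (hF : IsLeast (Set.range F) Fstar)
    (lam : ℝ) (hlam : 0 < lam) (c' : ℝ) (hc' : c' ∈ Set.Ioo (0 : ℝ) 1)
    (x : EuclideanSpace ℝ (Fin d))
    (fstar : ℝ)
    (hfstar : IsLeast (Set.range (fun z => F z + lam / 2 * ‖z - x‖ ^ 2)) fstar)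
    (x' : EuclideanSpace ℝ (Fin d))
    (hx' : (F x' + lam / 2 * ‖x' - x‖ ^ 2) - fstar ≤
      c' * μ / (lam + μ) * ((F x + lam / 2 * ‖x - x‖ ^ 2) - fstar)) :
    F x' - Fstar ≤ (lam + c' * μ) / (lam + μ) * (F x - Fstar) := by
  have hs : (0:ℝ) < lam + μ := by linarith
  obtain ⟨xs, hxs⟩ := hF.1
  -- strong convexity
  have hSC : StrongConvexOn (Set.univ : Set (EuclideanSpace ℝ (Fin d))) μ F :=
    strongConvexOn_iff_convex.mpr hsc
  set a : ℝ := lam / (lam + μ) with ha_def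
  set b : ℝ := μ / (lam + μ) with hb_def
  have ha : 0 ≤ a := by positivity
  have hb : 0 ≤ b := by positivity
  have hab : a + b = 1 := by
    rw [ha_def, hb_def, ← add_div, div_self hs.ne']
  set p : EuclideanSpace ℝ (Fin d) := a • x + b • xs with hp_def
  have hFp : F p ≤ a * F x + b * F xs - a * b * (μ / 2 * ‖x - xs‖ ^ 2) := by
    have h := hSC.2 (Set.mem_univ x) (Set.mem_univ xs) ha hb hab
    rw [smul_eq_mul, smul_eq_mul] at h
    exact h
  have hpx : ‖p - x‖ ^ 2 = b ^ 2 * ‖xs - x‖ ^ 2 := by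
    have hpe : p - x = b • (xs - x) := by
      calc p - x = a • x + b • xs - (a + b) • x := by rw [hab, one_smul]
        _ = b • (xs - x) := by rw [add_smul, smul_sub]; abel
    rw [hpe, norm_smul]
    simp [Real.norm_eq_abs, mul_pow, sq_abs]
  have hnorm : ‖xs - x‖ = ‖x - xs‖ := norm_sub_rev _ _
  have h2 : fstar ≤ a * F x + b * Fstar := by
    have hle : fstar ≤ F p + lam / 2 * ‖p - x‖ ^ 2 := hfstar.2 ⟨p, rfl⟩
    have hcoef : lam / 2 * (b ^ 2 * ‖x - xs‖ ^ 2) = a * b * (μ / 2 * ‖x - xs‖ ^ 2) := by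
      have hz : lam / 2 * b ^ 2 = a * b * (μ / 2) := by
        rw [ha_def, hb_def]; field_simp
      calc lam / 2 * (b ^ 2 * ‖x - xs‖ ^ 2) = lam / 2 * b ^ 2 * ‖x - xs‖ ^ 2 := by ring
        _ = a * b * (μ / 2) * ‖x - xs‖ ^ 2 := by rw [hz]
        _ = a * b * (μ / 2 * ‖x - xs‖ ^ 2) := by ring
    rw [hpx, hnorm] at hle
    rw [hxs] at hFp
    linarith [hle, hFp, hcoef]
  have h3 : Fstar ≤ F x := hF.2 ⟨x, rfl⟩
  have h4 : Fstar ≤ fstar := by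
    obtain ⟨z, hz⟩ := hfstar.1
    have h5 : Fstar ≤ F z := hF.2 ⟨z, rfl⟩
    nlinarith [sq_nonneg ‖z - x‖, h5, hz.symm.le, hlam]
  -- simplify hx'
  have hxx : ‖x - x‖ = 0 := by simp
  rw [hxx] at hx'
  have h1 : F x' ≤ c' * μ / (lam + μ) * (F x - fstar) + fstar := by
    nlinarith [sq_nonneg ‖x' - x‖, hx', hlam]
  have hk : c' * μ / (lam + μ) * (lam + μ) = c' * μ := by field_simp
  have ha' : a * (lam + μ) = lam := by rw [ha_def]; field_simp
  have hb' : b * (lam + μ) = μ := by rw [hb_def]; field_simp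
  rw [div_mul_eq_mul_div, le_div_iff₀ hs]
  have h1' : F x' * (lam + μ) ≤ c' * μ * (F x - fstar) + fstar * (lam + μ) := by
    have := mul_le_mul_of_nonneg_right h1 hs.le
    calc F x' * (lam + μ) ≤ (c' * μ / (lam + μ) * (F x - fstar) + fstar) * (lam + μ) := this
      _ = c' * μ / (lam + μ) * (lam + μ) * (F x - fstar) + fstar * (lam + μ) := by ring
      _ = c' * μ * (F x - fstar) + fstar * (lam + μ) := by rw [hk]
  have h2' : fstar * (lam + μ) ≤ lam * F x + μ * Fstar := by
    have := mul_le_mul_of_nonneg_right h2 hs.le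
    calc fstar * (lam + μ) ≤ (a * F x + b * Fstar) * (lam + μ) := this
      _ = a * (lam + μ) * F x + b * (lam + μ) * Fstar := by ring
      _ = lam * F x + μ * Fstar := by rw [ha', hb']
  have key : 0 ≤ c' * μ * (fstar - Fstar) :=
    mul_nonneg (mul_nonneg hc'.1.le hμ.le) (sub_nonneg.mpr h4)
  linarith [h1', h2', key]
end

section
/- Let F : ℝ^d → ℝ be μ-strongly convex (μ > 0) attaining minimum value F*, and let λ > 0. Suppose a sequence x^(0), x^(1), …, x^(T) in ℝ^d satisfies, for each t = 1, …, T, the approximate proximal condition f_{x^(t−1),λ}(x^(t)) − f*_{x^(t−1),λ} ≤ (μ/(2(λ + μ))) · (f_{x^(t−1),λ}(x^(t−1)) − f*_{x^(t−1),λ}), where f*_{s,λ} denotes the minimum value of f_{s,λ}. Then F(x^(T)) − F* ≤ ((λ + μ/2)/(λ + μ))^T · (F(x^(0)) − F*). -/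
/-- Geometric convergence of APPA with a
`(2(λ+μ)/μ, λ)`-primal oracle. -/
theorem stmt2 {d : ℕ} (F : EuclideanSpace ℝ (Fin d) → ℝ) (μ : ℝ) (hμ : 0 < μ)
    (hsc : ConvexOn ℝ Set.univ (fun z => F z - μ / 2 * ‖z‖ ^ 2))
    (Fstar : ℝ) (hF : IsLeast (Set.range F) Fstar)
    (lam : ℝ) (hlam : 0 < lam)
    (T : ℕ) (x : ℕ → EuclideanSpace ℝ (Fin d))
    (fstar : EuclideanSpace ℝ (Fin d) → ℝ)
    (hfstar : ∀ s, IsLeast (Set.range (fun z => F z + lam / 2 * ‖z - s‖ ^ 2)) (fstar s))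
    (hstep : ∀ t, 1 ≤ t → t ≤ T →
      (F (x t) + lam / 2 * ‖x t - x (t - 1)‖ ^ 2) - fstar (x (t - 1)) ≤
        μ / (2 * (lam + μ)) *
          ((F (x (t - 1)) + lam / 2 * ‖x (t - 1) - x (t - 1)‖ ^ 2) - fstar (x (t - 1)))) :
    F (x T) - Fstar ≤ ((lam + μ / 2) / (lam + μ)) ^ T * (F (x 0) - Fstar) := by
  have hlm : (0:ℝ) < lam + μ := by linarith
  set c : ℝ := (lam + μ / 2) / (lam + μ) with hcdef
  have hc0 : 0 ≤ c := by positivity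
  set θ : ℝ := μ / (lam + μ) with hθdef
  set r : ℝ := μ / (2 * (lam + μ)) with hrdef
  have hθ0 : 0 ≤ θ := by positivity
  have hθ1 : θ ≤ 1 := by
    rw [hθdef, div_le_one hlm]; linarith
  have hr0 : 0 ≤ r := by positivity
  have hcsum : (1 - θ) + r = c := by
    rw [hθdef, hrdef, hcdef]; field_simp; ring
  obtain ⟨w, hw⟩ := hF.1
  -- per-step contraction
  have step : ∀ t : ℕ, 1 ≤ t → t ≤ T →
      F (x t) - Fstar ≤ c * (F (x (t - 1)) - Fstar) := by
    intro t ht1 htT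
    set s : EuclideanSpace ℝ (Fin d) := x (t - 1) with hs
    -- basic facts about fstar s
    have hlow : Fstar ≤ fstar s := by
      obtain ⟨z, hzeq⟩ := (hfstar s).1
      have h1 : Fstar ≤ F z := hF.2 ⟨z, rfl⟩
      have h2 : 0 ≤ lam / 2 * ‖z - s‖ ^ 2 := by positivity
      simp only at hzeq
      linarith [hzeq ▸ (by linarith : Fstar ≤ F z + lam / 2 * ‖z - s‖ ^ 2)]
    -- strong convexity step: fstar s - Fstar ≤ (1-θ)(F s - Fstar)
    set z : EuclideanSpace ℝ (Fin d) := θ • w + (1 - θ) • s with hzdef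
    have hfz : fstar s ≤ F z + lam / 2 * ‖z - s‖ ^ 2 := (hfstar s).2 ⟨z, rfl⟩
    have hzs : z - s = θ • (w - s) := by
      rw [hzdef]; module
    have hns : ‖z - s‖ ^ 2 = θ ^ 2 * ‖w - s‖ ^ 2 := by
      rw [hzs, norm_smul, Real.norm_eq_abs, mul_pow, sq_abs]
    have hz := hsc.2 (Set.mem_univ w) (Set.mem_univ s) hθ0 (by linarith : (0:ℝ) ≤ 1 - θ)
      (by ring)
    simp only [smul_eq_mul] at hz
    rw [hw] at hz
    have e1 : ‖θ • w + (1 - θ) • s‖ ^ 2 =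
        θ ^ 2 * ‖w‖ ^ 2 + 2 * (θ * (1 - θ)) * (inner ℝ w s : ℝ) + (1 - θ) ^ 2 * ‖s‖ ^ 2 := by
      rw [@norm_add_sq_real, real_inner_smul_left, real_inner_smul_right,
        norm_smul, norm_smul, Real.norm_eq_abs, Real.norm_eq_abs, mul_pow, mul_pow,
        sq_abs, sq_abs]
      ring
    have e2 : ‖w - s‖ ^ 2 = ‖w‖ ^ 2 - 2 * (inner ℝ w s : ℝ) + ‖s‖ ^ 2 := by
      rw [@norm_sub_sq_real]
    have hmid2 : μ / 2 * (θ * ‖w‖ ^ 2 + (1 - θ) * ‖s‖ ^ 2 - ‖θ • w + (1 - θ) • s‖ ^ 2)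
        = μ / 2 * (θ * (1 - θ)) * ‖w - s‖ ^ 2 := by
      rw [e1, e2]; ring
    have hcoef : lam * θ ^ 2 = μ * θ * (1 - θ) := by
      rw [hθdef]; field_simp; ring
    have hcoef2 : lam / 2 * θ ^ 2 * ‖w - s‖ ^ 2 = μ / 2 * (θ * (1 - θ)) * ‖w - s‖ ^ 2 := by
      linear_combination (‖w - s‖ ^ 2 / 2) * hcoef
    have hfz' : fstar s ≤ F z + lam / 2 * θ ^ 2 * ‖w - s‖ ^ 2 := by
      rw [hns] at hfz; linarith
    have step1 : fstar s - Fstar ≤ (1 - θ) * (F s - Fstar) := by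
      rw [hzdef] at hfz'
      linarith [hfz', hz, hmid2, hcoef2]
    -- the oracle step
    have hst := hstep t ht1 htT
    rw [← hs] at hst
    have hss : ‖s - s‖ ^ 2 = 0 := by simp
    rw [hss] at hst
    have hQ : 0 ≤ lam / 2 * ‖x t - s‖ ^ 2 := by positivity
    have hprod : 0 ≤ r * (fstar s - Fstar) := mul_nonneg hr0 (by linarith)
    have goal' : F (x t) - Fstar ≤ ((1 - θ) + r) * (F s - Fstar) := by
      linarith [hst, step1, hQ, hprod]
    rw [hcsum] at goal'
    exact goal'
  -- induction
  have main : ∀ n : ℕ, n ≤ T → F (x n) - Fstar ≤ c ^ n * (F (x 0) - Fstar) := by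
    intro n
    induction n with
    | zero => intro _; simp
    | succ n ih =>
      intro hn
      have ihn := ih (by omega)
      have hstep' := step (n + 1) (by omega) hn
      have hsub : n + 1 - 1 = n := by omega
      rw [hsub] at hstep'
      calc F (x (n + 1)) - Fstar ≤ c * (F (x n) - Fstar) := hstep'
        _ ≤ c * (c ^ n * (F (x 0) - Fstar)) := mul_le_mul_of_nonneg_left ihn hc0
        _ = c ^ (n + 1) * (F (x 0) - Fstar) := by ring
  exact main T le_rfl
end

section
/- Let F : ℝ^d → ℝ be μ-strongly convex (μ > 0), let λ > 0, x₀ ∈ ℝ^d, ε > 0, and suppose x⁺ ∈ ℝ^d satisfies f_{x₀,λ}(x⁺) − f*_{x₀,λ} ≤ ε, where f*_{x₀,λ} is the minimum value of f_{x₀,λ}. Set μ' := μ/2 and g := λ(x₀ − x⁺). Then for all x ∈ ℝ^d: F(x) ≥ F(x⁺) − (1/(2μ'))‖g‖₂² + (μ'/2)‖x − (x₀ − (1/μ' + 1/λ)g)‖₂² − ((λ + 2μ')/μ')·ε. -/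
private lemma expand3' {E : Type*} [NormedAddCommGroup E] [InnerProductSpace ℝ E]
    (α β γ : ℝ) (u v w : E) :
    ‖α • u + β • v + γ • w‖ ^ 2 = α ^ 2 * ‖u‖ ^ 2 + β ^ 2 * ‖v‖ ^ 2 + γ ^ 2 * ‖w‖ ^ 2
      + 2 * (α * β) * (inner ℝ u v : ℝ) + 2 * (α * γ) * (inner ℝ u w : ℝ)
      + 2 * (β * γ) * (inner ℝ v w : ℝ) := by
  rw [← real_inner_self_eq_norm_sq, ← real_inner_self_eq_norm_sq,
    ← real_inner_self_eq_norm_sq, ← real_inner_self_eq_norm_sq]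
  simp only [inner_add_left, inner_add_right, real_inner_smul_left, real_inner_smul_right]
  rw [real_inner_comm v u, real_inner_comm w u, real_inner_comm w v]
  ring

private lemma expand2' {E : Type*} [NormedAddCommGroup E] [InnerProductSpace ℝ E]
    (α β : ℝ) (u v : E) :
    ‖α • u + β • v‖ ^ 2 = α ^ 2 * ‖u‖ ^ 2 + β ^ 2 * ‖v‖ ^ 2 + 2 * (α * β) * (inner ℝ u v : ℝ) := by
  rw [← real_inner_self_eq_norm_sq, ← real_inner_self_eq_norm_sq, ← real_inner_self_eq_norm_sq]
  simp only [inner_add_left, inner_add_right, real_inner_smul_left, real_inner_smul_right]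
  rw [real_inner_comm v u]
  ring

private lemma quad_id' {E : Type*} [NormedAddCommGroup E] [InnerProductSpace ℝ E]
    (t : ℝ) (z s : E) :
    ‖t • z + (1 - t) • s‖ ^ 2
      = t * ‖z‖ ^ 2 + (1 - t) * ‖s‖ ^ 2 - t * (1 - t) * ‖z - s‖ ^ 2 := by
  rw [expand2', norm_sub_sq_real]
  ring

set_option maxHeartbeats 1000000 in
/-- Lemma 4.1: quadratic lower bound from an approximate
proximal step. -/
theorem stmt3 {d : ℕ} (F : EuclideanSpace ℝ (Fin d) → ℝ) (μ : ℝ) (hμ : 0 < μ)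
    (hsc : ConvexOn ℝ Set.univ (fun z => F z - μ / 2 * ‖z‖ ^ 2))
    (lam : ℝ) (hlam : 0 < lam)
    (x₀ : EuclideanSpace ℝ (Fin d)) (ε : ℝ) (hε : 0 < ε)
    (fstar : ℝ)
    (hfstar : IsLeast (Set.range (fun z => F z + lam / 2 * ‖z - x₀‖ ^ 2)) fstar)
    (xp : EuclideanSpace ℝ (Fin d))
    (hxp : (F xp + lam / 2 * ‖xp - x₀‖ ^ 2) - fstar ≤ ε)
    (μ' : ℝ) (hμ' : μ' = μ / 2)
    (g : EuclideanSpace ℝ (Fin d)) (hg : g = lam • (x₀ - xp)) :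
    ∀ x : EuclideanSpace ℝ (Fin d),
      F x ≥ F xp - 1 / (2 * μ') * ‖g‖ ^ 2
        + μ' / 2 * ‖x - (x₀ - (1 / μ' + 1 / lam) • g)‖ ^ 2
        - (lam + 2 * μ') / μ' * ε := by
  subst hμ' hg
  intro x
  obtain ⟨⟨xs, hxs⟩, hub⟩ := hfstar
  simp only at hxs
  have hmin : ∀ z : EuclideanSpace ℝ (Fin d), fstar ≤ F z + lam / 2 * ‖z - x₀‖ ^ 2 :=
    fun z => hub ⟨z, rfl⟩
  have hμ0 : μ ≠ 0 := ne_of_gt hμ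
  have hl0 : lam ≠ 0 := ne_of_gt hlam
  -- Step 1: strong convexity step inequality
  have hstep : ∀ (z : EuclideanSpace ℝ (Fin d)) (t : ℝ), 0 < t → t < 1 →
      (μ + lam) / 2 * (1 - t) * ‖z - xs‖ ^ 2
        ≤ (F z + lam / 2 * ‖z - x₀‖ ^ 2) - fstar := by
    intro z t ht ht1
    have hcv := hsc.2 (Set.mem_univ z) (Set.mem_univ xs) (le_of_lt ht)
      (by linarith : (0:ℝ) ≤ 1 - t) (by ring)
    rw [smul_eq_mul, smul_eq_mul] at hcv
    have hq1 : ‖t • z + (1 - t) • xs‖ ^ 2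
        = t * ‖z‖ ^ 2 + (1 - t) * ‖xs‖ ^ 2 - t * (1 - t) * ‖z - xs‖ ^ 2 := quad_id' t z xs
    have hmove : (t • z + (1 - t) • xs) - x₀ = t • (z - x₀) + (1 - t) • (xs - x₀) := by
      module
    have hzz : (z - x₀) - (xs - x₀) = z - xs := by abel
    have hq2 : ‖(t • z + (1 - t) • xs) - x₀‖ ^ 2
        = t * ‖z - x₀‖ ^ 2 + (1 - t) * ‖xs - x₀‖ ^ 2 - t * (1 - t) * ‖z - xs‖ ^ 2 := by
      rw [hmove, quad_id', hzz]
    have hm := hmin (t • z + (1 - t) • xs)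
    have key : t * ((μ + lam) / 2 * (1 - t) * ‖z - xs‖ ^ 2)
        ≤ t * ((F z + lam / 2 * ‖z - x₀‖ ^ 2) - fstar) := by
      nlinarith [hm, hcv, hq1, hq2, hxs]
    exact le_of_mul_le_mul_left key ht
  -- Step 2: quadratic growth at the minimizer
  have grow : ∀ z : EuclideanSpace ℝ (Fin d),
      fstar + (μ + lam) / 2 * ‖z - xs‖ ^ 2 ≤ F z + lam / 2 * ‖z - x₀‖ ^ 2 := by
    intro z
    have hK0 : (0:ℝ) ≤ ‖z - xs‖ ^ 2 := by positivity
    by_contra hcon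
    push_neg at hcon
    set D : ℝ := (F z + lam / 2 * ‖z - x₀‖ ^ 2) - fstar with hDdef
    set M : ℝ := (μ + lam) / 2 * ‖z - xs‖ ^ 2 with hMdef
    have hD0 : 0 ≤ D := sub_nonneg.2 (hmin z)
    have hDM : D < M := by rw [hDdef]; linarith
    have hMpos : 0 < M := lt_of_le_of_lt hD0 hDM
    have ht : 0 < (M - D) / (2 * M) := div_pos (by linarith) (by linarith)
    have ht1 : (M - D) / (2 * M) < 1 := (div_lt_one (by linarith)).2 (by linarith)
    have hs := hstep z ((M - D) / (2 * M)) ht ht1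
    have hexp : (μ + lam) / 2 * (1 - (M - D) / (2 * M)) * ‖z - xs‖ ^ 2 = M - (M - D) / 2 := by
      have h1 : (μ + lam) / 2 * (1 - (M - D) / (2 * M)) * ‖z - xs‖ ^ 2
          = M * (1 - (M - D) / (2 * M)) := by rw [hMdef]; ring
      rw [h1]
      field_simp
    rw [hexp] at hs
    linarith
  -- Step 3: scalar reduction
  have eA : ‖x - xs‖ ^ 2 = ‖x - x₀‖ ^ 2
      - 2 * (inner ℝ (x - x₀) (xs - x₀) : ℝ) + ‖xs - x₀‖ ^ 2 := by
    rw [show x - xs = (x - x₀) - (xs - x₀) by abel, norm_sub_sq_real]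
  have eB : ‖xp - xs‖ ^ 2 = ‖xp - x₀‖ ^ 2
      - 2 * (inner ℝ (xp - x₀) (xs - x₀) : ℝ) + ‖xs - x₀‖ ^ 2 := by
    rw [show xp - xs = (xp - x₀) - (xs - x₀) by abel, norm_sub_sq_real]
  have h1 := grow x
  rw [eA] at h1
  have h2 := grow xp
  rw [eB] at h2
  have hgn : ‖lam • (x₀ - xp)‖ ^ 2 = lam ^ 2 * ‖xp - x₀‖ ^ 2 := by
    rw [norm_smul, norm_sub_rev, mul_pow, Real.norm_eq_abs, sq_abs]
  have hcen : x - (x₀ - (1 / (μ / 2) + 1 / lam) • (lam • (x₀ - xp)))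
      = (x - x₀) - ((μ + 2 * lam) / μ) • (xp - x₀) := by
    match_scalars <;> field_simp <;> ring
  have hcn : ‖x - (x₀ - (1 / (μ / 2) + 1 / lam) • (lam • (x₀ - xp)))‖ ^ 2
      = ‖x - x₀‖ ^ 2 - 2 * ((μ + 2 * lam) / μ) * (inner ℝ (x - x₀) (xp - x₀) : ℝ)
        + ((μ + 2 * lam) / μ) ^ 2 * ‖xp - x₀‖ ^ 2 := by
    rw [hcen, norm_sub_sq_real, real_inner_smul_right, norm_smul, mul_pow, Real.norm_eq_abs, sq_abs]
    ring
  have hS0 : (0:ℝ) ≤ ‖μ • (x - x₀) + (μ + 2 * lam) • (xp - x₀)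
      + (-(2 * (μ + lam))) • (xs - x₀)‖ ^ 2 := by positivity
  rw [expand3'] at hS0
  rw [ge_iff_le, hgn, hcn]
  -- Step 4: the exact algebraic combination
  have hid : F x - (F xp - 1 / (2 * (μ / 2)) * (lam ^ 2 * ‖xp - x₀‖ ^ 2)
        + μ / 2 / 2 * (‖x - x₀‖ ^ 2
            - 2 * ((μ + 2 * lam) / μ) * (inner ℝ (x - x₀) (xp - x₀) : ℝ)
            + ((μ + 2 * lam) / μ) ^ 2 * ‖xp - x₀‖ ^ 2)
        - (lam + 2 * (μ / 2)) / (μ / 2) * ε)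
      = ((F x + lam / 2 * ‖x - x₀‖ ^ 2) - fstar
          - (μ + lam) / 2 * (‖x - x₀‖ ^ 2
              - 2 * (inner ℝ (x - x₀) (xs - x₀) : ℝ) + ‖xs - x₀‖ ^ 2))
        + (fstar + ε - (F xp + lam / 2 * ‖xp - x₀‖ ^ 2))
        + ((μ + 2 * lam) / μ) * (ε - (μ + lam) / 2 * (‖xp - x₀‖ ^ 2
              - 2 * (inner ℝ (xp - x₀) (xs - x₀) : ℝ) + ‖xs - x₀‖ ^ 2))
        + (1 / (4 * μ)) * (μ ^ 2 * ‖x - x₀‖ ^ 2 + (μ + 2 * lam) ^ 2 * ‖xp - x₀‖ ^ 2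
            + (-(2 * (μ + lam))) ^ 2 * ‖xs - x₀‖ ^ 2
            + 2 * (μ * (μ + 2 * lam)) * (inner ℝ (x - x₀) (xp - x₀) : ℝ)
            + 2 * (μ * (-(2 * (μ + lam)))) * (inner ℝ (x - x₀) (xs - x₀) : ℝ)
            + 2 * ((μ + 2 * lam) * (-(2 * (μ + lam)))) * (inner ℝ (xp - x₀) (xs - x₀) : ℝ)) := by
    field_simp
    ring
  have e1 : 0 ≤ (F x + lam / 2 * ‖x - x₀‖ ^ 2) - fstar
      - (μ + lam) / 2 * (‖x - x₀‖ ^ 2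
          - 2 * (inner ℝ (x - x₀) (xs - x₀) : ℝ) + ‖xs - x₀‖ ^ 2) := by linarith
  have e2 : 0 ≤ fstar + ε - (F xp + lam / 2 * ‖xp - x₀‖ ^ 2) := by linarith
  have e3 : 0 ≤ ((μ + 2 * lam) / μ) * (ε - (μ + lam) / 2 * (‖xp - x₀‖ ^ 2
      - 2 * (inner ℝ (xp - x₀) (xs - x₀) : ℝ) + ‖xs - x₀‖ ^ 2)) := by
    apply mul_nonneg (by positivity)
    linarith
  have e4 : 0 ≤ (1 / (4 * μ)) * (μ ^ 2 * ‖x - x₀‖ ^ 2 + (μ + 2 * lam) ^ 2 * ‖xp - x₀‖ ^ 2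
      + (-(2 * (μ + lam))) ^ 2 * ‖xs - x₀‖ ^ 2
      + 2 * (μ * (μ + 2 * lam)) * (inner ℝ (x - x₀) (xp - x₀) : ℝ)
      + 2 * (μ * (-(2 * (μ + lam)))) * (inner ℝ (x - x₀) (xs - x₀) : ℝ)
      + 2 * ((μ + 2 * lam) * (-(2 * (μ + lam)))) * (inner ℝ (xp - x₀) (xs - x₀) : ℝ)) := by
    apply mul_nonneg (by positivity)
    linarith
  linarith [hid, e1, e2, e3, e4]
end

section
/- Let F : ℝ^d → ℝ be μ-strongly convex (μ > 0), set μ' := μ/2, and let λ ≥ 3μ' and ρ := (μ' + λ)/μ'. Suppose v, x ∈ ℝ^d and ψ* ∈ ℝ satisfy F(z) ≥ ψ* + (μ'/2)‖z − v‖₂² for all z ∈ ℝ^d. Define y := (1/(1 + ρ^{−1/2}))·x + (ρ^{−1/2}/(1 + ρ^{−1/2}))·v, and suppose x⁺ ∈ ℝ^d satisfies f_{y,λ}(x⁺) − f*_{y,λ} ≤ (ρ^{−3/2}/4)·(F(x) − ψ*). Define g := λ(y − x⁺) and v⁺ := (1 − ρ^{−1/2})·v + ρ^{−1/2}·(y −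 (1/μ' + 1/λ)g). Then there exists ψ*⁺ ∈ ℝ such that F(z) ≥ ψ*⁺ + (μ'/2)‖z − v⁺‖₂² for all z ∈ ℝ^d, and F(x⁺) − ψ*⁺ ≤ (1 − ρ^{−1/2}/2)·(F(x) − ψ*). -/
open scoped RealInnerProductSpace

private lemma expand_smul {E : Type*} [NormedAddCommGroup E] [InnerProductSpace ℝ E]
    (A B : E) (c : ℝ) :
    ‖A + c • B‖ ^ 2 = ‖A‖ ^ 2 + 2 * c * ⟪A, B⟫ + c ^ 2 * ‖B‖ ^ 2 := by
  rw [norm_add_sq_real, real_inner_smul_right, norm_smul, Real.norm_eq_abs, mul_pow, sq_abs]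
  ring

private lemma sq2 {E : Type*} [NormedAddCommGroup E] [InnerProductSpace ℝ E] (P Q : E) :
    ‖P + Q‖ ^ 2 ≤ 2 * ‖P‖ ^ 2 + 2 * ‖Q‖ ^ 2 := by
  nlinarith [norm_add_sq_real P Q, norm_sub_sq_real P Q, sq_nonneg ‖P - Q‖]

private lemma comb_sq {E : Type*} [NormedAddCommGroup E] [InnerProductSpace ℝ E]
    (a b : E) (t : ℝ) :
    ‖(1 - t) • a + t • b‖ ^ 2 = (1 - t) * ‖a‖ ^ 2 + t * ‖b‖ ^ 2 - t * (1 - t) * ‖b - a‖ ^ 2 := by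
  have h1 : ‖(1 - t) • a + t • b‖ ^ 2
      = (1-t)^2 * ‖a‖^2 + 2 * ((1-t)*t) * ⟪a, b⟫ + t^2 * ‖b‖^2 := by
    rw [norm_add_sq_real, real_inner_smul_left, real_inner_smul_right, norm_smul, norm_smul,
      Real.norm_eq_abs, Real.norm_eq_abs, mul_pow, mul_pow, sq_abs, sq_abs]
    ring
  have h2 : ‖b - a‖ ^ 2 = ‖b‖^2 - 2 * ⟪b, a⟫ + ‖a‖^2 := norm_sub_sq_real b a
  have h3 : ⟪a, b⟫ = ⟪b, a⟫ := real_inner_comm b a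
  rw [h1, h2, h3]; ring

private lemma expand_smul2 {E : Type*} [NormedAddCommGroup E] [InnerProductSpace ℝ E]
    (a b : E) (c d : ℝ) :
    ‖c • a + d • b‖ ^ 2 = c ^ 2 * ‖a‖ ^ 2 + 2 * (c * d) * ⟪a, b⟫ + d ^ 2 * ‖b‖ ^ 2 := by
  rw [norm_add_sq_real, real_inner_smul_left, real_inner_smul_right, norm_smul, norm_smul,
    Real.norm_eq_abs, Real.norm_eq_abs, mul_pow, mul_pow, sq_abs, sq_abs]
  ring

private lemma amgm (A B C p q t : ℝ) (hp : 0 ≤ p) (hq : 0 ≤ q)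
    (hA : 0 ≤ A) (hB : 0 ≤ B) (ht : t ^ 2 ≤ p * q) (hC : C ^ 2 ≤ A * B) :
    2 * C * t ≤ A * p + B * q := by
  have h1 : (2 * C * t) ^ 2 ≤ (A * p + B * q) ^ 2 := by
    nlinarith [sq_nonneg (A * p - B * q), mul_le_mul hC ht (sq_nonneg t) (mul_nonneg hA hB),
      mul_nonneg hA hp, mul_nonneg hB hq]
  nlinarith [mul_nonneg (mul_nonneg hA hp) (mul_nonneg hB hq), mul_nonneg hA hp, mul_nonneg hB hq]

set_option maxHeartbeats 1000000 in
private lemma strong_min {E : Type*} [NormedAddCommGroup E] [InnerProductSpace ℝ E]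
    (F : E → ℝ) (μ lam fstar : ℝ) (hμ : 0 < μ) (hlam : 0 < lam)
    (y xs : E)
    (hsc : ConvexOn ℝ Set.univ (fun z => F z - μ / 2 * ‖z‖ ^ 2))
    (hmin : ∀ z, fstar ≤ F z + lam / 2 * ‖z - y‖ ^ 2)
    (hxs : F xs + lam / 2 * ‖xs - y‖ ^ 2 = fstar) :
    ∀ z, fstar + (lam + μ) / 2 * ‖z - xs‖ ^ 2 ≤ F z + lam / 2 * ‖z - y‖ ^ 2 := by
  intro z
  by_contra hcon
  push_neg at hcon
  have hD0 : (0:ℝ) ≤ ‖z - xs‖ ^ 2 := sq_nonneg _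
  have hκ : (0:ℝ) < lam + μ := by linarith
  have hfz := hmin z
  have hDpos : 0 < ‖z - xs‖ ^ 2 := by
    rcases lt_or_eq_of_le hD0 with h | h
    · exact h
    · exfalso; nlinarith [hfz]
  have hcpos : (0:ℝ) < fstar + (lam + μ) / 2 * ‖z - xs‖ ^ 2 - (F z + lam / 2 * ‖z - y‖ ^ 2) := by
    linarith
  obtain ⟨t, ht0, ht1, ht2⟩ : ∃ t : ℝ, 0 < t ∧ t ≤ 1 ∧
      t * ((lam + μ) * ‖z - xs‖ ^ 2)
        ≤ fstar + (lam + μ) / 2 * ‖z - xs‖ ^ 2 - (F z + lam / 2 * ‖z - y‖ ^ 2) := by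
    set c : ℝ := fstar + (lam + μ) / 2 * ‖z - xs‖ ^ 2 - (F z + lam / 2 * ‖z - y‖ ^ 2) with hcdef
    refine ⟨min 1 (c / ((lam + μ) * ‖z - xs‖ ^ 2)),
      lt_min one_pos (div_pos hcpos (mul_pos hκ hDpos)), min_le_left _ _, ?_⟩
    have h := min_le_right 1 (c / ((lam + μ) * ‖z - xs‖ ^ 2))
    calc min 1 (c / ((lam + μ) * ‖z - xs‖ ^ 2)) * ((lam + μ) * ‖z - xs‖ ^ 2)
        ≤ c / ((lam + μ) * ‖z - xs‖ ^ 2) * ((lam + μ) * ‖z - xs‖ ^ 2) := by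
          apply mul_le_mul_of_nonneg_right h (by positivity)
      _ = c := div_mul_cancel₀ c (mul_pos hκ hDpos).ne'
  -- convexity
  have hconv := hsc.2 (Set.mem_univ xs) (Set.mem_univ z) (by linarith : (0:ℝ) ≤ 1 - t) ht0.le
    (by ring : (1 - t) + t = 1)
  simp only [smul_eq_mul] at hconv
  -- quadratic identities
  have q1 : ‖(1 - t) • xs + t • z‖ ^ 2
      = (1 - t) * ‖xs‖ ^ 2 + t * ‖z‖ ^ 2 - t * (1 - t) * ‖z - xs‖ ^ 2 := comb_sq xs z t
  have q2 : ‖((1 - t) • xs + t • z) - y‖ ^ 2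
      = (1 - t) * ‖xs - y‖ ^ 2 + t * ‖z - y‖ ^ 2 - t * (1 - t) * ‖z - xs‖ ^ 2 := by
    have hv : ((1 - t) • xs + t • z) - y = (1 - t) • (xs - y) + t • (z - y) := by
      rw [smul_sub, smul_sub]
      rw [show (1 - t) • xs - (1 - t) • y + (t • z - t • y)
          = (1 - t) • xs + t • z - ((1 - t) • y + t • y) by abel]
      rw [← add_smul]
      rw [show (1 - t) + t = 1 by ring, one_smul]
    rw [hv, comb_sq (xs - y) (z - y) t, show (z - y) - (xs - y) = z - xs by abel]
  have hm := hmin ((1 - t) • xs + t • z)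
  have hkey : fstar ≤ (1 - t) * fstar + t * (F z + lam / 2 * ‖z - y‖ ^ 2)
      - (lam + μ) / 2 * (t * (1 - t)) * ‖z - xs‖ ^ 2 := by
    nlinarith [hconv, hm, q1, q2, hxs]
  have h := mul_le_mul_of_nonneg_left ht2 (le_of_lt ht0)
  linarith [hkey, h, mul_pos ht0 hcpos]

set_option maxHeartbeats 1000000 in
private lemma key (μ' lam θ p q r t u gg n2 ε Δ K W ψ fstar fx fxp ψp : ℝ)
    (hμ' : 0 < μ') (hlam : 3 * μ' ≤ lam) (hθ0 : 0 < θ) (hθh : θ ≤ 1 / 2)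
    (hθ2 : θ ^ 2 * (μ' + lam) = μ')
    (hψp : ψp = (1 - θ) * ψ + θ * (fstar - K) + μ' / 2 * θ * (1 - θ) * W)
    (hfxp : fxp = fstar + ε - lam / 2 * n2)
    (hn2 : lam ^ 2 * n2 = gg)
    (hK : 2 * μ' ^ 2 * lam ^ 2 * K
        = μ' * lam * (μ' + lam) * gg + (2 * μ' * (μ' + lam) ^ 2 - μ' * lam * (μ' + lam)) * r)
    (hW : μ' ^ 2 * lam ^ 2 * θ ^ 2 * W
        = μ' ^ 2 * lam ^ 2 * p - 2 * θ * μ' * lam * (μ' + lam) * (u + t)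
          + θ ^ 2 * (μ' + lam) ^ 2 * gg)
    (hF2 : 2 * lam ^ 2 * fstar + 2 * lam ^ 2 * μ' * p + 2 * lam * (lam + 2 * μ') * u
        + (lam + 2 * μ') * q ≤ 2 * lam ^ 2 * fx)
    (hΔ : Δ = fx - ψ) (hΔ0 : 0 ≤ Δ) (hε0 : 0 ≤ ε) (hεΔ : 4 * ε ≤ θ ^ 3 * Δ)
    (hre : (lam + 2 * μ') * r ≤ 2 * lam ^ 2 * ε)
    (ht : t ^ 2 ≤ p * r) (hu : u ^ 2 ≤ p * q)
    (hp : 0 ≤ p) (hq : 0 ≤ q) (hr : 0 ≤ r) (hgg : 0 ≤ gg) :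
    fxp - ψp ≤ (1 - θ / 2) * (fx - ψ) := by
  have hlam0 : 0 < lam := by linarith
  have hθ1 : θ < 1 := by linarith
  have h1θ : (0:ℝ) ≤ 1 - θ := by linarith
  have h1θ' : (0:ℝ) < 1 + θ := by linarith
  have e2 : (0:ℝ) ≤ 2 - 2 * θ ^ 2 - θ ^ 3 := by nlinarith
  rw [← hΔ]
  rw [show (1 - θ / 2) * Δ = ((1 - θ) * Δ) + (θ / 2) * Δ by ring]
  apply (mul_le_mul_iff_right₀ (show (0:ℝ) < 2 * lam ^ 2 * θ * μ' ^ 2 * (1 + θ) by positivity)).mp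
  have coefF2 : (0:ℝ) ≤ (1 + θ) * θ * μ' ^ 2 * (1 - θ) := by positivity
  have hF2s := mul_le_mul_of_nonneg_left hF2 coefF2
  have hK3 : (1 + θ) * (θ ^ 2 * (2 * μ' ^ 2 * lam ^ 2 * K))
      = (1 + θ) * (μ' ^ 2 * lam * gg + μ' ^ 2 * (lam + 2 * μ') * r) := by
    linear_combination ((1 + θ) * θ ^ 2) * hK
      + ((1 + θ) * (μ' * lam * gg + (2 * μ' * (μ' + lam) - μ' * lam) * r)) * hθ2
  have hW3 : ((1 + θ) * (1 - θ) * μ') * (μ' ^ 2 * lam ^ 2 * θ ^ 2 * W)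
      = ((1 + θ) * (1 - θ) * μ') * (μ' ^ 2 * lam ^ 2 * p
          - 2 * θ * μ' * lam * (μ' + lam) * (u + t) + μ' * (μ' + lam) * gg) := by
    linear_combination ((1 + θ) * (1 - θ) * μ') * hW
      + ((1 + θ) * (1 - θ) * μ' * (μ' + lam) * gg) * hθ2
  have hn2s : (1 + θ) * θ * μ' ^ 2 * lam * (lam ^ 2 * n2)
      = (1 + θ) * θ * μ' ^ 2 * lam * gg := by
    linear_combination ((1 + θ) * θ * μ' ^ 2 * lam) * hn2
  have hT : 2 * ((1 + θ) * θ * μ' ^ 2 * lam * (μ' + lam)) * t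
      ≤ ((1 + θ) ^ 2 * μ' ^ 3 * lam ^ 2) * p + (θ ^ 2 * μ' * (μ' + lam) ^ 2) * r := by
    exact amgm _ _ _ _ _ _ hp hr (by positivity) (by positivity) ht (le_of_eq (by ring))
  have hTs := mul_le_mul_of_nonneg_left hT h1θ
  have hU : 2 * ((1 + θ) * (1 - θ) * θ * μ' ^ 3 * lam) * (-u)
      ≤ ((1 + θ) * (1 - θ) * θ * μ' ^ 3 * lam ^ 2) * p
        + ((1 + θ) * (1 - θ) * θ * μ' ^ 3) * q := by
    exact amgm _ _ _ _ _ _ hp hq (by positivity) (by positivity) (by nlinarith [hu])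
      (le_of_eq (by ring))
  have hconvT : (1 - θ) * ((θ ^ 2 * μ' * (μ' + lam) ^ 2) * r)
      = (1 - θ) * (μ' ^ 2 * (μ' + lam) * r) := by
    linear_combination ((1 - θ) * μ' * (μ' + lam) * r) * hθ2
  have hconvT2 : (1 - θ) * (μ' ^ 2 * (μ' + lam) * r) ≤ μ' ^ 2 * ((lam + 2 * μ') * r) := by
    nlinarith [mul_nonneg (mul_nonneg (mul_nonneg hθ0.le (sq_nonneg μ')) (by linarith : (0:ℝ) ≤ μ' + lam)) hr,
      mul_nonneg (mul_nonneg (sq_nonneg μ') hμ'.le) hr]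
  have hre1 : μ' ^ 2 * ((lam + 2 * μ') * r) ≤ μ' ^ 2 * (2 * lam ^ 2 * ε) :=
    mul_le_mul_of_nonneg_left hre (sq_nonneg μ')
  have hre2 : (1 + θ) * (μ' ^ 2 * ((lam + 2 * μ') * r)) ≤ (1 + θ) * (μ' ^ 2 * (2 * lam ^ 2 * ε)) :=
    mul_le_mul_of_nonneg_left hre1 h1θ'.le
  have hεΔ' : 2 * lam ^ 2 * μ' ^ 2 * (2 + 2 * θ + θ ^ 2) * ε
      ≤ (1 + θ) * lam ^ 2 * θ ^ 2 * μ' ^ 2 * Δ := by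
    have h := mul_le_mul_of_nonneg_left hεΔ
      (show (0:ℝ) ≤ lam ^ 2 * μ' ^ 2 * (2 + 2 * θ + θ ^ 2) / 2 by positivity)
    have e3 : (0:ℝ) ≤ lam ^ 2 * μ' ^ 2 * θ ^ 2 * Δ * (2 - 2 * θ ^ 2 - θ ^ 3) := by positivity
    linarith only [h, e3]
  have hΔs : 2 * lam ^ 2 * θ * μ' ^ 2 * (1 + θ) * (1 - θ) * Δ
      = 2 * lam ^ 2 * θ * μ' ^ 2 * (1 + θ) * (1 - θ) * (fx - ψ) := by
    linear_combination (2 * lam ^ 2 * θ * μ' ^ 2 * (1 + θ) * (1 - θ)) * hΔ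
  have hD1 : (0:ℝ) ≤ (1 + θ) * (1 - θ) * θ * μ' ^ 2 * (lam + μ') * q := by positivity
  have hD2 : (0:ℝ) ≤ (1 + θ) * (1 - θ) * μ' ^ 3 * gg := by positivity
  rw [hψp, hfxp]
  linarith only [hΔs, hF2s, hK3, hW3, hn2s, hTs, hU, hconvT, hconvT2, hre1, hre2, hεΔ', hD1, hD2]

set_option maxHeartbeats 4000000 in
/-- Lemma: one step of Accelerated APPA maintains a quadratic
lower bound and contracts the gap. -/
theorem stmt4 {d : ℕ} (F : EuclideanSpace ℝ (Fin d) → ℝ) (μ : ℝ) (hμ : 0 < μ)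
    (hsc : ConvexOn ℝ Set.univ (fun z => F z - μ / 2 * ‖z‖ ^ 2))
    (μ' : ℝ) (hμ' : μ' = μ / 2)
    (lam : ℝ) (hlam : 3 * μ' ≤ lam)
    (ρ : ℝ) (hρ : ρ = (μ' + lam) / μ')
    (v x : EuclideanSpace ℝ (Fin d)) (ψ : ℝ)
    (hlower : ∀ z, F z ≥ ψ + μ' / 2 * ‖z - v‖ ^ 2)
    (y : EuclideanSpace ℝ (Fin d))
    (hy : y = (1 / (1 + ρ ^ (-(1 / 2) : ℝ))) • x
        + (ρ ^ (-(1 / 2) : ℝ) / (1 + ρ ^ (-(1 / 2) : ℝ))) • v)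
    (fstar : ℝ)
    (hfstar : IsLeast (Set.range (fun z => F z + lam / 2 * ‖z - y‖ ^ 2)) fstar)
    (xp : EuclideanSpace ℝ (Fin d))
    (hxp : (F xp + lam / 2 * ‖xp - y‖ ^ 2) - fstar ≤ ρ ^ (-(3 / 2) : ℝ) / 4 * (F x - ψ))
    (g : EuclideanSpace ℝ (Fin d)) (hg : g = lam • (y - xp))
    (vp : EuclideanSpace ℝ (Fin d))
    (hvp : vp = (1 - ρ ^ (-(1 / 2) : ℝ)) • v
        + ρ ^ (-(1 / 2) : ℝ) • (y - (1 / μ' + 1 / lam) • g)) :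
    ∃ ψp : ℝ,
      (∀ z, F z ≥ ψp + μ' / 2 * ‖z - vp‖ ^ 2) ∧
      F xp - ψp ≤ (1 - ρ ^ (-(1 / 2) : ℝ) / 2) * (F x - ψ) := by
  have hμ'pos : 0 < μ' := by rw [hμ']; linarith
  have hμ'ne : μ' ≠ 0 := ne_of_gt hμ'pos
  have hlampos : 0 < lam := by linarith
  have hlamne : lam ≠ 0 := ne_of_gt hlampos
  have hμeq : μ = 2 * μ' := by rw [hμ']; ring
  have hρpos : 0 < ρ := by rw [hρ]; positivity
  have hmlpos : (0:ℝ) < μ' + lam := by linarith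
  set θ : ℝ := ρ ^ (-(1 / 2) : ℝ) with hθdef
  have hθpos : 0 < θ := Real.rpow_pos_of_pos hρpos _
  have hθθ : θ * θ = ρ⁻¹ := by
    rw [hθdef, ← Real.rpow_add hρpos]
    norm_num
    exact Real.rpow_neg_one ρ
  have hθ2 : θ ^ 2 * (μ' + lam) = μ' := by
    rw [sq, hθθ, hρ, inv_div]
    field_simp
  have hθh : θ ≤ 1 / 2 := by
    have hθsq : θ ^ 2 ≤ 1 / 4 := by
      nlinarith only [hθ2, hμ'pos, hlam, sq_nonneg θ]
    nlinarith only [hθsq, hθpos]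
  have h1θ : (0:ℝ) ≤ 1 - θ := by linarith only [hθh]
  have h1pθ : (0:ℝ) < 1 + θ := by linarith
  have h1pθne : (1:ℝ) + θ ≠ 0 := ne_of_gt h1pθ
  have hθ32 : ρ ^ (-(3 / 2) : ℝ) = θ ^ 3 := by
    have h1 : ρ ^ (-(3 / 2) : ℝ) = (ρ ^ (-(1 / 2) : ℝ)) ^ (3 : ℝ) := by
      rw [← Real.rpow_mul hρpos.le]; norm_num
    rw [hθdef, h1, show ((3:ℝ)) = ((3:ℕ):ℝ) by norm_num, Real.rpow_natCast]
  obtain ⟨xs, hxs0⟩ := hfstar.1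
  have hxs : F xs + lam / 2 * ‖xs - y‖ ^ 2 = fstar := hxs0
  have hmin : ∀ z, fstar ≤ F z + lam / 2 * ‖z - y‖ ^ 2 := fun z => hfstar.2 ⟨z, rfl⟩
  have hsc' : ConvexOn ℝ Set.univ (fun z => F z - (2 * μ') / 2 * ‖z‖ ^ 2) := by
    rw [← hμeq]; exact hsc
  have hstrong := strong_min F (2 * μ') lam fstar (by linarith) hlampos y xs hsc' hmin hxs
  -- definitions
  set gs : EuclideanSpace ℝ (Fin d) := lam • (y - xs) with hgs
  set w2 : EuclideanSpace ℝ (Fin d) := y - (1 / (2 * μ') + 1 / lam) • gs with hw2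
  set w : EuclideanSpace ℝ (Fin d) := y - (1 / μ' + 1 / lam) • g with hw
  set Kc : ℝ := (1 / (2 * μ') + 1 / lam) / 2 * ‖gs‖ ^ 2 + μ' * ‖w - w2‖ ^ 2 with hKc
  set ψp : ℝ := (1 - θ) * ψ + θ * (fstar - Kc) + μ' / 2 * θ * (1 - θ) * ‖v - w‖ ^ 2 with hψp
  -- basic vector relations
  have hy1 : (1 + θ) • y = x + θ • v := by
    rw [hy, smul_add, smul_smul, smul_smul,
      show (1 + θ) * (1 / (1 + θ)) = 1 by field_simp,
      show (1 + θ) * (θ / (1 + θ)) = θ by field_simp, one_smul]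
  have hvy : θ • (v - y) = y - x := by
    calc θ • (v - y) = (x + θ • v) - x - θ • y := by rw [smul_sub]; abel
    _ = ((1 + θ) • y) - x - θ • y := by rw [hy1]
    _ = y - x := by rw [add_smul, one_smul]; abel
  refine ⟨ψp, ?_, ?_⟩
  · -- lower bound conjunct
    intro z
    rw [ge_iff_le]
    have hs := hstrong z
    have hzxs : z - xs = (z - y) + (1:ℝ) • (y - xs) := by rw [one_smul]; abel
    have hzw2 : z - w2 = (z - y) + ((1 / (2 * μ') + 1 / lam) * lam) • (y - xs) := by
      rw [hw2, hgs, smul_smul]; abel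
    have hgsn : ‖gs‖ ^ 2 = lam ^ 2 * ‖y - xs‖ ^ 2 := by
      rw [hgs, norm_smul, Real.norm_eq_abs, mul_pow, sq_abs]
    have I1 : (lam + 2 * μ') / 2 * ‖z - xs‖ ^ 2 - lam / 2 * ‖z - y‖ ^ 2
        = μ' * ‖z - w2‖ ^ 2 - (1 / (2 * μ') + 1 / lam) / 2 * ‖gs‖ ^ 2 := by
      rw [hzxs, hzw2, expand_smul, expand_smul, hgsn]
      field_simp
      ring
    have C3 : ‖z - w‖ ^ 2 ≤ 2 * ‖z - w2‖ ^ 2 + 2 * ‖w - w2‖ ^ 2 := by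
      have hd : z - w = (z - w2) + (w2 - w) := by abel
      rw [hd]
      have h := sq2 (z - w2) (w2 - w)
      rwa [norm_sub_rev w2 w] at h
    have C3s := mul_le_mul_of_nonneg_left C3 (by positivity : (0:ℝ) ≤ μ' / 2)
    have h2 : fstar - Kc + μ' / 2 * ‖z - w‖ ^ 2 ≤ F z := by
      rw [hKc]; linarith only [hs, I1, C3s]
    have hzvp : z - vp = (1 - θ) • (z - v) + θ • (z - w) := by
      rw [hvp, hw]; module
    have I4 : ‖z - vp‖ ^ 2
        = (1 - θ) * ‖z - v‖ ^ 2 + θ * ‖z - w‖ ^ 2 - θ * (1 - θ) * ‖v - w‖ ^ 2 := by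
      rw [hzvp, comb_sq (z - v) (z - w) θ, show (z - w) - (z - v) = v - w by abel]
    have hlz : ψ + μ' / 2 * ‖z - v‖ ^ 2 ≤ F z := hlower z
    have A1 := mul_le_mul_of_nonneg_left hlz h1θ
    have A2 := mul_le_mul_of_nonneg_left h2 hθpos.le
    have I4s : μ' / 2 * ‖z - vp‖ ^ 2
        = μ' / 2 * ((1 - θ) * ‖z - v‖ ^ 2 + θ * ‖z - w‖ ^ 2 - θ * (1 - θ) * ‖v - w‖ ^ 2) := by
      rw [I4]
    rw [hψp]
    linarith only [A1, A2, I4s]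
  · -- contraction conjunct
    have hgge : g = gs + (g - gs) := by abel
    have hggexp : ‖g‖ ^ 2 = ‖gs‖ ^ 2 + 2 * ⟪gs, g - gs⟫ + ‖g - gs‖ ^ 2 := by
      conv_lhs => rw [hgge]
      exact norm_add_sq_real gs (g - gs)
    have hn2 : lam ^ 2 * ‖xp - y‖ ^ 2 = ‖g‖ ^ 2 := by
      rw [hg, norm_smul, Real.norm_eq_abs, mul_pow, sq_abs, norm_sub_rev y xp]
    have hK : 2 * μ' ^ 2 * lam ^ 2 * Kc
        = μ' * lam * (μ' + lam) * ‖g‖ ^ 2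
          + (2 * μ' * (μ' + lam) ^ 2 - μ' * lam * (μ' + lam)) * ‖g - gs‖ ^ 2 := by
      have hwv : w - w2 = ((1 / (2 * μ') + 1 / lam) - (1 / μ' + 1 / lam)) • gs
          + (-(1 / μ' + 1 / lam)) • (g - gs) := by
        rw [hw, hw2]; module
      have h1 : ‖w - w2‖ ^ 2
          = ((1 / (2 * μ') + 1 / lam) - (1 / μ' + 1 / lam)) ^ 2 * ‖gs‖ ^ 2
            + 2 * (((1 / (2 * μ') + 1 / lam) - (1 / μ' + 1 / lam)) * (-(1 / μ' + 1 / lam)))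
              * ⟪gs, g - gs⟫
            + (-(1 / μ' + 1 / lam)) ^ 2 * ‖g - gs‖ ^ 2 := by
        rw [hwv, expand_smul2]
      rw [hKc, h1, hggexp]
      field_simp
      ring
    have hW : μ' ^ 2 * lam ^ 2 * θ ^ 2 * ‖v - w‖ ^ 2
        = μ' ^ 2 * lam ^ 2 * ‖x - y‖ ^ 2
          - 2 * θ * μ' * lam * (μ' + lam) * (⟪x - y, gs⟫ + ⟪x - y, g - gs⟫)
          + θ ^ 2 * (μ' + lam) ^ 2 * ‖g‖ ^ 2 := by
      have hvw : θ • (v - w) = (y - x) + (θ * (1 / μ' + 1 / lam)) • g := by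
        have hvw0 : v - w = (v - y) + (1 / μ' + 1 / lam) • g := by rw [hw]; abel
        rw [hvw0, smul_add, hvy, smul_smul]
      have h3 : θ ^ 2 * ‖v - w‖ ^ 2 = ‖(y - x) + (θ * (1 / μ' + 1 / lam)) • g‖ ^ 2 := by
        rw [← hvw, norm_smul, Real.norm_eq_abs, mul_pow, sq_abs]
      have h4 := expand_smul (y - x) g (θ * (1 / μ' + 1 / lam))
      have h5 : ‖y - x‖ ^ 2 = ‖x - y‖ ^ 2 := by rw [norm_sub_rev]
      have h6 : ⟪y - x, g⟫ = -(⟪x - y, gs⟫ + ⟪x - y, g - gs⟫) := by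
        have e1 : ⟪x - y, g⟫ = ⟪x - y, gs⟫ + ⟪x - y, g - gs⟫ := by
          conv_lhs => rw [hgge]
          exact inner_add_right _ _ _
        have e2 : ⟪y - x, g⟫ = -⟪x - y, g⟫ := by
          rw [show y - x = -(x - y) by abel, inner_neg_left]
        rw [e2, e1]
      have h7 : θ ^ 2 * ‖v - w‖ ^ 2
          = ‖x - y‖ ^ 2 - 2 * (θ * (1 / μ' + 1 / lam)) * (⟪x - y, gs⟫ + ⟪x - y, g - gs⟫)
            + (θ * (1 / μ' + 1 / lam)) ^ 2 * ‖g‖ ^ 2 := by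
        rw [h3, h4, h5, h6]; ring
      rw [show μ' ^ 2 * lam ^ 2 * θ ^ 2 * ‖v - w‖ ^ 2
          = μ' ^ 2 * lam ^ 2 * (θ ^ 2 * ‖v - w‖ ^ 2) by ring, h7]
      field_simp
      ring
    have hF2 : 2 * lam ^ 2 * fstar + 2 * lam ^ 2 * μ' * ‖x - y‖ ^ 2
        + 2 * lam * (lam + 2 * μ') * ⟪x - y, gs⟫ + (lam + 2 * μ') * ‖gs‖ ^ 2
        ≤ 2 * lam ^ 2 * F x := by
      have hv : lam • (x - xs) = lam • (x - y) + gs := by rw [hgs]; module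
      have hxxs : lam ^ 2 * ‖x - xs‖ ^ 2
          = lam ^ 2 * ‖x - y‖ ^ 2 + 2 * lam * ⟪x - y, gs⟫ + ‖gs‖ ^ 2 := by
        have h1 : ‖lam • (x - xs)‖ ^ 2 = lam ^ 2 * ‖x - xs‖ ^ 2 := by
          rw [norm_smul, Real.norm_eq_abs, mul_pow, sq_abs]
        have h2 : ‖lam • (x - y) + gs‖ ^ 2
            = lam ^ 2 * ‖x - y‖ ^ 2 + 2 * lam * ⟪x - y, gs⟫ + ‖gs‖ ^ 2 := by
          rw [norm_add_sq_real, real_inner_smul_left, norm_smul, Real.norm_eq_abs, mul_pow,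
            sq_abs]
          ring
        rw [← h1, hv, h2]
      have hsx := hstrong x
      have hsx2 := mul_le_mul_of_nonneg_left hsx (by positivity : (0:ℝ) ≤ 2 * lam ^ 2)
      have hxxs2 : (lam + 2 * μ') * (lam ^ 2 * ‖x - xs‖ ^ 2)
          = (lam + 2 * μ') * (lam ^ 2 * ‖x - y‖ ^ 2 + 2 * lam * ⟪x - y, gs⟫ + ‖gs‖ ^ 2) := by
        linear_combination (lam + 2 * μ') * hxxs
      linarith only [hsx2, hxxs2]
    have hΔ0 : (0:ℝ) ≤ F x - ψ := by
      have h := hlower x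
      have h2 : (0:ℝ) ≤ μ' / 2 * ‖x - v‖ ^ 2 := by positivity
      linarith only [h, h2]
    have hε0 : (0:ℝ) ≤ F xp + lam / 2 * ‖xp - y‖ ^ 2 - fstar := by linarith only [hmin xp]
    have hεΔ : 4 * (F xp + lam / 2 * ‖xp - y‖ ^ 2 - fstar) ≤ θ ^ 3 * (F x - ψ) := by
      rw [hθ32] at hxp
      linarith only [hxp]
    have hre : (lam + 2 * μ') * ‖g - gs‖ ^ 2
        ≤ 2 * lam ^ 2 * (F xp + lam / 2 * ‖xp - y‖ ^ 2 - fstar) := by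
      have he : g - gs = lam • (xs - xp) := by rw [hg, hgs]; module
      have hre0 : ‖g - gs‖ ^ 2 = lam ^ 2 * ‖xp - xs‖ ^ 2 := by
        rw [he, norm_smul, Real.norm_eq_abs, mul_pow, sq_abs, norm_sub_rev xs xp]
      have hsxp := hstrong xp
      have h1 : (lam + 2 * μ') / 2 * ‖xp - xs‖ ^ 2
          ≤ F xp + lam / 2 * ‖xp - y‖ ^ 2 - fstar := by linarith only [hsxp, hmin xp]
      have h2 := mul_le_mul_of_nonneg_left h1 (by positivity : (0:ℝ) ≤ 2 * lam ^ 2)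
      have h3 : (lam + 2 * μ') * ‖g - gs‖ ^ 2
          = 2 * lam ^ 2 * ((lam + 2 * μ') / 2 * ‖xp - xs‖ ^ 2) := by rw [hre0]; ring
      linarith only [h2, h3]
    have ht : ⟪x - y, g - gs⟫ ^ 2 ≤ ‖x - y‖ ^ 2 * ‖g - gs‖ ^ 2 := by
      have h := real_inner_mul_inner_self_le (x - y) (g - gs)
      rw [real_inner_self_eq_norm_sq, real_inner_self_eq_norm_sq] at h
      rw [sq]; exact h
    have hu : ⟪x - y, gs⟫ ^ 2 ≤ ‖x - y‖ ^ 2 * ‖gs‖ ^ 2 := by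
      have h := real_inner_mul_inner_self_le (x - y) gs
      rw [real_inner_self_eq_norm_sq, real_inner_self_eq_norm_sq] at h
      rw [sq]; exact h
    exact key μ' lam θ (‖x - y‖ ^ 2) (‖gs‖ ^ 2) (‖g - gs‖ ^ 2) (⟪x - y, g - gs⟫)
      (⟪x - y, gs⟫) (‖g‖ ^ 2) (‖xp - y‖ ^ 2) (F xp + lam / 2 * ‖xp - y‖ ^ 2 - fstar)
      (F x - ψ) Kc (‖v - w‖ ^ 2) ψ fstar (F x) (F xp) ψp
      hμ'pos hlam hθpos hθh hθ2 hψp (by ring) hn2 hK hW hF2 rfl hΔ0 hε0 hεΔ hre ht hu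
      (sq_nonneg _) (sq_nonneg _) (sq_nonneg _) (sq_nonneg _)
end

section
/- Let F : ℝ^d → ℝ be μ-strongly convex (μ > 0) attaining minimum value F*, set μ' := μ/2, let λ > 0, and let x⁽⁰⁾ ∈ ℝ^d. Define ψ*₀ := F(x⁽⁰⁾) − ((λ + 2μ')/μ')·(F(x⁽⁰⁾) − F*). Then F(x) ≥ ψ*₀ + (μ'/2)‖x − x⁽⁰⁾‖₂² for all x ∈ ℝ^d; in particular F(x⁽⁰⁾) − ψ*₀ = ((λ + 2μ')/μ')·(F(x⁽⁰⁾) − F*). -/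
/-- Lemma: valid initial lower bound for Accelerated APPA. -/
theorem stmt6 {d : ℕ} (F : EuclideanSpace ℝ (Fin d) → ℝ) (μ : ℝ) (hμ : 0 < μ)
    (hsc : ConvexOn ℝ Set.univ (fun z => F z - μ / 2 * ‖z‖ ^ 2))
    (Fstar : ℝ) (hF : IsLeast (Set.range F) Fstar)
    (μ' : ℝ) (hμ' : μ' = μ / 2)
    (lam : ℝ) (hlam : 0 < lam)
    (x₀ : EuclideanSpace ℝ (Fin d))
    (ψ₀ : ℝ) (hψ₀ : ψ₀ = F x₀ - (lam + 2 * μ') / μ' * (F x₀ - Fstar)) :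
    (∀ x, F x ≥ ψ₀ + μ' / 2 * ‖x - x₀‖ ^ 2) ∧
    F x₀ - ψ₀ = (lam + 2 * μ') / μ' * (F x₀ - Fstar) := by
  have hμ'pos : 0 < μ' := by rw [hμ']; linarith
  refine ⟨?_, by rw [hψ₀]; ring⟩
  obtain ⟨⟨xs, hxs⟩, hlb⟩ := hF
  have hlb' : ∀ x, Fstar ≤ F x := fun x => hlb ⟨x, rfl⟩
  have hsco : StrongConvexOn Set.univ μ F := strongConvexOn_iff_convex.mpr hsc
  -- key: F x ≥ Fstar + μ/2 * ‖x - xs‖^2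
  have key : ∀ x, Fstar + μ / 2 * ‖x - xs‖ ^ 2 ≤ F x := by
    intro x
    have step : ∀ t : ℝ, 0 < t → t < 1 → (1 - t) * (μ / 2 * ‖x - xs‖ ^ 2) ≤ F x - Fstar := by
      intro t ht0 ht1
      have h := hsco.2 (Set.mem_univ x) (Set.mem_univ xs) (le_of_lt ht0)
        (by linarith : (0:ℝ) ≤ 1 - t) (by ring)
      have h2 : Fstar ≤ F (t • x + (1 - t) • xs) := hlb' _
      simp only [smul_eq_mul] at h
      rw [hxs] at h
      nlinarith
    rw [← sub_nonneg,
      show F x - (Fstar + μ / 2 * ‖x - xs‖ ^ 2)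
        = (F x - Fstar) - μ / 2 * ‖x - xs‖ ^ 2 by ring, sub_nonneg]
    by_contra hc
    push_neg at hc
    set c := μ / 2 * ‖x - xs‖ ^ 2 with hc_def
    set δ := F x - Fstar with hδ
    have hδ0 : 0 ≤ δ := sub_nonneg.mpr (hlb' x)
    have hcpos : 0 < c := lt_of_le_of_lt hδ0 hc
    set t := (c - δ) / (2 * c) with ht
    have ht0 : 0 < t := div_pos (by linarith) (by linarith)
    have ht1 : t < 1 := by
      rw [ht, div_lt_one (by linarith)]; linarith
    have hstep := step t ht0 ht1
    have hteq : (1 - t) * c = (c + δ) / 2 := by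
      rw [ht]; field_simp; ring
    rw [hteq] at hstep
    linarith
  intro x
  have h1 := key x
  have h2 := key x₀
  have h3 : ‖x - x₀‖ ^ 2 ≤ 2 * ‖x - xs‖ ^ 2 + 2 * ‖x₀ - xs‖ ^ 2 := by
    have hx : x - x₀ = (x - xs) + (xs - x₀) := by abel
    have htri := norm_add_le (x - xs) (xs - x₀)
    have hns : ‖xs - x₀‖ = ‖x₀ - xs‖ := norm_sub_rev _ _
    rw [hx]
    nlinarith [sq_nonneg (‖x - xs‖ - ‖xs - x₀‖), norm_nonneg ((x - xs) + (xs - x₀)),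
      norm_nonneg (x - xs), norm_nonneg (xs - x₀)]
  have hk : (2 : ℝ) ≤ (lam + 2 * μ') / μ' := by
    rw [le_div_iff₀ hμ'pos]; linarith
  have hnn : (0:ℝ) ≤ F x₀ - Fstar := sub_nonneg.mpr (hlb' x₀)
  have hprod : 2 * (F x₀ - Fstar) ≤ (lam + 2 * μ') / μ' * (F x₀ - Fstar) :=
    mul_le_mul_of_nonneg_right hk hnn
  have hmul : μ' / 2 * ‖x - x₀‖ ^ 2 ≤ μ' / 2 * (2 * ‖x - xs‖ ^ 2 + 2 * ‖x₀ - xs‖ ^ 2) :=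
    mul_le_mul_of_nonneg_left h3 (by positivity)
  rw [hψ₀, hμ'] at *
  linarith
end

section
/- Let F : ℝ^d → ℝ be μ-strongly convex (μ > 0) attaining minimum value F*, set μ' := μ/2, let λ ≥ 3μ', ρ := (μ' + λ)/μ', and c > 1. Under the Accelerated APPA recursion (v⁽⁰⁾ = x⁽⁰⁾; for each t: y⁽ᵗ⁾ = (1/(1 + ρ^{−1/2}))·x⁽ᵗ⁾ + (ρ^{−1/2}/(1 + ρ^{−1/2}))·v⁽ᵗ⁾; x⁽ᵗ⁺¹⁾ satisfies f_{y⁽ᵗ⁾,λ}(x⁽ᵗ⁺¹⁾) − f*_{y⁽ᵗ⁾,λ} ≤ (ρ^{−3/2}/8)·(f_{y⁽ᵗ⁾,λ}(x⁽ᵗ⁾) − f*_{y⁽ᵗ⁾,λ}); g⁽ᵗ⁾ = λ(y⁽ᵗ⁾ − x⁽ᵗ⁺¹⁾); v⁽ᵗ⁺¹⁾ = (1 − ρ^{−1/2})·v⁽ᵗ⁾ + ρ^{−1/2}·(y⁽ᵗ⁾ − (1/μ' + 1/λ)g⁽ᵗ⁾)), if T is a natural number with T ≥ 2·ρ^{1/2}·log(c·(λ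 + 2μ')/μ'), then F(x⁽ᵀ⁾) − F* ≤ (1/c)·(F(x⁽⁰⁾) − F*). -/
set_option maxHeartbeats 1000000
open scoped RealInnerProductSpace

section Aux
variable {E : Type*} [NormedAddCommGroup E] [InnerProductSpace ℝ E]

lemma strong_min_s8 (f : E → ℝ) (m : ℝ) (hm : 0 ≤ m)
    (hconv : ConvexOn ℝ Set.univ (fun z => f z - m / 2 * ‖z‖ ^ 2))
    (p : E) (hp : ∀ z, f p ≤ f z) (z : E) :
    f p + m / 2 * ‖z - p‖ ^ 2 ≤ f z := by
  have key : ∀ t : ℝ, 0 < t → t < 1 → m/2 * ((1-t) * ‖z - p‖^2) ≤ f z - f p := by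
    intro t ht ht1
    have hc := hconv.2 (Set.mem_univ z) (Set.mem_univ p)
      (le_of_lt ht) (by linarith : (0:ℝ) ≤ 1 - t) (by ring)
    simp only [smul_eq_mul] at hc
    have hid : t*‖z‖^2 + (1-t)*‖p‖^2 - ‖t•z+(1-t)•p‖^2 = t*(1-t)*‖z-p‖^2 := by
      simp only [norm_add_sq_real, norm_sub_sq_real, norm_smul, Real.norm_eq_abs, mul_pow,
        sq_abs, real_inner_smul_left, real_inner_smul_right]
      ring
    have hmin := hp (t•z + (1-t)•p)
    have hid2 : m/2*(t*‖z‖^2 + (1-t)*‖p‖^2 - ‖t•z+(1-t)•p‖^2) = m/2*(t*(1-t)*‖z-p‖^2) := by rw [hid]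
    have h1 : t * (m/2 * ((1-t) * ‖z-p‖^2)) ≤ t * (f z - f p) := by nlinarith [hc, hmin, hid2]
    exact le_of_mul_le_mul_left h1 ht
  rcases eq_or_lt_of_le (hm) with hm0 | hm0
  · have := hp z; simp [← hm0]; linarith
  rcases eq_or_lt_of_le (norm_nonneg (z - p)) with hN0 | hN0
  · have := hp z; rw [← hN0]; simp; linarith
  by_contra h
  push_neg at h
  set N := ‖z - p‖^2 with hN
  have hNpos : 0 < N := by positivity
  have hfzp : 0 ≤ f z - f p := by have := hp z; linarith
  set ε := m/2*N - (f z - f p) with hε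
  have hεpos : 0 < ε := by simp only [hε]; linarith
  set t := ε / (m/2*N + ε) with ht
  have htpos : 0 < t := by positivity
  have ht1 : t < 1 := by
    rw [ht, div_lt_one (by positivity)]
    nlinarith
  have hk := key t htpos ht1
  have : t * (m/2*N) < ε := by
    rw [ht, div_mul_eq_mul_div, div_lt_iff₀ (by positivity)]
    nlinarith
  nlinarith
lemma quad_lb (m lam : ℝ) (hm : 0 < m) (hlam : 0 < lam) (a w q : E) :
    lam/2*‖q‖^2 + lam*⟪q,w⟫ + (m*lam/(m+lam))/2*‖w‖^2 ≤
      lam*⟪q,a⟫ + m/2*‖a‖^2 + lam/2*‖a-(w+q)‖^2 := by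
  have hml : 0 < m + lam := by linarith
  have h2 : (0:ℝ) ≤ ‖(m+lam)•a - lam•w‖^2 := by positivity
  have hpos : (0:ℝ) < 1/(2*(m+lam)) := by positivity
  have e2 : ‖(m+lam)•a - lam•w‖^2
      = (m+lam)^2*‖a‖^2 - 2*((m+lam)*lam)*⟪a,w⟫ + lam^2*‖w‖^2 := by
    simp only [norm_sub_sq_real, norm_smul, Real.norm_eq_abs, mul_pow, sq_abs,
      real_inner_smul_left, real_inner_smul_right]
    ring
  have e1 : ‖a-(w+q)‖^2 = ‖a‖^2+‖w‖^2+‖q‖^2-2*⟪a,w⟫-2*⟪q,a⟫+2*⟪q,w⟫ := by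
    simp only [norm_sub_sq_real, norm_add_sq_real, inner_add_right]
    rw [real_inner_comm a q, real_inner_comm w q]
    ring
  have expr : lam*⟪q,a⟫ + m/2*‖a‖^2 + lam/2*‖a-(w+q)‖^2
      - (lam/2*‖q‖^2 + lam*⟪q,w⟫ + (m*lam/(m+lam))/2*‖w‖^2)
      = (1/(2*(m+lam))) * ‖(m+lam)•a - lam•w‖^2 := by
    rw [e1, e2]
    field_simp
    ring
  nlinarith [mul_le_mul_of_nonneg_left h2 (le_of_lt hpos)]
lemma norm_combo (A B G : E) (σ κ : ℝ) :
    ‖(1-σ)•A + σ•B - κ•G‖^2 = (1-σ)*‖A‖^2 + σ*‖B‖^2 - σ*(1-σ)*‖A-B‖^2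
      - 2*κ*(⟪G,B⟫ + (1-σ)*⟪G,A-B⟫) + κ^2*‖G‖^2 := by
  simp only [norm_sub_sq_real, norm_add_sq_real, norm_smul, Real.norm_eq_abs, mul_pow, sq_abs,
    real_inner_smul_left, real_inner_smul_right, inner_sub_left, inner_sub_right,
    inner_add_left, inner_add_right]
  rw [real_inner_comm G A, real_inner_comm G B]
  ring

lemma young_aux (θ : ℝ) (hθ : 0 < θ) (e B : E) :
    -⟪e,B⟫ - θ/2*‖B‖^2 ≤ ‖e‖^2/(2*θ) := by
  have hcs : -⟪e,B⟫ ≤ ‖e‖*‖B‖ := by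
    have h1 := abs_real_inner_le_norm e B
    have h2 := neg_abs_le (⟪e,B⟫ : ℝ)
    linarith
  rw [le_div_iff₀ (by positivity : (0:ℝ) < 2*θ)]
  nlinarith [sq_nonneg (θ*‖B‖ - ‖e‖),
    mul_le_mul_of_nonneg_left hcs (by positivity : (0:ℝ) ≤ 2*θ)]

lemma final_scalar (τ δ P : ℝ) (hτpos : 0 < τ) (hτhalf : τ ≤ 1/2) (hP : 0 ≤ P)
    (hδ : δ ≤ τ^3/4 * P) : δ + (8/3)*(δ/τ) ≤ τ/2 * P := by
  have hdt : δ/τ ≤ τ^2/4 * P := by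
    rw [div_le_iff₀ hτpos]; nlinarith [hδ]
  have h1 : τ*τ ≤ τ/2 := by
    have := mul_le_mul_of_nonneg_left hτhalf hτpos.le; linarith
  have h2 : τ*(τ*τ) ≤ τ*(τ/2) := mul_le_mul_of_nonneg_left h1 hτpos.le
  have h3 : 0 ≤ τ/2 - τ^3/4 - 2*τ^2/3 := by nlinarith [h1, h2, hτpos]
  have h4 : 0 ≤ (τ/2 - τ^3/4 - 2*τ^2/3) * P := mul_nonneg h3 hP
  nlinarith [hδ, hdt, h4]

lemma appa_step (μ' lam τ Fx Fxp Fs φy δ Δ : ℝ) (x v y xp vp xstar g gs : E)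
    (hμ' : 0 < μ') (hlam3 : 3*μ' ≤ lam)
    (hτpos : 0 < τ) (hτhalf : τ ≤ 1/2)
    (hτ2 : τ^2 * (μ' + lam) = μ')
    (hyv : (1+τ) • y = x + τ • v)
    (hvp : vp = (1-τ) • v + τ • (y - (1/μ' + 1/lam) • g))
    (hgdef : g = lam • (y - xp))
    (hδ : Fxp + lam/2*‖xp - y‖^2 = φy + δ)
    (hδ0 : 0 ≤ δ) (hδΔ : δ ≤ τ^3/8 * Δ)
    (hΔdef : Δ = Fx + lam/2*‖x - y‖^2 - φy)
    (hφy : Fs ≤ φy)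
    (hSx : φy + ⟪gs, x - y⟫ ≤ Fx)
    (hSxs : φy + ⟪gs, xstar - y⟫ + (2*μ'*lam/(2*μ'+lam))/2 * ‖xstar - y‖^2 ≤ Fs)
    (he : ‖g - gs‖^2 ≤ 2*lam*δ)
    (hgrow : μ' * ‖x - xstar‖^2 ≤ Fx - Fs)
    (hFxFs : Fs ≤ Fx) :
    Fxp - Fs + lam*τ^2/2 * ‖vp - xstar‖^2 ≤ (1 - τ/2) * (Fx - Fs + lam*τ^2/2 * ‖v - xstar‖^2) := by
  have hlam : 0 < lam := by linarith
  obtain ⟨μe, hμe⟩ : ∃ a, a = lam * τ^2 := ⟨_, rfl⟩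
  have hμepos : 0 < μe := by rw [hμe]; positivity
  have hL : 0 < μ' + lam := by linarith
  have hμeL : μe * (μ' + lam) = lam * μ' := by rw [hμe]; nlinarith [hτ2]
  have hμeμ' : μe ≤ μ' := by nlinarith [hμeL]
  have hμeval : μe = lam*μ'/(μ'+lam) := by rw [eq_div_iff (ne_of_gt hL)]; linarith [hμeL]
  obtain ⟨θ, hθ⟩ : ∃ a, a = 2*μ'*lam/(2*μ'+lam) - μe := ⟨_, rfl⟩
  have hθ3 : 3/5*μe ≤ θ := by
    rw [hθ, hμeval, le_sub_iff_add_le]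
    have hq : 3/5*(lam*μ'/(μ'+lam)) + lam*μ'/(μ'+lam) = (8/5)*(lam*μ')/(μ'+lam) := by ring
    rw [hq, div_le_div_iff₀ hL (by positivity)]
    have hp : (0:ℝ) ≤ lam * μ' * (lam - 3*μ') :=
      mul_nonneg (mul_nonneg hlam.le hμ'.le) (by linarith)
    nlinarith [hp]
  have hθpos : 0 < θ := by nlinarith [hθ3, hμepos]
  -- base vectors
  obtain ⟨A, hA⟩ : ∃ a, a = v - xstar := ⟨_, rfl⟩
  obtain ⟨B, hB⟩ : ∃ a, a = y - xstar := ⟨_, rfl⟩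
  obtain ⟨e, he2⟩ : ∃ a, a = g - gs := ⟨_, rfl⟩
  have hgs : gs = g - e := by rw [he2]; abel
  have hxval : x = (1+τ)•y - τ•v := by rw [hyv]; abel
  have hxy : x - y = τ • (B - A) := by rw [hxval, hB, hA]; module
  have hxv : x - v = (1+τ) • (B - A) := by rw [hxval, hB, hA]; module
  have hcoef : 1/μ' + 1/lam = 1/μe := by
    rw [div_add_div _ _ (ne_of_gt hμ') (ne_of_gt hlam),
      div_eq_div_iff (by positivity) (by positivity)]
    nlinarith [hμeL]
  have hvpA : vp - xstar = (1-τ)•A + τ•B - (τ/μe)•g := by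
    rw [hvp, hcoef, hA, hB]; module
  -- norm facts
  have hxyn : ‖x - y‖^2 = τ^2 * ‖A-B‖^2 := by
    rw [hxy, norm_smul, Real.norm_eq_abs, abs_of_pos hτpos, mul_pow, norm_sub_rev]
  have hxvn : ‖x - v‖^2 = (1+τ)^2 * ‖A-B‖^2 := by
    rw [hxv, norm_smul, Real.norm_eq_abs, abs_of_pos (by linarith : (0:ℝ) < 1+τ), mul_pow,
      norm_sub_rev]
  have hgn : lam/2 * ‖xp - y‖^2 = ‖g‖^2/(2*lam) := by
    rw [hgdef, norm_smul, Real.norm_eq_abs, abs_of_pos hlam, mul_pow, norm_sub_rev]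
    field_simp
  have hVn : ‖vp - xstar‖^2 = (1-τ)*‖A‖^2 + τ*‖B‖^2 - τ*(1-τ)*‖A-B‖^2
      - 2*(τ/μe)*(⟪g,B⟫ + (1-τ)*⟪g,A-B⟫) + (τ/μe)^2*‖g‖^2 := by
    rw [hvpA]; exact norm_combo A B g τ (τ/μe)
  -- scalar forms of convexity hypotheses
  have hSx' : φy - τ*(⟪g,A-B⟫ - ⟪e,A-B⟫) ≤ Fx := by
    have h1 : ⟪gs, x - y⟫ = - (τ*(⟪g,A-B⟫ - ⟪e,A-B⟫)) := by
      rw [hxy, hgs, real_inner_smul_right, inner_sub_left]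
      have hr : (B - A) = -(A-B) := by abel
      rw [hr, inner_neg_right, inner_neg_right]; ring
    rw [h1] at hSx; linarith
  have hSxs' : φy - (⟪g,B⟫ - ⟪e,B⟫) + (μe/2)*‖B‖^2 + (θ/2)*‖B‖^2 ≤ Fs := by
    have h1 : ⟪gs, xstar - y⟫ = - (⟪g,B⟫ - ⟪e,B⟫) := by
      have hxsy : xstar - y = -B := by rw [hB]; abel
      rw [hxsy, hgs, inner_sub_left, inner_neg_right, inner_neg_right]; ring
    have h2 : ‖xstar - y‖^2 = ‖B‖^2 := by rw [hB, norm_sub_rev]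
    rw [h1, h2] at hSxs
    have h3 : (2*μ'*lam/(2*μ'+lam))/2 * ‖B‖^2 = (μe/2)*‖B‖^2 + (θ/2)*‖B‖^2 := by
      rw [hθ]; ring
    linarith [hSxs, h3.le, h3.ge]
  -- scalar assembly
  have c1 : Fxp = φy + δ - ‖g‖^2/(2*lam) := by linarith [hδ, hgn]
  have c2 : μe/2 * ‖vp - xstar‖^2 = μe/2*((1-τ)*‖A‖^2 + τ*‖B‖^2 - τ*(1-τ)*‖A-B‖^2)
      - τ*(⟪g,B⟫ + (1-τ)*⟪g,A-B⟫) + ‖g‖^2/(2*lam) := by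
    rw [hVn, hμe]; field_simp
  have c3 : τ*(φy - (⟪g,B⟫ - ⟪e,B⟫) + (μe/2)*‖B‖^2 + (θ/2)*‖B‖^2) ≤ τ*Fs :=
    mul_le_mul_of_nonneg_left hSxs' (le_of_lt hτpos)
  have c4 : (1-τ)*(φy - τ*(⟪g,A-B⟫ - ⟪e,A-B⟫)) ≤ (1-τ)*Fx :=
    mul_le_mul_of_nonneg_left hSx' (by linarith)
  have main1 : Fxp - Fs + μe/2 * ‖vp - xstar‖^2 ≤ (1-τ)*(Fx-Fs) + (1-τ)*(μe/2*‖A‖^2) + δ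
      - τ*(θ/2*‖B‖^2) - τ*((1-τ)*(μe/2*‖A-B‖^2)) - τ*⟪e,B⟫ - τ*((1-τ)*⟪e,A-B⟫) := by
    rw [c1, c2]; linarith [c3, c4]
  have yB := young_aux θ hθpos e B
  have yD := young_aux μe hμepos e (A-B)
  have e1τ : τ*(-⟪e,B⟫ - θ/2*‖B‖^2) ≤ τ*(‖e‖^2/(2*θ)) :=
    mul_le_mul_of_nonneg_left yB hτpos.le
  have e2τ : (τ*(1-τ))*(-⟪e,A-B⟫ - μe/2*‖A-B‖^2) ≤ (τ*(1-τ))*(‖e‖^2/(2*μe)) :=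
    mul_le_mul_of_nonneg_left yD (mul_nonneg hτpos.le (by linarith))
  -- error bound
  have hE2 : ‖e‖^2 ≤ 2*lam*δ := by rw [he2]; exact he
  have errbound : τ*(‖e‖^2/(2*θ)) + (τ*(1-τ))*(‖e‖^2/(2*μe)) ≤ (8/3)*(δ/τ) := by
    have h1 : ‖e‖^2/(2*θ) ≤ ‖e‖^2/((6/5)*μe) := by
      apply div_le_div_of_nonneg_left (by positivity) (by positivity)
      linarith
    have h2 : (τ*(1-τ))*(‖e‖^2/(2*μe)) ≤ τ*(‖e‖^2/(2*μe)) := by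
      have hττ : 0 ≤ τ*τ := mul_nonneg hτpos.le hτpos.le
      have h3 : τ*(1-τ) ≤ τ := by linarith
      exact mul_le_mul_of_nonneg_right h3 (by positivity)
    have h4 : τ*(‖e‖^2/((6/5)*μe)) + τ*(‖e‖^2/(2*μe)) = τ*‖e‖^2*(4/3)/μe := by
      field_simp; ring
    have h5 : τ*‖e‖^2*(4/3)/μe ≤ τ*(2*lam*δ)*(4/3)/μe := by
      gcongr
    have h6 : τ*(2*lam*δ)*(4/3)/μe = (8/3)*(δ/τ) := by
      rw [hμe]; field_simp; ring
    have h7 : τ*(‖e‖^2/(2*θ)) ≤ τ*(‖e‖^2/((6/5)*μe)) :=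
      mul_le_mul_of_nonneg_left h1 hτpos.le
    linarith
  have hE0 : 0 ≤ Fx - Fs + μe/2*‖A‖^2 := by
    have h1 : (0:ℝ) ≤ μe/2*‖A‖^2 := by positivity
    linarith
  -- Δ ≤ 2 * potential
  have hΔE : Δ ≤ 2*(Fx - Fs + μe/2*‖A‖^2) := by
    have h3 : ‖x - v‖ ≤ ‖x - xstar‖ + ‖A‖ := by
      rw [hA]
      have hrw : x - v = (x - xstar) - (v - xstar) := by abel
      rw [hrw]; exact norm_sub_le _ _
    have h4 : ‖A-B‖^2 ≤ ‖x-v‖^2 := by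
      rw [hxvn]
      have h0 : 0 ≤ (2*τ + τ*τ) * ‖A-B‖^2 := by
        apply mul_nonneg _ (sq_nonneg _)
        have := mul_nonneg hτpos.le hτpos.le
        linarith
      linarith [h0]
    have h5 : ‖x-v‖^2 ≤ (‖x-xstar‖ + ‖A‖)^2 := pow_le_pow_left₀ (norm_nonneg (x-v)) h3 2
    have h6 := sq_nonneg (‖x-xstar‖ - ‖A‖)
    have hn1 : ‖A-B‖^2 ≤ 2*‖x-xstar‖^2 + 2*‖A‖^2 := by linarith [h4, h5, h6]
    have hl : lam/2*‖x-y‖^2 = μe/2*‖A-B‖^2 := by rw [hxyn, hμe]; ring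
    have hm1 : μe/2*‖A-B‖^2 ≤ μe/2*(2*‖x-xstar‖^2 + 2*‖A‖^2) :=
      mul_le_mul_of_nonneg_left hn1 (by linarith)
    have hm2 : μe*‖x-xstar‖^2 ≤ μ'*‖x-xstar‖^2 := by
      have h7 : 0 ≤ (μ' - μe) * ‖x-xstar‖^2 :=
        mul_nonneg (by linarith) (sq_nonneg _)
      linarith [h7]
    linarith [hΔdef.le, hΔdef.ge, hgrow, hφy, hl.le, hm1, hm2]
  -- final combination
  have hfinal : δ + (8/3)*(δ/τ) ≤ τ/2 * (Fx - Fs + μe/2*‖A‖^2) := by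
    apply final_scalar τ δ _ hτpos hτhalf hE0
    have h8 := mul_le_mul_of_nonneg_left hΔE (by positivity : (0:ℝ) ≤ τ^3/8)
    linarith [hδΔ, h8]
  rw [← hμe, ← hA]
  linarith [main1, e1τ, e2τ, errbound, hfinal]

end Aux



/-- Iteration complexity of Accelerated APPA,
cf. Theorem 1.1. -/
theorem stmt8 {d : ℕ} (F : EuclideanSpace ℝ (Fin d) → ℝ) (μ : ℝ) (hμ : 0 < μ)
    (hsc : ConvexOn ℝ Set.univ (fun z => F z - μ / 2 * ‖z‖ ^ 2))
    (Fstar : ℝ) (hF : IsLeast (Set.range F) Fstar)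
    (μ' : ℝ) (hμ' : μ' = μ / 2)
    (lam : ℝ) (hlam : 3 * μ' ≤ lam)
    (ρ : ℝ) (hρ : ρ = (μ' + lam) / μ')
    (c : ℝ) (hc : 1 < c)
    (fstar : EuclideanSpace ℝ (Fin d) → ℝ)
    (hfstar : ∀ s, IsLeast (Set.range (fun z => F z + lam / 2 * ‖z - s‖ ^ 2)) (fstar s))
    (x v y g : ℕ → EuclideanSpace ℝ (Fin d))
    (hv0 : v 0 = x 0)
    (hy : ∀ t, y t = (1 / (1 + ρ ^ (-(1 / 2) : ℝ))) • x t
        + (ρ ^ (-(1 / 2) : ℝ) / (1 + ρ ^ (-(1 / 2) : ℝ))) • v t)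
    (hx : ∀ t, (F (x (t + 1)) + lam / 2 * ‖x (t + 1) - y t‖ ^ 2) - fstar (y t) ≤
        ρ ^ (-(3 / 2) : ℝ) / 8 *
          ((F (x t) + lam / 2 * ‖x t - y t‖ ^ 2) - fstar (y t)))
    (hg : ∀ t, g t = lam • (y t - x (t + 1)))
    (hvs : ∀ t, v (t + 1) = (1 - ρ ^ (-(1 / 2) : ℝ)) • v t
        + ρ ^ (-(1 / 2) : ℝ) • (y t - (1 / μ' + 1 / lam) • g t))
    (T : ℕ) (hT : (T : ℝ) ≥ 2 * Real.sqrt ρ * Real.log (c * (lam + 2 * μ') / μ')) :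
    F (x T) - Fstar ≤ 1 / c * (F (x 0) - Fstar) := by
  have hμ'pos : 0 < μ' := by rw [hμ']; linarith
  have hlampos : 0 < lam := by linarith
  have hLpos : 0 < μ' + lam := by linarith
  have hρpos : 0 < ρ := by rw [hρ]; positivity
  have hρ4 : 4 ≤ ρ := by rw [hρ, le_div_iff₀ hμ'pos]; linarith
  set τ := ρ ^ (-(1/2) : ℝ) with hτdef
  have hτpos : 0 < τ := Real.rpow_pos_of_pos hρpos _
  have hττ : τ * τ = ρ⁻¹ := by
    rw [hτdef, ← Real.rpow_add hρpos, ← Real.rpow_neg_one]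
    norm_num
  have hτ2 : τ^2 * (μ' + lam) = μ' := by
    rw [pow_two, hττ, hρ]
    field_simp
  have hρinv : ρ⁻¹ ≤ 1/4 := by
    rw [inv_eq_one_div, div_le_div_iff₀ hρpos (by norm_num)]
    linarith
  have hτhalf : τ ≤ 1/2 := by nlinarith [sq_nonneg (τ - 1/2), hττ, hρinv, hτpos]
  have hτcube : ρ ^ (-(3/2) : ℝ) = τ^3 := by
    have h1 : (-(3/2) : ℝ) = (-1) + (-(1/2)) := by norm_num
    rw [h1, Real.rpow_add hρpos, Real.rpow_neg_one, hτdef]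
    rw [pow_succ, pow_two, hττ]
  have hsqrt1 : τ * Real.sqrt ρ = 1 := by
    rw [hτdef, Real.sqrt_eq_rpow, ← Real.rpow_add hρpos]
    norm_num
  -- minimizer of F
  obtain ⟨xstar, hxs⟩ := hF.1
  have hFs_le : ∀ z, Fstar ≤ F z := fun z => hF.2 ⟨z, rfl⟩
  have hgrowth : ∀ z, Fstar + μ/2 * ‖z - xstar‖^2 ≤ F z := by
    intro z
    have := strong_min_s8 F μ hμ.le hsc xstar (fun w => by rw [hxs]; exact hFs_le w) z
    rw [hxs] at this; exact this
  have h2μ' : 2*μ' = μ := by rw [hμ']; ring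
  -- fstar bounds
  have hfs_le : ∀ s z, fstar s ≤ F z + lam/2 * ‖z - s‖^2 := fun s z => (hfstar s).2 ⟨z, rfl⟩
  have hfs_leF : ∀ u, fstar u ≤ F u := by
    intro u
    have := hfs_le u u
    simp at this
    exact this
  have hfs_ge : ∀ s, Fstar ≤ fstar s := by
    intro s
    obtain ⟨p, hp⟩ := (hfstar s).1
    simp only at hp
    have h1 : (0:ℝ) ≤ lam/2 * ‖p - s‖^2 := by positivity
    have := hFs_le p
    linarith [hp.ge, hp.le]
  -- per-step potential contraction
  have hstep : ∀ t, F (x (t+1)) - Fstar + lam*τ^2/2 * ‖v (t+1) - xstar‖^2 ≤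
      (1 - τ/2) * (F (x t) - Fstar + lam*τ^2/2 * ‖v t - xstar‖^2) := by
    intro t
    obtain ⟨p, hp⟩ := (hfstar (y t)).1
    simp only at hp
    -- strong convexity of the proximal subproblem
    have haff : ConvexOn ℝ Set.univ (fun z => lam/2*‖z - y t‖^2 - lam/2*‖z‖^2) := by
      have hrepr : ∀ z : EuclideanSpace ℝ (Fin d),
          lam/2*‖z - y t‖^2 - lam/2*‖z‖^2 = -lam*⟪y t, z⟫ + lam/2*‖y t‖^2 := by
        intro z
        rw [norm_sub_sq_real, real_inner_comm]
        ring
      constructor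
      · exact convex_univ
      · intro u _ w _ a b ha hb hab
        simp only [hrepr, smul_eq_mul, inner_add_right, real_inner_smul_right]
        have : a * (-lam*⟪y t, u⟫ + lam/2*‖y t‖^2) + b * (-lam*⟪y t, w⟫ + lam/2*‖y t‖^2)
            = -lam*(a*⟪y t, u⟫ + b*⟪y t, w⟫) + lam/2*‖y t‖^2 := by
          linear_combination (lam/2*‖y t‖^2) * hab
        rw [this]
    have hconvf : ConvexOn ℝ Set.univ
        (fun z => (F z + lam/2*‖z - y t‖^2) - (μ+lam)/2 * ‖z‖^2) := by
      have hfe : (fun z : EuclideanSpace ℝ (Fin d) =>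
          (F z + lam/2*‖z - y t‖^2) - (μ+lam)/2 * ‖z‖^2)
          = fun z => (F z - μ/2*‖z‖^2) + (lam/2*‖z - y t‖^2 - lam/2*‖z‖^2) := by
        funext z; ring
      rw [hfe]
      exact hsc.add haff
    have hminp : ∀ z, F p + lam/2*‖p - y t‖^2 ≤ F z + lam/2*‖z - y t‖^2 := by
      intro z
      rw [hp]
      exact hfs_le (y t) z
    have f3 : ∀ z, (F p + lam/2*‖p - y t‖^2) + (μ+lam)/2 * ‖z - p‖^2
        ≤ F z + lam/2*‖z - y t‖^2 := by
      intro z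
      have := strong_min_s8 (fun z => F z + lam/2*‖z - y t‖^2) (μ+lam) (by linarith)
        hconvf p hminp z
      simpa using this
    -- subgradient inequality F4
    set gs : EuclideanSpace ℝ (Fin d) := lam • (y t - p) with hgsdef
    have f4 : ∀ z, F p + ⟪gs, z - p⟫ + μ/2 * ‖z - p‖^2 ≤ F z := by
      intro z
      have h3 := f3 z
      have hid : z - y t = (z - p) - (y t - p) := by abel
      have hexp : ‖z - y t‖^2 = ‖z - p‖^2 - 2*⟪z - p, y t - p⟫ + ‖y t - p‖^2 := by
        rw [hid]; exact norm_sub_sq_real _ _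
      have hns : ‖p - y t‖^2 = ‖y t - p‖^2 := by rw [norm_sub_rev]
      have hinner : ⟪gs, z - p⟫ = lam * ⟪z - p, y t - p⟫ := by
        rw [hgsdef, real_inner_smul_left, real_inner_comm]
      have hexp2 : lam/2*‖z - y t‖^2
          = lam/2*(‖z - p‖^2 - 2*⟪z - p, y t - p⟫ + ‖y t - p‖^2) := by rw [hexp]
      have hns2 : lam/2*‖p - y t‖^2 = lam/2*‖y t - p‖^2 := by rw [hns]
      linarith [h3, hexp2.le, hexp2.ge, hns2.le, hns2.ge, hinner.le, hinner.ge]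
    -- envelope strong convexity F5
    have f5 : ∀ u, fstar (y t) + ⟪gs, u - y t⟫ + (μ*lam/(μ+lam))/2 * ‖u - y t‖^2
        ≤ fstar u := by
      intro u
      obtain ⟨zu, hzu⟩ := (hfstar u).1
      simp only at hzu
      have hq := quad_lb μ lam hμ hlampos (zu - p) (u - y t) (y t - p)
      have hid : (zu - p) - ((u - y t) + (y t - p)) = zu - u := by abel
      rw [hid] at hq
      have h4 := f4 zu
      have hinner : ⟪gs, u - y t⟫ = lam * ⟪y t - p, u - y t⟫ := by
        rw [hgsdef, real_inner_smul_left]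
      have hinner2 : ⟪gs, zu - p⟫ = lam * ⟪y t - p, zu - p⟫ := by
        rw [hgsdef, real_inner_smul_left]
      have hns2 : lam/2*‖p - y t‖^2 = lam/2*‖y t - p‖^2 := by rw [norm_sub_rev p]
      linarith [hq, h4, hinner.le, hinner.ge, hinner2.le, hinner2.ge,
        hp.le, hp.ge, hzu.le, hzu.ge, hns2.le, hns2.ge]
    -- hypotheses for the step lemma
    have hyv : (1+τ) • y t = x t + τ • v t := by
      rw [hy t]
      have h1 : (1:ℝ) + τ ≠ 0 := by positivity
      match_scalars <;> field_simp
    obtain ⟨δ, hδdef⟩ : ∃ a, a = (F (x (t+1)) + lam/2*‖x (t+1) - y t‖^2) - fstar (y t) :=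
      ⟨_, rfl⟩
    obtain ⟨Δ, hΔdef⟩ : ∃ a, a = (F (x t) + lam/2*‖x t - y t‖^2) - fstar (y t) :=
      ⟨_, rfl⟩
    have hδ0 : 0 ≤ δ := by
      rw [hδdef]
      linarith [hfs_le (y t) (x (t+1))]
    have hδΔ : δ ≤ τ^3/8 * Δ := by
      rw [hδdef, hΔdef]
      have := hx t
      rw [hτcube] at this
      linarith
    have hgsval : g t - gs = lam • (p - x (t+1)) := by
      rw [hg t, hgsdef]
      module
    have hef : ‖g t - gs‖^2 ≤ 2*lam*δ := by
      have h5 := f3 (x (t+1))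
      have h6 : (μ+lam)/2 * ‖x (t+1) - p‖^2 ≤ δ := by
        rw [hδdef]; linarith [hp.le, hp.ge, h5]
      have h7 : ‖g t - gs‖^2 = lam^2 * ‖x (t+1) - p‖^2 := by
        rw [hgsval, norm_smul, Real.norm_eq_abs, abs_of_pos hlampos, mul_pow, norm_sub_rev]
      rw [h7]
      have h8 : 0 ≤ μ * ‖x (t+1) - p‖^2 := by positivity
      nlinarith [mul_le_mul_of_nonneg_left h6 hlampos.le,
        mul_nonneg (mul_nonneg hμ.le hlampos.le) (sq_nonneg ‖x (t+1) - p‖)]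
    -- final application
    apply appa_step μ' lam τ (F (x t)) (F (x (t+1))) Fstar (fstar (y t)) δ Δ
      (x t) (v t) (y t) (x (t+1)) (v (t+1)) xstar (g t) gs
      hμ'pos hlam hτpos hτhalf hτ2 hyv (hvs t) (hg t)
    · linarith [hδdef.le, hδdef.ge]
    · exact hδ0
    · exact hδΔ
    · linarith [hΔdef.le, hΔdef.ge]
    · exact hfs_ge (y t)
    · -- hSx
      have h9 := f5 (x t)
      have h10 : (0:ℝ) ≤ (μ*lam/(μ+lam))/2 * ‖x t - y t‖^2 := by positivity
      linarith [hfs_leF (x t)]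
    · -- hSxs
      have h9 := f5 xstar
      have h11 : fstar xstar ≤ Fstar := by
        have := hfs_le xstar xstar
        simp at this
        rw [← hxs]; simpa using this
      rw [h2μ']
      have h12 : μ' = μ/2 := hμ'
      linarith
    · exact hef
    · -- hgrow
      have := hgrowth (x t)
      rw [hμ']
      linarith
    · exact hFs_le (x t)
  -- iterate the contraction
  have hfac0 : (0:ℝ) ≤ 1 - τ/2 := by linarith
  have hiter : ∀ n : ℕ, F (x n) - Fstar + lam*τ^2/2 * ‖v n - xstar‖^2 ≤
      (1 - τ/2)^n * (F (x 0) - Fstar + lam*τ^2/2 * ‖v 0 - xstar‖^2) := by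
    intro n
    induction n with
    | zero => simp
    | succ k ih =>
      calc F (x (k+1)) - Fstar + lam*τ^2/2 * ‖v (k+1) - xstar‖^2
          ≤ (1 - τ/2) * (F (x k) - Fstar + lam*τ^2/2 * ‖v k - xstar‖^2) := hstep k
        _ ≤ (1 - τ/2) * ((1 - τ/2)^k * (F (x 0) - Fstar + lam*τ^2/2 * ‖v 0 - xstar‖^2)) :=
            mul_le_mul_of_nonneg_left ih hfac0
        _ = (1 - τ/2)^(k+1) * (F (x 0) - Fstar + lam*τ^2/2 * ‖v 0 - xstar‖^2) := by ring
  -- initial potential bound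
  have hcpos : (0:ℝ) < c := by linarith
  have hμe2 : lam*τ^2 ≤ μ' := by
    have h1 : lam*τ^2*(μ'+lam) = lam*μ' := by linear_combination lam * hτ2
    nlinarith [h1, mul_pos hμ'pos hμ'pos, hLpos]
  have hd0 : 0 ≤ F (x 0) - Fstar := by linarith [hFs_le (x 0)]
  have hE0b : F (x 0) - Fstar + lam*τ^2/2 * ‖v 0 - xstar‖^2 ≤ 3/2 * (F (x 0) - Fstar) := by
    rw [hv0]
    have hg0 := hgrowth (x 0)
    have h2 : lam*τ^2*‖x 0 - xstar‖^2 ≤ μ'*‖x 0 - xstar‖^2 :=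
      mul_le_mul_of_nonneg_right hμe2 (sq_nonneg _)
    have h3 : μ'*‖x 0 - xstar‖^2 ≤ F (x 0) - Fstar := by
      rw [hμ']; linarith [hg0]
    linarith
  -- logarithm bound
  have hKpos : 0 < c*(lam+2*μ')/μ' := by positivity
  have hT2 : Real.log (c*(lam+2*μ')/μ') ≤ τ/2 * T := by
    have h1 := mul_le_mul_of_nonneg_left hT.le (by linarith : (0:ℝ) ≤ τ/2)
    have h2 : τ/2 * (2*Real.sqrt ρ*Real.log (c*(lam+2*μ')/μ'))
        = Real.log (c*(lam+2*μ')/μ') := by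
      linear_combination Real.log (c*(lam+2*μ')/μ') * hsqrt1
    linarith
  have hpow : (1-τ/2)^T ≤ μ'/(c*(lam+2*μ')) := by
    have h1 : 1-τ/2 ≤ Real.exp (-(τ/2)) := by
      have := Real.add_one_le_exp (-(τ/2)); linarith
    have h2 : (1-τ/2)^T ≤ Real.exp (-(τ/2))^T := pow_le_pow_left₀ (by linarith) h1 T
    have h3 : Real.exp (-(τ/2))^T = Real.exp ((T:ℝ) * (-(τ/2))) := (Real.exp_nat_mul _ T).symm
    have h4 : Real.exp ((T:ℝ) * (-(τ/2))) ≤ Real.exp (-(Real.log (c*(lam+2*μ')/μ'))) := by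
      apply Real.exp_le_exp.2
      nlinarith [hT2]
    have h5 : Real.exp (-(Real.log (c*(lam+2*μ')/μ'))) = μ'/(c*(lam+2*μ')) := by
      rw [Real.exp_neg, Real.exp_log hKpos, inv_div]
    rw [h3] at h2
    rw [h5] at h4
    linarith
  -- conclude
  have hT1 := hiter T
  have hvT : 0 ≤ lam*τ^2/2 * ‖v T - xstar‖^2 := by positivity
  have h6 : (1-τ/2)^T * (F (x 0) - Fstar + lam*τ^2/2*‖v 0 - xstar‖^2)
      ≤ (1-τ/2)^T * (3/2*(F (x 0) - Fstar)) := by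
    apply mul_le_mul_of_nonneg_left _ (pow_nonneg hfac0 T)
    linarith [hE0b]
  have h7 : (1-τ/2)^T * (3/2*(F (x 0) - Fstar))
      ≤ (μ'/(c*(lam+2*μ'))) * (3/2*(F (x 0) - Fstar)) :=
    mul_le_mul_of_nonneg_right hpow (by linarith)
  have h8 : (μ'/(c*(lam+2*μ'))) * (3/2*(F (x 0) - Fstar)) ≤ 1/c * (F (x 0) - Fstar) := by
    have hcoef : (μ'/(c*(lam+2*μ'))) * (3/2) ≤ 1/c := by
      rw [div_mul_eq_mul_div, div_le_div_iff₀ (by positivity) hcpos]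
      nlinarith [hcpos, hμ'pos, hlam]
    have h9 := mul_le_mul_of_nonneg_right hcoef hd0
    nlinarith [h9]
  linarith [hT1, hvT, h6, h7, h8]
end

section
/- In the ERM setting with each φ_i differentiable, convex, and L-smooth (L > 0) and ‖a_i‖₂ ≤ R for all i, let s ∈ ℝ^d, λ > 0, and suppose f_{s,λ} attains minimum value f*_{s,λ} and g_{s,λ} attains minimum value g*_{s,λ}. Then for all y ∈ ℝ^n: f_{s,λ}(x̂_{s,λ}(y)) − f*_{s,λ} ≤ 2·(n·κ_λ)²·(g_{s,λ}(y) − g*_{s,λ}), where x̂_{s,λ}(y) := s − (1/λ)Aᵀy and κ_λ := ⌈L·R²/λ⌉. -/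
open scoped RealInnerProductSpace


/-- limit trick: if `p ≤ q + t*r` for all `t ∈ (0,1)`, then `p ≤ q`. -/
lemma aux_limit {p q r : ℝ} (h : ∀ t : ℝ, t ∈ Set.Ioo (0:ℝ) 1 → p ≤ q + t * r) : p ≤ q := by
  by_contra hc
  push_neg at hc
  rcases le_or_gt r 0 with hr | hr
  · have := h (1/2) (by norm_num)
    nlinarith
  · set t := min (1/2) ((p - q) / (2 * r)) with ht
    have htpos : 0 < t := lt_min (by norm_num) (div_pos (by linarith) (by linarith))
    have ht1 : t < 1 := lt_of_le_of_lt (min_le_left _ _) (by norm_num)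
    have := h t ⟨htpos, ht1⟩
    have h2 : t ≤ (p - q) / (2 * r) := min_le_right _ _
    have h3 : t * r ≤ (p - q) / 2 := by
      calc t * r ≤ (p - q) / (2 * r) * r := by nlinarith
        _ = (p - q) / 2 := by field_simp
    linarith

/-- descent/smoothness upper bound from Lipschitz derivative. -/
lemma aux_smooth {φ : ℝ → ℝ} {L : ℝ} (hL : 0 ≤ L) (hdiff : Differentiable ℝ φ)
    (hlip : ∀ x y : ℝ, |deriv φ x - deriv φ y| ≤ L * |x - y|) (a b : ℝ) :
    φ b ≤ φ a + deriv φ a * (b - a) + L / 2 * (b - a) ^ 2 := by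
  set d := b - a with hd
  set g : ℝ → ℝ := fun t => φ (a + t * d) - t * (deriv φ a * d) - L / 2 * d ^ 2 * t ^ 2 with hg
  have hg' : ∀ t : ℝ, HasDerivAt g
      (deriv φ (a + t * d) * d - deriv φ a * d - L / 2 * d ^ 2 * (2 * t)) t := by
    intro t
    have h1 : HasDerivAt (fun t : ℝ => a + t * d) d t := by
      simpa using ((hasDerivAt_id t).mul_const d).const_add a
    have h2 : HasDerivAt (fun t : ℝ => φ (a + t * d)) (deriv φ (a + t * d) * d) t :=
      (hdiff (a + t * d)).hasDerivAt.comp t h1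
    have h3 : HasDerivAt (fun t : ℝ => t * (deriv φ a * d)) (deriv φ a * d) t := by
      simpa using (hasDerivAt_id t).mul_const (deriv φ a * d)
    have h4 : HasDerivAt (fun t : ℝ => L / 2 * d ^ 2 * t ^ 2) (L / 2 * d ^ 2 * (2 * t)) t := by
      simpa using (hasDerivAt_pow 2 t).const_mul (L / 2 * d ^ 2)
    exact (h2.sub h3).sub h4
  have hgdiff : Differentiable ℝ g := fun t => (hg' t).differentiableAt
  have hanti : AntitoneOn g (Set.Icc (0:ℝ) 1) := by
    apply antitoneOn_of_deriv_nonpos (convex_Icc 0 1) hgdiff.continuous.continuousOn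
      hgdiff.differentiableOn
    intro t ht
    rw [interior_Icc] at ht
    rw [(hg' t).deriv]
    have hb : |deriv φ (a + t * d) - deriv φ a| ≤ L * |t * d| := by
      simpa using hlip (a + t * d) a
    have : (deriv φ (a + t * d) - deriv φ a) * d ≤ L * t * d ^ 2 := by
      calc (deriv φ (a + t * d) - deriv φ a) * d ≤ |deriv φ (a + t * d) - deriv φ a| * |d| := by
            rw [← abs_mul]; exact le_abs_self _
        _ ≤ L * |t * d| * |d| := by
            apply mul_le_mul_of_nonneg_right hb (abs_nonneg _)
        _ = L * t * d ^ 2 := by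
            rw [abs_mul, abs_of_pos ht.1, ← sq_abs d]
            ring
    have h0 : deriv φ (a + t * d) * d - deriv φ a * d - L / 2 * d ^ 2 * (2 * t)
        = (deriv φ (a + t * d) - deriv φ a) * d - L * t * d ^ 2 := by ring
    rw [h0]
    linarith
  have h01 := hanti (Set.left_mem_Icc.mpr zero_le_one) (Set.right_mem_Icc.mpr zero_le_one)
    zero_le_one
  simp only [hg, zero_mul, one_mul, mul_zero, sub_zero, mul_one, zero_pow, one_pow] at h01
  norm_num at h01
  have : a + d = b := by rw [hd]; ring
  rw [this] at h01
  linarith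

/-- gradient inequality for differentiable convex functions on ℝ. -/
lemma aux_convex_lower {φ : ℝ → ℝ} (hconv : ConvexOn ℝ Set.univ φ)
    (hdiff : Differentiable ℝ φ) (a b : ℝ) :
    φ a + deriv φ a * (b - a) ≤ φ b := by
  rcases lt_trichotomy a b with h | h | h
  · have := hconv.deriv_le_slope (Set.mem_univ a) (Set.mem_univ b) h (hdiff a)
    rw [slope_def_field] at this
    have hba : 0 < b - a := sub_pos.mpr h
    rw [le_div_iff₀ hba] at this
    linarith
  · subst h; simp
  · have := hconv.slope_le_deriv (Set.mem_univ b) (Set.mem_univ a) h (hdiff a)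
    rw [slope_def_field] at this
    have hab : 0 < a - b := sub_pos.mpr h
    rw [div_le_iff₀ hab] at this
    nlinarith

/-- Fenchel–Young inequality. -/
lemma aux_FY {φ ψ : ℝ → ℝ} (hstar : ∀ w, IsLUB {u : ℝ | ∃ z, u = w * z - φ z} (ψ w))
    (w z : ℝ) : w * z - φ z ≤ ψ w :=
  (hstar w).1 ⟨z, rfl⟩

/-- Value of the conjugate at the derivative. -/
lemma aux_val {φ ψ : ℝ → ℝ} (hconv : ConvexOn ℝ Set.univ φ) (hdiff : Differentiable ℝ φ)
    (hstar : ∀ w, IsLUB {u : ℝ | ∃ z, u = w * z - φ z} (ψ w)) (z : ℝ) :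
    ψ (deriv φ z) = deriv φ z * z - φ z := by
  refine le_antisymm ((hstar _).2 ?_) (aux_FY hstar _ z)
  rintro u ⟨z', rfl⟩
  have := aux_convex_lower hconv hdiff z z'
  nlinarith

/-- Strong convexity of the conjugate of an L-smooth function. -/
lemma aux_strong {φ ψ : ℝ → ℝ} {L : ℝ} (hL : 0 < L) (hdiff : Differentiable ℝ φ)
    (hlip : ∀ x y : ℝ, |deriv φ x - deriv φ y| ≤ L * |x - y|)
    (hstar : ∀ w, IsLUB {u : ℝ | ∃ z, u = w * z - φ z} (ψ w))
    (w₁ w₂ t : ℝ) (ht0 : 0 ≤ t) (ht1 : t ≤ 1) :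
    ψ (t * w₁ + (1 - t) * w₂) ≤
      t * ψ w₁ + (1 - t) * ψ w₂ - t * (1 - t) / (2 * L) * (w₁ - w₂) ^ 2 := by
  refine (hstar _).2 ?_
  rintro u ⟨z, rfl⟩
  set δ : ℝ := (w₁ - w₂) / L with hδdef
  have hδ : L * δ = w₁ - w₂ := by rw [hδdef]; field_simp
  have hw1 : w₁ = w₂ + L * δ := by linarith
  have key1 : φ (z + (1 - t) * δ) ≤ φ z + deriv φ z * ((1 - t) * δ) + L / 2 * ((1 - t) * δ) ^ 2 := by
    have := aux_smooth hL.le hdiff hlip z (z + (1 - t) * δ)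
    simpa using this
  have key2 : φ (z - t * δ) ≤ φ z + deriv φ z * (-(t * δ)) + L / 2 * (t * δ) ^ 2 := by
    have := aux_smooth hL.le hdiff hlip z (z - t * δ)
    have he : z - t * δ - z = -(t * δ) := by ring
    rw [he, neg_sq] at this
    exact this
  have FY1 : w₁ * (z + (1 - t) * δ) - φ (z + (1 - t) * δ) ≤ ψ w₁ := aux_FY hstar _ _
  have FY2 : w₂ * (z - t * δ) - φ (z - t * δ) ≤ ψ w₂ := aux_FY hstar _ _
  have m1 := mul_le_mul_of_nonneg_left FY1 ht0
  have m2 := mul_le_mul_of_nonneg_left FY2 (by linarith : (0:ℝ) ≤ 1 - t)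
  have m3 := mul_le_mul_of_nonneg_left key1 ht0
  have m4 := mul_le_mul_of_nonneg_left key2 (by linarith : (0:ℝ) ≤ 1 - t)
  have htgt : t * (1 - t) / (2 * L) * (w₁ - w₂) ^ 2 = t * (1 - t) * (L / 2) * δ ^ 2 := by
    rw [← hδ]; field_simp
  rw [htgt, hw1]
  rw [hw1] at m1
  linarith


/-- the pincer argument identifying the dual optimum coordinate. -/
lemma aux_pincer {ψ : ℝ → ℝ} {L z c K yh w₀ : ℝ} (hL : 0 < L)
    (hsub : ∀ w, ψ yh + z * (w - yh) - c * (w - yh) ^ 2 ≤ ψ w)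
    (hFY : ∀ w, w * z + K ≤ ψ w) (hval : ψ w₀ = w₀ * z + K)
    (hsc : ∀ w₁ w₂ t : ℝ, 0 ≤ t → t ≤ 1 →
      ψ (t * w₁ + (1 - t) * w₂) ≤ t * ψ w₁ + (1 - t) * ψ w₂
        - t * (1 - t) / (2 * L) * (w₁ - w₂) ^ 2) :
    yh = w₀ := by
  have hI : ψ w₀ + (yh - w₀) * z + (w₀ - yh) ^ 2 / (2 * L) ≤ ψ yh := by
    apply aux_limit (r := (w₀ - yh) ^ 2 / (2 * L))
    intro t ht
    have hE := hsc yh w₀ t ht.1.le ht.2.le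
    have hlow := hFY (t * yh + (1 - t) * w₀)
    have hq : t * (1 - t) / (2 * L) * (yh - w₀) ^ 2
        = t * ((1 - t) * ((w₀ - yh) ^ 2 / (2 * L))) := by field_simp; ring
    have h5 : t * (ψ w₀ + (yh - w₀) * z + (1 - t) * ((w₀ - yh) ^ 2 / (2 * L))) ≤ t * ψ yh := by
      nlinarith [hE, hlow, hval]
    have h6 := le_of_mul_le_mul_left h5 ht.1
    linarith
  have hII : ψ yh + z * (w₀ - yh) + (w₀ - yh) ^ 2 / (2 * L) ≤ ψ w₀ := by
    apply aux_limit (r := c * (w₀ - yh) ^ 2 + (w₀ - yh) ^ 2 / (2 * L))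
    intro t ht
    have hE := hsc w₀ yh t ht.1.le ht.2.le
    have harg : t * w₀ + (1 - t) * yh = yh + t * (w₀ - yh) := by ring
    rw [harg] at hE
    have hlow := hsub (yh + t * (w₀ - yh))
    have harg2 : yh + t * (w₀ - yh) - yh = t * (w₀ - yh) := by ring
    rw [harg2] at hlow
    have hq : t * (1 - t) / (2 * L) * (w₀ - yh) ^ 2
        = t * ((1 - t) * ((w₀ - yh) ^ 2 / (2 * L))) := by field_simp
    have h5 : t * (ψ yh + z * (w₀ - yh) + (1 - t) * ((w₀ - yh) ^ 2 / (2 * L))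
        - t * (c * (w₀ - yh) ^ 2)) ≤ t * ψ w₀ := by
      nlinarith [hE, hlow]
    have h6 := le_of_mul_le_mul_left h5 ht.1
    linarith
  have hd2 : (w₀ - yh) ^ 2 / L ≤ 0 := by
    have : (w₀ - yh) ^ 2 / (2 * L) + (w₀ - yh) ^ 2 / (2 * L) = (w₀ - yh) ^ 2 / L := by
      field_simp; ring
    nlinarith [hI, hII]
  have h0 : (w₀ - yh) ^ 2 ≤ 0 := by
    by_contra hcon
    push_neg at hcon
    have := div_pos hcon hL
    linarith
  have : w₀ - yh = 0 := by
    have := sq_nonneg (w₀ - yh)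
    have h2 : (w₀ - yh) ^ 2 = 0 := le_antisymm h0 this
    exact pow_eq_zero_iff (by norm_num) |>.mp h2
  linarith

set_option maxHeartbeats 2000000 in
/-- Lemma: dual error bounds primal error. -/
theorem stmt12 {n d : ℕ} (a : Fin n → EuclideanSpace ℝ (Fin d))
    (φ : Fin n → ℝ → ℝ) (hconv : ∀ i, ConvexOn ℝ Set.univ (φ i))
    (L : ℝ) (hL : 0 < L)
    (hdiff : ∀ i, Differentiable ℝ (φ i))
    (hlip : ∀ i, LipschitzWith L.toNNReal (deriv (φ i)))
    (R : ℝ) (hR : ∀ i, ‖a i‖ ≤ R)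
    (φstar : Fin n → ℝ → ℝ)
    (hφstar : ∀ i (w : ℝ), IsLUB {u : ℝ | ∃ z : ℝ, u = w * z - φ i z} (φstar i w))
    (s : EuclideanSpace ℝ (Fin d)) (lam : ℝ) (hlam : 0 < lam)
    (fstar : ℝ)
    (hfstar : IsLeast
      (Set.range (fun x : EuclideanSpace ℝ (Fin d) =>
        (∑ i, φ i ⟪a i, x⟫) + lam / 2 * ‖x - s‖ ^ 2)) fstar)
    (gstar : ℝ)
    (hgstar : IsLeast
      (Set.range (fun y : EuclideanSpace ℝ (Fin n) =>
        (∑ i, φstar i (y i)) + 1 / (2 * lam) * ‖∑ i, y i • a i‖ ^ 2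
          - ⟪s, ∑ i, y i • a i⟫)) gstar) :
    ∀ y : EuclideanSpace ℝ (Fin n),
      ((∑ i, φ i ⟪a i, s - lam⁻¹ • ∑ j, y j • a j⟫)
          + lam / 2 * ‖(s - lam⁻¹ • ∑ j, y j • a j) - s‖ ^ 2) - fstar ≤
        2 * ((n : ℝ) * (⌈L * R ^ 2 / lam⌉₊ : ℝ)) ^ 2 *
          (((∑ i, φstar i (y i)) + 1 / (2 * lam) * ‖∑ i, y i • a i‖ ^ 2
            - ⟪s, ∑ i, y i • a i⟫) - gstar) := by
  intro y
  -- Lipschitz bound in usable form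
  have hlip' : ∀ i (x x' : ℝ), |deriv (φ i) x - deriv (φ i) x'| ≤ L * |x - x'| := by
    intro i x x'
    have := (hlip i).dist_le_mul x x'
    rwa [Real.dist_eq, Real.dist_eq, Real.coe_toNNReal L hL.le] at this
  -- the dual and primal optima
  obtain ⟨yh, hyh⟩ := hgstar.1
  obtain ⟨x₀, hx₀⟩ := hfstar.1
  simp only [] at hyh hx₀
  -- abbreviations
  set vh : EuclideanSpace ℝ (Fin d) := ∑ j, yh j • a j with hvh
  set vy : EuclideanSpace ℝ (Fin d) := ∑ j, y j • a j with hvy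
  set xh : EuclideanSpace ℝ (Fin d) := s - lam⁻¹ • vh with hxh
  set z : Fin n → ℝ := fun i => ⟪a i, xh⟫ with hz
  have hzdef : ∀ i, z i = ⟪a i, s⟫ - 2 * (1 / (2 * lam)) * ⟪a i, vh⟫ := by
    intro i
    have hinv : lam⁻¹ = 2 * (1 / (2 * lam)) := by field_simp
    rw [hz]
    simp only [hxh, inner_sub_right, real_inner_smul_right]
    rw [hinv]
  -- Step 1: coordinatewise optimality of the dual optimum
  have hyopt : ∀ i, yh i = deriv (φ i) (z i) := by
    intro i
    have hsub : ∀ w : ℝ, φstar i (yh i) + z i * (w - yh i)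
        - (‖a i‖ ^ 2 * (1 / (2 * lam))) * (w - yh i) ^ 2 ≤ φstar i w := by
      intro w
      have hge := hgstar.2 ⟨WithLp.toLp 2 (Function.update yh i w), rfl⟩
      simp only [WithLp.ofLp_toLp] at hge
      rw [← hyh] at hge
      have hsum : (∑ j, φstar j (Function.update yh i w j))
          = (∑ j, φstar j (yh j)) + (φstar i w - φstar i (yh i)) := by
        have hfun : ∀ j, φstar j (Function.update yh i w j)
            = Function.update (fun j => φstar j (yh j)) i (φstar i w) j := by
          intro j; by_cases hji : j = i
          · subst hji; simp
          · simp [Function.update_of_ne hji]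
        rw [Finset.sum_congr rfl (fun j _ => hfun j),
          Finset.sum_update_of_mem (Finset.mem_univ i),
          Finset.sum_eq_sum_sdiff_singleton_add (Finset.mem_univ i) (fun j => φstar j (yh j))]
        ring
      have hVsum : (∑ j, Function.update yh i w j • a j) = vh + (w - yh i) • a i := by
        have hfun : ∀ j, Function.update yh i w j • a j
            = Function.update (fun j => yh j • a j) i (w • a i) j := by
          intro j; by_cases hji : j = i
          · subst hji; simp
          · simp [Function.update_of_ne hji]
        rw [Finset.sum_congr rfl (fun j _ => hfun j),
          Finset.sum_update_of_mem (Finset.mem_univ i), hvh,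
          Finset.sum_eq_sum_sdiff_singleton_add (Finset.mem_univ i) (fun j => yh j • a j),
          sub_smul]
        abel
      have hnorm : ‖vh + (w - yh i) • a i‖ ^ 2
          = ‖vh‖ ^ 2 + 2 * ((w - yh i) * ⟪a i, vh⟫) + (w - yh i) ^ 2 * ‖a i‖ ^ 2 := by
        rw [norm_add_sq_real, real_inner_smul_right, norm_smul, real_inner_comm]
        rw [Real.norm_eq_abs, mul_pow, sq_abs]
      have hinnerS : ⟪s, vh + (w - yh i) • a i⟫ = ⟪s, vh⟫ + (w - yh i) * ⟪a i, s⟫ := by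
        rw [inner_add_right, real_inner_smul_right, real_inner_comm s (a i)]
      rw [hsum, hVsum, hnorm, hinnerS] at hge
      rw [hzdef i]
      linarith
    have hFY' : ∀ w : ℝ, w * z i + (- φ i (z i)) ≤ φstar i w := by
      intro w
      have := aux_FY (hφstar i) w (z i)
      linarith
    have hval' : φstar i (deriv (φ i) (z i))
        = deriv (φ i) (z i) * z i + (- φ i (z i)) := by
      rw [aux_val (hconv i) (hdiff i) (hφstar i)]; ring
    exact aux_pincer hL hsub hFY' hval'
      (fun w₁ w₂ t ht0 ht1 => aux_strong hL (hdiff i) (hlip' i) (hφstar i) w₁ w₂ t ht0 ht1)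
  -- inner product with vh
  have hvinner : ∀ x : EuclideanSpace ℝ (Fin d), ⟪vh, x⟫ = ∑ j, yh j * ⟪a j, x⟫ := by
    intro x
    rw [hvh, sum_inner]
    exact Finset.sum_congr rfl fun j _ => real_inner_smul_left (a j) x (yh j)
  have hcancel : ∀ p : EuclideanSpace ℝ (Fin d), lam * ⟪xh - s, p⟫ = - ⟪vh, p⟫ := by
    intro p
    have h1 : xh - s = -(lam⁻¹ • vh) := by rw [hxh]; abel
    rw [h1, inner_neg_left, real_inner_smul_left]
    field_simp
  -- Step 2: xh is a primal minimizer
  have hstep2 : (∑ i, φ i (z i)) + lam / 2 * ‖xh - s‖ ^ 2 ≤ fstar := by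
    rw [← hx₀]
    have hterm : ∀ i, φ i (z i) + yh i * ⟪a i, x₀ - xh⟫ ≤ φ i ⟪a i, x₀⟫ := by
      intro i
      have h := aux_convex_lower (hconv i) (hdiff i) (z i) ⟪a i, x₀⟫
      rw [← hyopt i] at h
      have h2 : ⟪a i, x₀ - xh⟫ = ⟪a i, x₀⟫ - z i := inner_sub_right _ _ _
      rw [← h2] at h
      linarith
    have hsumterm : (∑ i, φ i (z i)) + ⟪vh, x₀ - xh⟫ ≤ ∑ i, φ i ⟪a i, x₀⟫ := by
      have h : (∑ i, (φ i (z i) + yh i * ⟪a i, x₀ - xh⟫)) ≤ ∑ i, φ i ⟪a i, x₀⟫ :=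
        Finset.sum_le_sum fun i _ => hterm i
      rw [Finset.sum_add_distrib, ← hvinner (x₀ - xh)] at h
      exact h
    have hdecomp : x₀ - s = (xh - s) + (x₀ - xh) := by abel
    have hquad : ‖x₀ - s‖ ^ 2
        = ‖xh - s‖ ^ 2 + 2 * ⟪xh - s, x₀ - xh⟫ + ‖x₀ - xh‖ ^ 2 := by
      rw [hdecomp, norm_add_sq_real]
    have hquad2 : lam / 2 * ‖x₀ - s‖ ^ 2 = lam / 2 * ‖xh - s‖ ^ 2
        + lam * ⟪xh - s, x₀ - xh⟫ + lam / 2 * ‖x₀ - xh‖ ^ 2 := by rw [hquad]; ring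
    have hc := hcancel (x₀ - xh)
    have hpos : 0 ≤ lam / 2 * ‖x₀ - xh‖ ^ 2 := mul_nonneg (half_pos hlam).le (sq_nonneg _)
    linarith [hsumterm, hquad2, hc, hpos]
  -- Step 3: smoothness of the primal around xh
  set xy : EuclideanSpace ℝ (Fin d) := s - lam⁻¹ • vy with hxy
  have hstep3 : (∑ i, φ i ⟪a i, xy⟫) + lam / 2 * ‖xy - s‖ ^ 2
      ≤ ((∑ i, φ i (z i)) + lam / 2 * ‖xh - s‖ ^ 2)
        + (L * (n : ℝ) * R ^ 2 + lam) / 2 * ‖xy - xh‖ ^ 2 := by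
    have hterm : ∀ i, φ i ⟪a i, xy⟫
        ≤ φ i (z i) + yh i * ⟪a i, xy - xh⟫ + L / 2 * (R ^ 2 * ‖xy - xh‖ ^ 2) := by
      intro i
      have h := aux_smooth hL.le (hdiff i) (hlip' i) (z i) ⟪a i, xy⟫
      rw [← hyopt i] at h
      have h2 : ⟪a i, xy - xh⟫ = ⟪a i, xy⟫ - z i := inner_sub_right _ _ _
      rw [← h2] at h
      have h3 : ⟪a i, xy - xh⟫ ^ 2 ≤ R ^ 2 * ‖xy - xh‖ ^ 2 := by
        have h4 := abs_real_inner_le_norm (a i) (xy - xh)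
        have h5 := hR i
        have h6 : (0:ℝ) ≤ ‖a i‖ := norm_nonneg _
        have h7 : (0:ℝ) ≤ ‖xy - xh‖ := norm_nonneg _
        calc ⟪a i, xy - xh⟫ ^ 2 = |⟪a i, xy - xh⟫| ^ 2 := (sq_abs _).symm
          _ ≤ (‖a i‖ * ‖xy - xh‖) ^ 2 := pow_le_pow_left₀ (abs_nonneg _) h4 2
          _ ≤ (R * ‖xy - xh‖) ^ 2 := by
              apply pow_le_pow_left₀ (by positivity) (mul_le_mul_of_nonneg_right h5 h7)
          _ = R ^ 2 * ‖xy - xh‖ ^ 2 := by ring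
      have h10 := mul_le_mul_of_nonneg_left h3 (half_pos hL).le
      linarith
    have hsum : (∑ i, φ i ⟪a i, xy⟫)
        ≤ (∑ i, φ i (z i)) + ⟪vh, xy - xh⟫ + (n : ℝ) * (L / 2 * (R ^ 2 * ‖xy - xh‖ ^ 2)) := by
      have h : (∑ i, φ i ⟪a i, xy⟫)
          ≤ ∑ i, (φ i (z i) + yh i * ⟪a i, xy - xh⟫ + L / 2 * (R ^ 2 * ‖xy - xh‖ ^ 2)) :=
        Finset.sum_le_sum fun i _ => hterm i
      rw [Finset.sum_add_distrib, Finset.sum_add_distrib, ← hvinner (xy - xh),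
        Finset.sum_const, Finset.card_univ, Fintype.card_fin, nsmul_eq_mul] at h
      exact h
    have hdecomp : xy - s = (xh - s) + (xy - xh) := by abel
    have hquad : ‖xy - s‖ ^ 2
        = ‖xh - s‖ ^ 2 + 2 * ⟪xh - s, xy - xh⟫ + ‖xy - xh‖ ^ 2 := by
      rw [hdecomp, norm_add_sq_real]
    have hquad2 : lam / 2 * ‖xy - s‖ ^ 2 = lam / 2 * ‖xh - s‖ ^ 2
        + lam * ⟪xh - s, xy - xh⟫ + lam / 2 * ‖xy - xh‖ ^ 2 := by rw [hquad]; ring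
    have hc := hcancel (xy - xh)
    linarith [hsum, hquad2, hc]
  -- Step 4: bound on the primal displacement
  have hVu : vy - vh = ∑ j, (y j - yh j) • a j := by
    rw [hvy, hvh, ← Finset.sum_sub_distrib]
    exact Finset.sum_congr rfl fun j _ => (sub_smul (y j) (yh j) (a j)).symm
  have hstep4 : ‖vy - vh‖ ^ 2 ≤ ((n : ℝ) * R ^ 2) * (∑ j, (y j - yh j) ^ 2) := by
    have h1 : ‖vy - vh‖ ≤ ∑ j, |y j - yh j| * ‖a j‖ := by
      rw [hVu]
      refine (norm_sum_le _ _).trans (le_of_eq ?_)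
      exact Finset.sum_congr rfl fun j _ => by rw [norm_smul, Real.norm_eq_abs]
    have h2 : (∑ j, |y j - yh j| * ‖a j‖) ^ 2
        ≤ (∑ j, |y j - yh j| ^ 2) * (∑ j, ‖a j‖ ^ 2) :=
      Finset.sum_mul_sq_le_sq_mul_sq _ _ _
    have h3 : (∑ j, |y j - yh j| ^ 2) = ∑ j, (y j - yh j) ^ 2 :=
      Finset.sum_congr rfl fun j _ => sq_abs _
    have h4 : (∑ j, ‖a j‖ ^ 2) ≤ (n : ℝ) * R ^ 2 := by
      have h5 : ∀ j : Fin n, ‖a j‖ ^ 2 ≤ R ^ 2 := by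
        intro j
        have := hR j
        nlinarith [norm_nonneg (a j)]
      calc (∑ j, ‖a j‖ ^ 2) ≤ ∑ _j : Fin n, R ^ 2 := Finset.sum_le_sum fun j _ => h5 j
        _ = (n : ℝ) * R ^ 2 := by
          rw [Finset.sum_const, Finset.card_univ, Fintype.card_fin, nsmul_eq_mul]
    have h6 : (0:ℝ) ≤ ∑ j, (y j - yh j) ^ 2 := by positivity
    have h7 : ‖vy - vh‖ ^ 2 ≤ (∑ j, |y j - yh j| * ‖a j‖) ^ 2 :=
      pow_le_pow_left₀ (norm_nonneg _) h1 2
    rw [h3] at h2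
    have h9 := mul_le_mul_of_nonneg_left h4 h6
    linarith
  -- Step 5: strong convexity of the dual
  set gy : ℝ := (∑ i, φstar i (y i)) + 1 / (2 * lam) * ‖vy‖ ^ 2 - ⟪s, vy⟫ with hgydef
  have hstep5 : (∑ j, (y j - yh j) ^ 2) ≤ 2 * L * (gy - gstar) := by
    have key : (1 / (2 * L)) * (∑ j, (y j - yh j) ^ 2) ≤ gy - gstar := by
      apply aux_limit (r := (1 / (2 * L)) * (∑ j, (y j - yh j) ^ 2))
      intro t ht
      have hgw := hgstar.2 ⟨yh + t • (y - yh), rfl⟩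
      simp only [] at hgw
      rw [← hyh] at hgw
      have hcomp : ∀ j, (yh + t • (y - yh)) j = t * y j + (1 - t) * yh j := by
        intro j
        simp only [PiLp.add_apply, PiLp.smul_apply, PiLp.sub_apply, smul_eq_mul]
        ring
      have hsumφ : (∑ j, φstar j ((yh + t • (y - yh)) j))
          ≤ t * (∑ j, φstar j (y j)) + (1 - t) * (∑ j, φstar j (yh j))
            - t * (1 - t) / (2 * L) * (∑ j, (y j - yh j) ^ 2) := by
        have h1 : ∀ j : Fin n, φstar j ((yh + t • (y - yh)) j)
            ≤ t * φstar j (y j) + (1 - t) * φstar j (yh j)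
              - t * (1 - t) / (2 * L) * (y j - yh j) ^ 2 := by
          intro j
          rw [hcomp j]
          exact aux_strong hL (hdiff j) (hlip' j) (hφstar j) (y j) (yh j) t ht.1.le ht.2.le
        have h2 : (∑ j, φstar j ((yh + t • (y - yh)) j))
            ≤ ∑ j, (t * φstar j (y j) + (1 - t) * φstar j (yh j)
              - t * (1 - t) / (2 * L) * (y j - yh j) ^ 2) :=
          Finset.sum_le_sum fun j _ => h1 j
        rw [Finset.sum_sub_distrib, Finset.sum_add_distrib, ← Finset.mul_sum, ← Finset.mul_sum,
          ← Finset.mul_sum] at h2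
        exact h2
      have hVw : (∑ j, (yh + t • (y - yh)) j • a j) = vh + t • (vy - vh) := by
        have h1 : ∀ j : Fin n, (yh + t • (y - yh)) j • a j
            = yh j • a j + t • ((y j - yh j) • a j) := by
          intro j
          have hc : (yh + t • (y - yh)) j = yh j + t * (y j - yh j) := by
            rw [hcomp j]; ring
          rw [hc, add_smul, mul_smul]
        calc (∑ j, (yh + t • (y - yh)) j • a j)
            = ∑ j, (yh j • a j + t • ((y j - yh j) • a j)) :=
              Finset.sum_congr rfl fun j _ => h1 j
          _ = (∑ j, yh j • a j) + t • (∑ j, (y j - yh j) • a j) := by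
              rw [Finset.sum_add_distrib, Finset.smul_sum]
          _ = vh + t • (vy - vh) := by rw [← hvh, ← hVu]
      rw [hVw] at hgw
      have hnw2 : 1 / (2 * lam) * ‖vh + t • (vy - vh)‖ ^ 2
          = 1 / (2 * lam) * (‖vh‖ ^ 2 + 2 * (t * ⟪vh, vy - vh⟫) + t ^ 2 * ‖vy - vh‖ ^ 2) := by
        rw [norm_add_sq_real, real_inner_smul_right, norm_smul, Real.norm_eq_abs, mul_pow, sq_abs]
      have hny2 : 1 / (2 * lam) * (t * ‖vy‖ ^ 2)
          = 1 / (2 * lam) * (t * (‖vh‖ ^ 2 + 2 * ⟪vh, vy - vh⟫ + ‖vy - vh‖ ^ 2)) := by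
        have h := norm_add_sq_real vh (vy - vh)
        have h2 : vh + (vy - vh) = vy := by abel
        rw [h2] at h
        rw [h]
      have hiw2 : ⟪s, vh + t • (vy - vh)⟫ = ⟪s, vh⟫ + t * (⟪s, vy⟫ - ⟪s, vh⟫) := by
        rw [inner_add_right, real_inner_smul_right, inner_sub_right]
      have hslack : 0 ≤ 1 / (2 * lam) * (t * (1 - t) * ‖vy - vh‖ ^ 2) := by
        have h1 : (0:ℝ) ≤ t * (1 - t) * ‖vy - vh‖ ^ 2 :=
          mul_nonneg (mul_nonneg ht.1.le (by linarith [ht.2] : (0:ℝ) ≤ 1 - t)) (sq_nonneg _)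
        have h2 : (0:ℝ) ≤ 1 / (2 * lam) := by positivity
        exact mul_nonneg h2 h1
      have hmain : t * ((1 / (2 * L)) * (∑ j, (y j - yh j) ^ 2))
          ≤ t * ((gy - gstar) + t * ((1 / (2 * L)) * (∑ j, (y j - yh j) ^ 2))) := by
        have hyh2 : t * ((∑ i, φstar i (yh i)) + 1 / (2 * lam) * ‖vh‖ ^ 2 - ⟪s, vh⟫)
            = t * gstar := by rw [hyh]
        rw [hgydef]
        generalize hSS : (∑ j, (y j - yh j) ^ 2) = SS at hsumφ ⊢
        ring_nf at hgw hsumφ hnw2 hiw2 hny2 hslack hyh2 ⊢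
        linarith [hgw, hsumφ, hnw2, hiw2, hny2, hslack, hyh2]
      exact le_of_mul_le_mul_left hmain ht.1
    have h2L : (0:ℝ) ≤ 2 * L := by linarith
    have h3 := mul_le_mul_of_nonneg_left key h2L
    have hid : 2 * L * ((1 / (2 * L)) * (∑ j, (y j - yh j) ^ 2)) = ∑ j, (y j - yh j) ^ 2 := by
      field_simp
    rw [hid] at h3
    exact h3
  -- Step 6: putting everything together
  have hDnn : 0 ≤ gy - gstar := by
    have h := hgstar.2 ⟨y, rfl⟩
    simp only [] at h
    rw [← hgydef] at h
    linarith
  have hxyxh : ‖xy - xh‖ ^ 2 = lam⁻¹ ^ 2 * ‖vy - vh‖ ^ 2 := by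
    have h1 : xy - xh = lam⁻¹ • (vh - vy) := by
      rw [hxy, hxh, smul_sub]; abel
    rw [h1, norm_smul, Real.norm_eq_abs, abs_of_pos (inv_pos.mpr hlam), mul_pow, norm_sub_rev]
  have c1 : (∑ i, φ i ⟪a i, xy⟫) + lam / 2 * ‖xy - s‖ ^ 2 - fstar
      ≤ (L * (n : ℝ) * R ^ 2 + lam) / 2 * ‖xy - xh‖ ^ 2 := by linarith [hstep2, hstep3]
  have hCnn : (0:ℝ) ≤ (L * (n : ℝ) * R ^ 2 + lam) / 2 := by
    have h1 : (0:ℝ) ≤ L * (n : ℝ) * R ^ 2 :=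
      mul_nonneg (mul_nonneg hL.le (Nat.cast_nonneg n)) (sq_nonneg R)
    linarith
  have c2 : (L * (n : ℝ) * R ^ 2 + lam) / 2 * ‖xy - xh‖ ^ 2
      = (L * (n : ℝ) * R ^ 2 + lam) / 2 * lam⁻¹ ^ 2 * ‖vy - vh‖ ^ 2 := by
    rw [hxyxh]; ring
  have c3 : (L * (n : ℝ) * R ^ 2 + lam) / 2 * lam⁻¹ ^ 2 * ‖vy - vh‖ ^ 2
      ≤ (L * (n : ℝ) * R ^ 2 + lam) / 2 * lam⁻¹ ^ 2 * (((n : ℝ) * R ^ 2) * (∑ j, (y j - yh j) ^ 2)) :=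
    mul_le_mul_of_nonneg_left hstep4 (mul_nonneg hCnn (sq_nonneg _))
  have c4 : (L * (n : ℝ) * R ^ 2 + lam) / 2 * lam⁻¹ ^ 2 * (((n : ℝ) * R ^ 2) * (∑ j, (y j - yh j) ^ 2))
      ≤ (L * (n : ℝ) * R ^ 2 + lam) / 2 * lam⁻¹ ^ 2 * (((n : ℝ) * R ^ 2) * (2 * L * (gy - gstar))) := by
    have hco : (0:ℝ) ≤ (L * (n : ℝ) * R ^ 2 + lam) / 2 * lam⁻¹ ^ 2 * ((n : ℝ) * R ^ 2) := by
      apply mul_nonneg (mul_nonneg hCnn (sq_nonneg _))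
      exact mul_nonneg (Nat.cast_nonneg n) (sq_nonneg R)
    calc (L * (n : ℝ) * R ^ 2 + lam) / 2 * lam⁻¹ ^ 2 * (((n : ℝ) * R ^ 2) * (∑ j, (y j - yh j) ^ 2))
        = ((L * (n : ℝ) * R ^ 2 + lam) / 2 * lam⁻¹ ^ 2 * ((n : ℝ) * R ^ 2)) * (∑ j, (y j - yh j) ^ 2) := by ring
      _ ≤ ((L * (n : ℝ) * R ^ 2 + lam) / 2 * lam⁻¹ ^ 2 * ((n : ℝ) * R ^ 2)) * (2 * L * (gy - gstar)) :=
          mul_le_mul_of_nonneg_left hstep5 hco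
      _ = (L * (n : ℝ) * R ^ 2 + lam) / 2 * lam⁻¹ ^ 2 * (((n : ℝ) * R ^ 2) * (2 * L * (gy - gstar))) := by ring
  have c5 : (L * (n : ℝ) * R ^ 2 + lam) / 2 * lam⁻¹ ^ 2 * (((n : ℝ) * R ^ 2) * (2 * L * (gy - gstar)))
      = ((n : ℝ) * (L * R ^ 2 / lam)) ^ 2 * (gy - gstar)
        + ((n : ℝ) * (L * R ^ 2 / lam)) * (gy - gstar) := by
    field_simp
  have hq : L * R ^ 2 / lam ≤ (⌈L * R ^ 2 / lam⌉₊ : ℝ) := Nat.le_ceil _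
  have hq0 : (0:ℝ) ≤ L * R ^ 2 / lam := div_nonneg (mul_nonneg hL.le (sq_nonneg R)) hlam.le
  have hnq : (n : ℝ) * (L * R ^ 2 / lam) ≤ (n : ℝ) * (⌈L * R ^ 2 / lam⌉₊ : ℝ) :=
    mul_le_mul_of_nonneg_left hq (Nat.cast_nonneg n)
  have hnq0 : (0:ℝ) ≤ (n : ℝ) * (L * R ^ 2 / lam) := mul_nonneg (Nat.cast_nonneg n) hq0
  have hsq : ((n : ℝ) * (L * R ^ 2 / lam)) ^ 2 ≤ ((n : ℝ) * (⌈L * R ^ 2 / lam⌉₊ : ℝ)) ^ 2 :=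
    pow_le_pow_left₀ hnq0 hnq 2
  have hk : (n : ℝ) * (⌈L * R ^ 2 / lam⌉₊ : ℝ) ≤ ((n : ℝ) * (⌈L * R ^ 2 / lam⌉₊ : ℝ)) ^ 2 := by
    have h1 : n * ⌈L * R ^ 2 / lam⌉₊ ≤ (n * ⌈L * R ^ 2 / lam⌉₊) ^ 2 :=
      Nat.le_self_pow (by norm_num) _
    have h2 : ((n * ⌈L * R ^ 2 / lam⌉₊ : ℕ) : ℝ) ≤ (((n * ⌈L * R ^ 2 / lam⌉₊ : ℕ) : ℝ)) ^ 2 := by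
      exact_mod_cast h1
    push_cast at h2
    exact h2
  have d1 : ((n : ℝ) * (L * R ^ 2 / lam)) ^ 2 * (gy - gstar)
      ≤ ((n : ℝ) * (⌈L * R ^ 2 / lam⌉₊ : ℝ)) ^ 2 * (gy - gstar) :=
    mul_le_mul_of_nonneg_right hsq hDnn
  have d2 : ((n : ℝ) * (L * R ^ 2 / lam)) * (gy - gstar)
      ≤ ((n : ℝ) * (⌈L * R ^ 2 / lam⌉₊ : ℝ)) * (gy - gstar) :=
    mul_le_mul_of_nonneg_right hnq hDnn
  have d3 : ((n : ℝ) * (⌈L * R ^ 2 / lam⌉₊ : ℝ)) * (gy - gstar)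
      ≤ ((n : ℝ) * (⌈L * R ^ 2 / lam⌉₊ : ℝ)) ^ 2 * (gy - gstar) :=
    mul_le_mul_of_nonneg_right hk hDnn
  linarith [c1, c2, c3, c4, c5, d1, d2, d3]
end

section
/- In the ERM setting with each φ_i convex and L-smooth (L > 0), ‖a_i‖₂ ≤ R for all i, and with F being μ-strongly convex (μ > 0) and attaining minimum value F*, let λ > 0 and suppose g_{x,λ} and g_{x',λ} attain minimum values g*_{x,λ} and g*_{x',λ}. Then for all y ∈ ℝ^n and x ∈ ℝ^d, setting x' := x − (1/λ)Aᵀy and κ := ⌈L·R²/μ⌉: g_{x',λ}(y) − g*_{x',λ} ≤ 2·(g_{x,λ}(y) − g*_{x,λ}) + 4·n·κ·[(F(x') − F*) + (F(x) − F*)]. -/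
set_option maxHeartbeats 1000000
open scoped RealInnerProductSpace

lemma grad_ineq {f : ℝ → ℝ} (hconv : ConvexOn ℝ Set.univ f) (hd : Differentiable ℝ f)
    (a b : ℝ) : f a + deriv f a * (b - a) ≤ f b := by
  rcases lt_trichotomy a b with h | h | h
  · have h1 := hconv.deriv_le_slope (Set.mem_univ a) (Set.mem_univ b) h (hd a)
    rw [slope_def_field] at h1
    have hba : (0:ℝ) < b - a := by linarith
    rw [le_div_iff₀ hba] at h1
    linarith
  · simp [h]
  · have h1 := hconv.slope_le_deriv (Set.mem_univ b) (Set.mem_univ a) h (hd a)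
    rw [slope_def_field] at h1
    have hba : (0:ℝ) < a - b := by linarith
    rw [div_le_iff₀ hba] at h1
    nlinarith [h1]

lemma lip_abs {f : ℝ → ℝ} {L : ℝ} (hL : 0 ≤ L) (hlip : LipschitzWith L.toNNReal (deriv f))
    (p q : ℝ) : |deriv f p - deriv f q| ≤ L * |p - q| := by
  have := hlip.dist_le_mul p q
  rwa [Real.dist_eq, Real.dist_eq, Real.coe_toNNReal L hL] at this

lemma descent {f : ℝ → ℝ} (hd : Differentiable ℝ f) {L : ℝ} (hL : 0 ≤ L)
    (hlip : LipschitzWith L.toNNReal (deriv f)) (a b : ℝ) :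
    f b ≤ f a + deriv f a * (b - a) + L / 2 * (b - a) ^ 2 := by
  set c := b - a with hc
  have hg : ∀ t : ℝ, HasDerivAt (fun s => f (a + s * c)) (deriv f (a + t * c) * c) t := by
    intro t
    have h1 : HasDerivAt (fun s : ℝ => a + s * c) c t := by
      simpa using ((hasDerivAt_id t).mul_const c).const_add a
    exact ((hd (a + t * c)).hasDerivAt).comp t h1
  have hcont : Continuous (fun t : ℝ => deriv f (a + t * c) * c) := by
    have : Continuous (deriv f) := hlip.continuous
    fun_prop
  have hint : IntervalIntegrable (fun t : ℝ => deriv f (a + t * c) * c)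
      MeasureTheory.volume 0 1 := hcont.intervalIntegrable 0 1
  have hftc : (∫ t in (0:ℝ)..1, deriv f (a + t * c) * c) = f b - f a := by
    rw [intervalIntegral.integral_eq_sub_of_hasDerivAt (fun t _ => hg t) hint]
    norm_num [hc]
  have hbound : (∫ t in (0:ℝ)..1, deriv f (a + t * c) * c)
      ≤ ∫ t in (0:ℝ)..1, (deriv f a * c + (L * c ^ 2) * t) := by
    apply intervalIntegral.integral_mono_on zero_le_one hint
    · exact (Continuous.intervalIntegrable (by fun_prop) 0 1)
    · intro t ht
      have h2 := lip_abs hL hlip (a + t * c) a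
      have h3 : |a + t * c - a| = t * |c| := by
        rw [add_sub_cancel_left, abs_mul, abs_of_nonneg ht.1]
      rw [h3] at h2
      have h5 : (deriv f (a + t * c) - deriv f a) * c ≤ |deriv f (a + t * c) - deriv f a| * |c| :=
        (le_abs_self _).trans (le_of_eq (abs_mul _ _))
      have h6 : |deriv f (a + t * c) - deriv f a| * |c| ≤ L * (t * |c|) * |c| :=
        mul_le_mul_of_nonneg_right h2 (abs_nonneg c)
      have h8 : L * (t * |c|) * |c| = (L * c ^ 2) * t := by
        rw [show L * (t * |c|) * |c| = L * t * (|c| * |c|) by ring, ← abs_mul, sq, abs_mul_self]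
        ring
      linarith
  have hval : (∫ t in (0:ℝ)..1, (deriv f a * c + (L * c ^ 2) * t))
      = deriv f a * c + L / 2 * c ^ 2 := by
    rw [intervalIntegral.integral_add intervalIntegrable_const
      (Continuous.intervalIntegrable (by fun_prop) 0 1)]
    have e1 : (∫ _x in (0:ℝ)..1, deriv f a * c) = deriv f a * c := by simp
    have e2 : (∫ x in (0:ℝ)..1, (L * c ^ 2) * x) = L / 2 * c ^ 2 := by
      rw [intervalIntegral.integral_const_mul, integral_id]; ring
    rw [e1, e2]
  linarith [hftc ▸ hbound, hval]

lemma conj_fy {f : ℝ → ℝ} {w c : ℝ} (h : IsLUB {u : ℝ | ∃ z : ℝ, u = w * z - f z} c)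
    (z : ℝ) : w * z - f z ≤ c := h.1 ⟨z, rfl⟩

lemma conj_eq {f : ℝ → ℝ} (hconv : ConvexOn ℝ Set.univ f) (hd : Differentiable ℝ f)
    {z₀ c : ℝ} (h : IsLUB {u : ℝ | ∃ z : ℝ, u = deriv f z₀ * z - f z} c) :
    c = deriv f z₀ * z₀ - f z₀ := by
  refine le_antisymm (h.2 ?_) (conj_fy h z₀)
  rintro u ⟨z, rfl⟩
  have := grad_ineq hconv hd z₀ z
  nlinarith

lemma gap_ge {f : ℝ → ℝ} (hd : Differentiable ℝ f) {L : ℝ} (hL : 0 < L)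
    (hlip : LipschitzWith L.toNNReal (deriv f)) {w c : ℝ}
    (h : IsLUB {u : ℝ | ∃ z : ℝ, u = w * z - f z} c) (z : ℝ) :
    (w * z - f z) + (w - deriv f z) ^ 2 / (2 * L) ≤ c := by
  set δ := (w - deriv f z) / L with hδ
  have h1 := conj_fy h (z + δ)
  have h2 := descent hd hL.le hlip z (z + δ)
  have h3 : z + δ - z = δ := by ring
  rw [h3] at h2
  have hL' : L ≠ 0 := ne_of_gt hL
  have hd2 : δ * L = w - deriv f z := by rw [hδ, div_mul_cancel₀ _ hL']
  have h6 : (w - deriv f z) ^ 2 / (2 * L) = L / 2 * δ ^ 2 := by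
    rw [← hd2]; field_simp
  have h7 : (w - deriv f z) * δ = L * δ ^ 2 := by rw [← hd2]; ring
  nlinarith [h1, h2, h6, h7]

lemma sc_min {E : Type*} [NormedAddCommGroup E] [InnerProductSpace ℝ E] {F : E → ℝ} {μ : ℝ}
    (hμ : 0 < μ)
    (hsc : ConvexOn ℝ Set.univ (fun z : E => F z - μ / 2 * ‖z‖ ^ 2)) {xh : E}
    (hmin : ∀ z, F xh ≤ F z) (z : E) :
    μ / 2 * ‖z - xh‖ ^ 2 ≤ F z - F xh := by
  set n2 := ‖z - xh‖ ^ 2 with hn2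
  have hn2nn : 0 ≤ n2 := sq_nonneg _
  have key : ∀ t : ℝ, 0 < t → t < 1 → μ / 2 * ((1 - t) * n2) ≤ F z - F xh := by
    intro t ht0 ht1
    have hcvx := hsc.2 (Set.mem_univ xh) (Set.mem_univ z)
      (by linarith : (0:ℝ) ≤ 1 - t) ht0.le (by ring : (1 - t) + t = 1)
    simp only [smul_eq_mul] at hcvx
    have e1 : ‖(1-t) • xh + t • z‖ ^ 2
        = (1-t)^2 * ‖xh‖^2 + 2*((1-t)*t) * ⟪xh, z⟫ + t^2 * ‖z‖^2 := by
      rw [norm_add_sq_real, real_inner_smul_left, real_inner_smul_right,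
        norm_smul, norm_smul]
      rw [Real.norm_eq_abs, Real.norm_eq_abs, abs_of_nonneg (by linarith : (0:ℝ) ≤ 1-t),
        abs_of_nonneg ht0.le]
      ring
    have e2 : n2 = ‖z‖^2 - 2*⟪xh, z⟫ + ‖xh‖^2 := by
      rw [hn2, norm_sub_sq_real, real_inner_comm]; try ring
    have e3 : (1-t)*‖xh‖^2 + t*‖z‖^2 - ‖(1-t) • xh + t • z‖^2 = t*(1-t)*n2 := by
      rw [e1, e2]; ring
    have h8 := hmin ((1-t) • xh + t • z)
    have h9 : μ / 2 * (t*(1-t)*n2) ≤ t*(F z - F xh) := by nlinarith [hcvx, h8, e3]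
    nlinarith [h9, ht0]
  apply le_of_forall_pos_le_add
  intro ε hε
  have hden : (0:ℝ) < μ / 2 * n2 + ε + 1 := by nlinarith
  set t := min (1/2 : ℝ) (ε / (μ / 2 * n2 + ε + 1)) with hts
  have ht0 : 0 < t := lt_min (by norm_num) (div_pos hε hden)
  have ht1 : t < 1 := lt_of_le_of_lt (min_le_left _ _) (by norm_num)
  have h4 := key t ht0 ht1
  have h5 : t * (μ / 2 * n2) ≤ ε := by
    have h6 : t ≤ ε / (μ / 2 * n2 + ε + 1) := min_le_right _ _
    rw [le_div_iff₀ hden] at h6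
    nlinarith [h6, ht0.le, hε.le, hn2nn, hμ.le]
  nlinarith [h4, h5]

lemma gP_identity {n d : ℕ} (a : Fin n → EuclideanSpace ℝ (Fin d))
    (φ φstar : Fin n → ℝ → ℝ) {lam : ℝ} (hlam : 0 < lam)
    (s z : EuclideanSpace ℝ (Fin d)) (w : EuclideanSpace ℝ (Fin n)) :
    ((∑ i, φstar i (w i)) + 1/(2*lam) * ‖∑ i, w i • a i‖^2 - ⟪s, ∑ i, w i • a i⟫)
      + ((∑ i, φ i ⟪a i, z⟫) + lam/2 * ‖z - s‖^2)
    = (∑ i, (φstar i (w i) + φ i ⟪a i, z⟫ - w i * ⟪a i, z⟫))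
      + lam/2 * ‖z - s + lam⁻¹ • (∑ i, w i • a i)‖^2 := by
  set W : EuclideanSpace ℝ (Fin d) := ∑ i, w i • a i with hW
  have h1 : (∑ i, w i * ⟪a i, z⟫) = ⟪W, z⟫ := by
    rw [hW, sum_inner]
    congr 1; funext i
    rw [real_inner_smul_left]
  have h2 : ‖z - s + lam⁻¹ • W‖^2
      = ‖z-s‖^2 + 2*(lam⁻¹ * ⟪z-s, W⟫) + lam⁻¹^2 * ‖W‖^2 := by
    rw [norm_add_sq_real, real_inner_smul_right, norm_smul, Real.norm_eq_abs,
      abs_of_nonneg (inv_nonneg.mpr hlam.le), mul_pow]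
  have h3 : ⟪z-s, W⟫ = ⟪z, W⟫ - ⟪s, W⟫ := inner_sub_left z s W
  have h4 : ⟪W, z⟫ = ⟪z, W⟫ := real_inner_comm z W
  have h5 : (∑ i, (φstar i (w i) + φ i ⟪a i, z⟫ - w i * ⟪a i, z⟫))
      = (∑ i, φstar i (w i)) + (∑ i, φ i ⟪a i, z⟫) - (∑ i, w i * ⟪a i, z⟫) := by
    rw [Finset.sum_sub_distrib, Finset.sum_add_distrib]
  rw [h5, h2, h3, h1, h4]
  have hlam' : lam ≠ 0 := ne_of_gt hlam
  field_simp
  ring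

lemma final_scalar_s15 {lam μ N S pu pe ι dx dxp dz : ℝ} (hlam : 0 < lam) (hμ : 0 < μ)
    (hN : 1 ≤ N)
    (hS : lam^2*pu^2 ≤ 2*(N*μ)*S) (h6 : μ*pu^2 ≤ 4*(dz+dxp)) (h4 : dz + lam*pe^2 ≤ dx)
    (hι : ι ≤ pu*pe) (hSnn : 0 ≤ S) (hpu : 0 ≤ pu) (hpe : 0 ≤ pe) :
    lam*pu^2 + 2*lam*ι + lam/2*pe^2 ≤ S + 4*N*(dx + dxp) := by
  have hNμ : 0 < N*μ := by positivity
  obtain ⟨β, hβ⟩ : ∃ β : ℝ, β = lam/(N*μ) := ⟨_, rfl⟩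
  have hβ0 : 0 < β := by rw [hβ]; positivity
  obtain ⟨t, htdef⟩ : ∃ t : ℝ, t = β/2 + 1/β - 1 := ⟨_, rfl⟩
  have ht : 2/5 ≤ t := by
    have h1 : t - 2/5 = (5*(β - 7/5)^2 + 1/5) / (10*β) := by
      rw [htdef]; field_simp
      ring
    have h2 : 0 ≤ (5*(β - 7/5)^2 + 1/5) / (10*β) := by positivity
    linarith
  have ht0 : 0 < t := by linarith
  -- k3 : cross term
  have k3 : 2*(pu*pe) ≤ t*pu^2 + (1/t)*pe^2 := by
    have he : t*pu^2 + (1/t)*pe^2 - 2*(pu*pe) = (1/t)*(t*pu - pe)^2 := by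
      field_simp; ring
    nlinarith [mul_nonneg (le_of_lt (by positivity : (0:ℝ) < 1/t)) (sq_nonneg (t*pu - pe))]
  -- k1 : pu² budget
  have k1 : lam*(1+t)*pu^2 ≤ S + 4*(N*(dz+dxp)) := by
    have e1 : lam*(1+t) = lam^2/(2*(N*μ)) + N*μ := by
      rw [htdef, hβ]; field_simp; ring
    have e2 : lam^2/(2*(N*μ))*pu^2 ≤ S := by
      rw [div_mul_eq_mul_div, div_le_iff₀ (by positivity)]
      calc lam^2*pu^2 ≤ 2*(N*μ)*S := hS
      _ = S*(2*(N*μ)) := by ring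
    have e3 : (N*μ)*pu^2 ≤ 4*(N*(dz+dxp)) := by
      have := mul_le_mul_of_nonneg_left h6 (by linarith : (0:ℝ) ≤ N)
      nlinarith
    have e4 : lam*(1+t)*pu^2 = lam^2/(2*(N*μ))*pu^2 + (N*μ)*pu^2 := by rw [e1]; ring
    linarith [e2, e3, e4]
  -- k2 : pe² budget
  have k2 : lam*(1/t + 1/2)*pe^2 ≤ 3*(dx - dz) := by
    have h1t : 1/t ≤ 5/2 := by
      rw [div_le_iff₀ ht0]; linarith
    have c1 : lam*(1/t + 1/2)*pe^2 ≤ lam*3*pe^2 := by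
      apply mul_le_mul_of_nonneg_right _ (sq_nonneg pe)
      have : (1:ℝ)/t + 1/2 ≤ 3 := by linarith
      nlinarith [hlam.le]
    have c2 : lam*3*pe^2 ≤ 3*(dx - dz) := by nlinarith [h4]
    linarith
  have hdzdx : dz ≤ dx := by nlinarith [h4, sq_nonneg pe, hlam.le]
  have cross : 2*lam*ι ≤ lam*t*pu^2 + lam*(1/t)*pe^2 := by
    have : 2*lam*ι ≤ 2*lam*(pu*pe) := by nlinarith [hι, hlam.le]
    nlinarith [mul_le_mul_of_nonneg_left k3 hlam.le]
  have q1 : lam*(1+t)*pu^2 = lam*pu^2 + lam*t*pu^2 := by ring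
  have q2 : lam*(1/t+1/2)*pe^2 = lam*(1/t)*pe^2 + lam/2*pe^2 := by ring
  have q3 : 0 ≤ (4*N-3)*(dx-dz) :=
    mul_nonneg (by linarith : (0:ℝ) ≤ 4*N-3) (by linarith : (0:ℝ) ≤ dx-dz)
  nlinarith [k1, k2, cross, q1, q2, q3]

lemma prox_min {n d : ℕ} (a : Fin n → EuclideanSpace ℝ (Fin d)) (φ : Fin n → ℝ → ℝ)
    {L : ℝ} (hL : 0 < L) (hdiff : ∀ i, Differentiable ℝ (φ i))
    (hlip : ∀ i, LipschitzWith L.toNNReal (deriv (φ i)))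
    {R : ℝ} (hR : ∀ i, ‖a i‖ ≤ R) (hR0 : 0 ≤ R)
    {lam : ℝ} (hlam : 0 < lam) (x : EuclideanSpace ℝ (Fin d))
    {Fstar : ℝ} (hFlb : ∀ z : EuclideanSpace ℝ (Fin d), Fstar ≤ ∑ i, φ i ⟪a i, z⟫) :
    ∃ zh : EuclideanSpace ℝ (Fin d),
      (∀ z, (∑ i, φ i ⟪a i, zh⟫) + lam / 2 * ‖zh - x‖ ^ 2
          ≤ (∑ i, φ i ⟪a i, z⟫) + lam / 2 * ‖z - x‖ ^ 2) ∧
      (∑ i, deriv (φ i) ⟪a i, zh⟫ • a i) = lam • (x - zh) := by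
  classical
  set F : EuclideanSpace ℝ (Fin d) → ℝ := fun z => ∑ i, φ i ⟪a i, z⟫ with hF
  set P : EuclideanSpace ℝ (Fin d) → ℝ := fun z => F z + lam / 2 * ‖z - x‖ ^ 2 with hP
  have hFc : Continuous F := by
    apply continuous_finset_sum
    intro i _
    exact (hdiff i).continuous.comp (Continuous.inner continuous_const continuous_id)
  have hPc : Continuous P := by
    apply hFc.add
    have : Continuous fun z : EuclideanSpace ℝ (Fin d) => ‖z - x‖ ^ 2 := by fun_prop
    fun_prop
  -- existence of global minimizer
  obtain ⟨zh, hzhK, hzhmin⟩ : ∃ zh ∈ Metric.closedBall x (Real.sqrt (2*(F x - Fstar)/lam) + 1),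
      IsMinOn P (Metric.closedBall x (Real.sqrt (2*(F x - Fstar)/lam) + 1)) zh := by
    apply (isCompact_closedBall x _).exists_isMinOn
    · exact ⟨x, Metric.mem_closedBall_self (by positivity)⟩
    · exact hPc.continuousOn
  set r := Real.sqrt (2*(F x - Fstar)/lam) + 1 with hr
  have hglobal : ∀ z, P zh ≤ P z := by
    intro z
    by_cases hz : z ∈ Metric.closedBall x r
    · exact hzhmin hz
    · have hzx : r < ‖z - x‖ := by
        rw [Metric.mem_closedBall, not_le, dist_eq_norm] at hz
        exact hz
      have h1 : P zh ≤ P x := hzhmin (Metric.mem_closedBall_self (by positivity))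
      have h2 : P x = F x := by simp [hP]
      have hs : 0 ≤ 2*(F x - Fstar)/lam := by
        have h9 := hFlb x
        apply div_nonneg _ hlam.le
        simp only [hF]
        linarith
      have h3 : r ^ 2 ≥ 2*(F x - Fstar)/lam + 1 := by
        rw [hr]
        have h4 := Real.sq_sqrt hs
        nlinarith [Real.sqrt_nonneg (2*(F x - Fstar)/lam)]
      have h5 : lam / 2 * ‖z - x‖ ^ 2 > (F x - Fstar) + lam/2 := by
        have h6 : ‖z - x‖ ^ 2 > r ^ 2 := by nlinarith [norm_nonneg (z - x), hzx, (by positivity : (0:ℝ) ≤ r)]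
        have h7 : lam / 2 * r ^ 2 ≥ (F x - Fstar) + lam/2 := by
          calc lam / 2 * r^2 ≥ lam/2 * (2*(F x - Fstar)/lam + 1) := by nlinarith
          _ = (F x - Fstar) + lam/2 := by field_simp
        nlinarith [h7, mul_lt_mul_of_pos_left h6 (by positivity : (0:ℝ) < lam/2)]
      have h8 := hFlb z
      calc P zh ≤ F x := h1.trans_eq h2
      _ ≤ Fstar + (F x - Fstar) := le_of_eq (by ring)
      _ ≤ F z + lam / 2 * ‖z - x‖ ^ 2 := by
          have h9 : Fstar ≤ F z := h8
          nlinarith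
  -- first-order condition
  set G : EuclideanSpace ℝ (Fin d) := ∑ i, deriv (φ i) ⟪a i, zh⟫ • a i with hG
  set D : EuclideanSpace ℝ (Fin d) := G + lam • (zh - x) with hD
  have hdesc : ∀ (hv : EuclideanSpace ℝ (Fin d)) (t : ℝ),
      P (zh + t • hv) ≤ P zh + t * ⟪D, hv⟫ + (L * n * R^2 / 2 + lam / 2) * t^2 * ‖hv‖^2 := by
    intro hv t
    have hip : ∀ i, ⟪a i, zh + t • hv⟫ = ⟪a i, zh⟫ + t * ⟪a i, hv⟫ := by
      intro i
      rw [inner_add_right, real_inner_smul_right]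
    have hterm : ∀ i, φ i ⟪a i, zh + t • hv⟫ ≤ φ i ⟪a i, zh⟫
        + deriv (φ i) ⟪a i, zh⟫ * (t * ⟪a i, hv⟫) + L / 2 * (t * ⟪a i, hv⟫)^2 := by
      intro i
      have hds := descent (hdiff i) hL.le (hlip i) ⟪a i, zh⟫ (⟪a i, zh⟫ + t * ⟪a i, hv⟫)
      have hsimp : ⟪a i, zh⟫ + t * ⟪a i, hv⟫ - ⟪a i, zh⟫ = t * ⟪a i, hv⟫ := by ring
      rw [hsimp, ← hip i] at hds
      exact hds
    have hsum : F (zh + t • hv) ≤ F zh + t * ⟪G, hv⟫ + L / 2 * t^2 * (∑ i, ⟪a i, hv⟫^2) := by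
      have h1 : ⟪G, hv⟫ = ∑ i, deriv (φ i) ⟪a i, zh⟫ * ⟪a i, hv⟫ := by
        rw [hG, sum_inner]
        congr 1; funext i
        rw [real_inner_smul_left]
      rw [h1]
      calc F (zh + t • hv) ≤ ∑ i, (φ i ⟪a i, zh⟫
            + deriv (φ i) ⟪a i, zh⟫ * (t * ⟪a i, hv⟫) + L / 2 * (t * ⟪a i, hv⟫)^2) :=
          Finset.sum_le_sum (fun i _ => hterm i)
      _ = F zh + t * (∑ i, deriv (φ i) ⟪a i, zh⟫ * ⟪a i, hv⟫) + L/2 * t^2 * (∑ i, ⟪a i, hv⟫^2) := by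
          rw [Finset.sum_add_distrib, Finset.sum_add_distrib, Finset.mul_sum, Finset.mul_sum]
          congr 2
          · congr 1; funext i; ring
          · congr 1; funext i; ring
    have hCS : (∑ i, ⟪a i, hv⟫^2) ≤ n * (R^2 * ‖hv‖^2) := by
      calc (∑ i, ⟪a i, hv⟫^2) ≤ ∑ _i : Fin n, R^2 * ‖hv‖^2 := by
            apply Finset.sum_le_sum
            intro i _
            have h2 := abs_real_inner_le_norm (a i) hv
            have h3 : ‖a i‖ * ‖hv‖ ≤ R * ‖hv‖ := mul_le_mul_of_nonneg_right (hR i) (norm_nonneg _)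
            nlinarith [abs_nonneg ⟪a i, hv⟫, norm_nonneg hv, sq_abs ⟪a i, hv⟫]
      _ = n * (R^2 * ‖hv‖^2) := by rw [Finset.sum_const, Finset.card_univ, Fintype.card_fin]; simp [nsmul_eq_mul]
    have hquad : ‖zh + t • hv - x‖^2 = ‖zh - x‖^2 + 2 * t * ⟪zh - x, hv⟫ + t^2 * ‖hv‖^2 := by
      have : zh + t • hv - x = (zh - x) + t • hv := by abel
      rw [this, norm_add_sq_real, real_inner_smul_right, norm_smul]
      rw [Real.norm_eq_abs, mul_pow, sq_abs]
      ring
    have hDinner : ⟪D, hv⟫ = ⟪G, hv⟫ + lam * ⟪zh - x, hv⟫ := by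
      rw [hD, inner_add_left, real_inner_smul_left]
    rw [hP]
    simp only
    rw [hquad, hDinner]
    have hL2 : L / 2 * t^2 * (∑ i, ⟪a i, hv⟫^2) ≤ L / 2 * t^2 * (n * (R^2 * ‖hv‖^2)) := by
      apply mul_le_mul_of_nonneg_left hCS
      positivity
    nlinarith [hsum, hL2]
  have hDzero : D = 0 := by
    by_contra hne
    have hDn : 0 < ‖D‖^2 := by
      have := norm_pos_iff.mpr hne
      positivity
    set K := L * n * R^2 / 2 + lam / 2 with hK
    have hK0 : 0 < K := by positivity
    set t := -(1 / (2 * K)) with ht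
    have h1 := hdesc D t
    have h2 := hglobal (zh + t • D)
    have h4 : 0 ≤ t * ⟪D, D⟫ + K * t^2 * ‖D‖^2 := by linarith
    rw [real_inner_self_eq_norm_sq] at h4
    have h3 : t * ‖D‖^2 + K * t^2 * ‖D‖^2 < 0 := by
      have he : t * ‖D‖^2 + K * t^2 * ‖D‖^2 = -(1/(4*K)) * ‖D‖^2 := by
        rw [ht]; field_simp; ring
      rw [he]
      have hx4 : 0 < 1/(4*K) := by positivity
      nlinarith
    linarith
  refine ⟨zh, hglobal, ?_⟩
  have h5 : G + lam • (zh - x) = 0 := by rw [← hD]; exact hDzero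
  have h6 := eq_neg_of_add_eq_zero_left h5
  rw [← smul_neg, neg_sub] at h6
  exact h6

lemma tri_sq {μ A B C dz dxp : ℝ} (hμ : 0 < μ) (htri : C ≤ A + B) (hC : 0 ≤ C)
    (hA : 0 ≤ A) (hB : 0 ≤ B) (t1 : μ/2*A^2 ≤ dz) (t2 : μ/2*B^2 ≤ dxp) :
    μ*C^2 ≤ 4*(dz + dxp) := by
  have e1 : C^2 ≤ (A+B)^2 := by nlinarith
  have e2 : (A+B)^2 ≤ 2*A^2 + 2*B^2 := by nlinarith [sq_nonneg (A-B)]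
  have e3 : μ*C^2 ≤ μ*(2*A^2+2*B^2) := mul_le_mul_of_nonneg_left (e1.trans e2) hμ.le
  nlinarith [e3]

/-- Lemma: dual error after re-centering. -/
theorem stmt15 {n d : ℕ} (a : Fin n → EuclideanSpace ℝ (Fin d))
    (φ : Fin n → ℝ → ℝ) (hconv : ∀ i, ConvexOn ℝ Set.univ (φ i))
    (L : ℝ) (hL : 0 < L)
    (hdiff : ∀ i, Differentiable ℝ (φ i))
    (hlip : ∀ i, LipschitzWith L.toNNReal (deriv (φ i)))
    (R : ℝ) (hR : ∀ i, ‖a i‖ ≤ R)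
    (μ : ℝ) (hμ : 0 < μ)
    (hsc : ConvexOn ℝ Set.univ
      (fun z : EuclideanSpace ℝ (Fin d) => (∑ i, φ i ⟪a i, z⟫) - μ / 2 * ‖z‖ ^ 2))
    (Fstar : ℝ)
    (hF : IsLeast
      (Set.range (fun z : EuclideanSpace ℝ (Fin d) => ∑ i, φ i ⟪a i, z⟫)) Fstar)
    (φstar : Fin n → ℝ → ℝ)
    (hφstar : ∀ i (w : ℝ), IsLUB {u : ℝ | ∃ z : ℝ, u = w * z - φ i z} (φstar i w))
    (lam : ℝ) (hlam : 0 < lam)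
    (y : EuclideanSpace ℝ (Fin n)) (x : EuclideanSpace ℝ (Fin d))
    (x' : EuclideanSpace ℝ (Fin d)) (hx' : x' = x - lam⁻¹ • ∑ i, y i • a i)
    (gstarx gstarx' : ℝ)
    (hgx : IsLeast
      (Set.range (fun w : EuclideanSpace ℝ (Fin n) =>
        (∑ i, φstar i (w i)) + 1 / (2 * lam) * ‖∑ i, w i • a i‖ ^ 2
          - ⟪x, ∑ i, w i • a i⟫)) gstarx)
    (hgx' : IsLeast
      (Set.range (fun w : EuclideanSpace ℝ (Fin n) =>
        (∑ i, φstar i (w i)) + 1 / (2 * lam) * ‖∑ i, w i • a i‖ ^ 2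
          - ⟪x', ∑ i, w i • a i⟫)) gstarx') :
    ((∑ i, φstar i (y i)) + 1 / (2 * lam) * ‖∑ i, y i • a i‖ ^ 2
        - ⟪x', ∑ i, y i • a i⟫) - gstarx' ≤
      2 * (((∑ i, φstar i (y i)) + 1 / (2 * lam) * ‖∑ i, y i • a i‖ ^ 2
          - ⟪x, ∑ i, y i • a i⟫) - gstarx)
        + 4 * (n : ℝ) * (⌈L * R ^ 2 / μ⌉₊ : ℝ) *
            (((∑ i, φ i ⟪a i, x'⟫) - Fstar) + ((∑ i, φ i ⟪a i, x⟫) - Fstar)) := by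
  classical
  by_cases hn : n = 0
  · subst hn
    obtain ⟨w0, hw0⟩ := hgx'.1
    obtain ⟨w1, hw1⟩ := hgx.1
    simp only [Finset.univ_eq_empty, Finset.sum_empty, inner_zero_right, norm_zero] at hw0 hw1 ⊢
    norm_num at hw0 hw1 ⊢
    linarith
  -- n ≥ 1
  have hn1 : 0 < n := Nat.pos_of_ne_zero hn
  have hR0 : 0 ≤ R := le_trans (norm_nonneg (a ⟨0, hn1⟩)) (hR ⟨0, hn1⟩)
  rcases eq_or_lt_of_le hR0 with hReq | hRpos
  · -- R = 0 case
    have ha0 : ∀ i, a i = 0 := by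
      intro i
      apply norm_le_zero_iff.mp
      rw [hReq]
      exact hR i
    have ha : ∀ (i : Fin n) (z : EuclideanSpace ℝ (Fin d)), ⟪a i, z⟫ = (0:ℝ) := by
      intro i z
      rw [ha0 i, inner_zero_left]
    by_cases hd : d = 0
    · -- trivial subsingleton case
      subst hd
      have hxx : x' = x := Subsingleton.elim x' x
      rw [hxx] at hgx' ⊢
      have heq : gstarx' = gstarx := hgx'.unique hgx
      rw [heq]
      have h1 := hgx.2 ⟨y, rfl⟩
      simp only at h1
      have h2 := hF.2 ⟨x, rfl⟩
      simp only at h2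
      have h3 : (0:ℝ) ≤ 4*(n:ℝ)*(⌈L*R^2/μ⌉₊:ℝ) := by positivity
      have h4 : (0:ℝ) ≤ ((∑ i, φ i ⟪a i, x⟫) - Fstar) + ((∑ i, φ i ⟪a i, x⟫) - Fstar) := by
        linarith
      nlinarith [h1, mul_nonneg h3 h4]
    · exfalso
      have hd1 : 0 < d := Nat.pos_of_ne_zero hd
      set e0 : EuclideanSpace ℝ (Fin d) := EuclideanSpace.single ⟨0, hd1⟩ (1:ℝ) with he0def
      have he0 : ‖e0‖ = 1 := by rw [he0def, EuclideanSpace.norm_single]; norm_num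
      have hF0 : ∀ z : EuclideanSpace ℝ (Fin d),
          (∑ i, φ i ⟪a i, z⟫) = ∑ i, φ i 0 :=
        fun z => Finset.sum_congr rfl (fun i _ => by rw [ha i z])
      have heqf : (fun z : EuclideanSpace ℝ (Fin d) => (∑ i, φ i ⟪a i, z⟫) - μ/2 * ‖z‖^2)
          = (fun z : EuclideanSpace ℝ (Fin d) => (∑ i, φ i 0) - μ/2 * ‖z‖^2) :=
        funext (fun z => by rw [hF0 z])
      rw [heqf] at hsc
      have hcvx := hsc.2 (Set.mem_univ (0 : EuclideanSpace ℝ (Fin d)))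
        (Set.mem_univ ((2:ℝ) • e0)) (by norm_num : (0:ℝ) ≤ 1/2)
        (by norm_num : (0:ℝ) ≤ 1/2) (by norm_num : (1:ℝ)/2 + 1/2 = 1)
      simp only [smul_eq_mul] at hcvx
      have hmid : (1/2:ℝ) • (0 : EuclideanSpace ℝ (Fin d)) + (1/2:ℝ) • ((2:ℝ) • e0) = e0 := by
        rw [smul_zero, zero_add, smul_smul]
        norm_num
      rw [hmid] at hcvx
      have h2n : ‖(2:ℝ) • e0‖ = 2 := by
        rw [norm_smul, Real.norm_eq_abs, he0]
        norm_num
      rw [he0, h2n, norm_zero] at hcvx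
      nlinarith [hcvx, hμ]
  -- main case : 0 < R
  have hFlb : ∀ z : EuclideanSpace ℝ (Fin d), Fstar ≤ ∑ i, φ i ⟪a i, z⟫ :=
    fun z => hF.2 ⟨z, rfl⟩
  obtain ⟨xh, hxh⟩ := hF.1
  simp only at hxh
  obtain ⟨zh, hzmin, hzopt⟩ := prox_min a φ hL hdiff hlip hR hR0 hlam x hFlb
  set N : ℝ := (n:ℝ)*(⌈L*R^2/μ⌉₊:ℝ) with hNdef
  clear_value N
  have hceil1 : (1:ℝ) ≤ (⌈L*R^2/μ⌉₊:ℝ) := by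
    have h0 : 0 < L*R^2/μ := by positivity
    have := Nat.one_le_ceil_iff.mpr h0
    exact_mod_cast this
  have hN1 : 1 ≤ N := by
    rw [hNdef]
    have hn' : (1:ℝ) ≤ (n:ℝ) := by exact_mod_cast hn1
    nlinarith
  have hLF : L*n*R^2 ≤ N*μ := by
    have hceil : L*R^2/μ ≤ (⌈L*R^2/μ⌉₊:ℝ) := Nat.le_ceil _
    have h1 : L*R^2 ≤ (⌈L*R^2/μ⌉₊:ℝ)*μ := by
      rw [div_le_iff₀ hμ] at hceil
      linarith
    have hn0 : (0:ℝ) ≤ (n:ℝ) := Nat.cast_nonneg n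
    calc L*n*R^2 = (n:ℝ)*(L*R^2) := by ring
    _ ≤ (n:ℝ)*((⌈L*R^2/μ⌉₊:ℝ)*μ) := by nlinarith
    _ = N*μ := by rw [hNdef]; ring
  -- dual vector from the prox point
  set ws : EuclideanSpace ℝ (Fin n) := WithLp.toLp 2 (fun i => deriv (φ i) ⟪a i, zh⟫) with hwsdef
  have hws_i : ∀ i, ws i = deriv (φ i) ⟪a i, zh⟫ := fun i => rfl
  clear_value ws
  have hws_sum : (∑ i, ws i • a i) = lam • (x - zh) := by
    have he : (∑ i, ws i • a i) = ∑ i, deriv (φ i) ⟪a i, zh⟫ • a i :=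
      Finset.sum_congr rfl (fun i _ => by rw [hws_i i])
    rw [he]; exact hzopt
  set S : ℝ := ∑ i, (φstar i (y i) + φ i ⟪a i, zh⟫ - y i * ⟪a i, zh⟫) with hSdef
  clear_value S
  have hgap_each : ∀ i, (y i - ws i)^2/(2*L)
      ≤ φstar i (y i) + φ i ⟪a i, zh⟫ - y i * ⟪a i, zh⟫ := by
    intro i
    have := gap_ge (hdiff i) hL (hlip i) (hφstar i (y i)) ⟪a i, zh⟫
    rw [hws_i i]
    linarith
  have hgapnn : ∀ (u : EuclideanSpace ℝ (Fin n)) i,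
      0 ≤ φstar i (u i) + φ i ⟪a i, zh⟫ - u i * ⟪a i, zh⟫ := by
    intro u i
    have := gap_ge (hdiff i) hL (hlip i) (hφstar i (u i)) ⟪a i, zh⟫
    have h2 : 0 ≤ (u i - deriv (φ i) ⟪a i, zh⟫)^2/(2*L) := by positivity
    linarith
  have hSnn : 0 ≤ S := by
    rw [hSdef]; exact Finset.sum_nonneg (fun i _ => hgapnn y i)
  have hS_lb0 : (∑ i, (y i - ws i)^2) ≤ 2*L*S := by
    rw [hSdef, Finset.mul_sum]
    apply Finset.sum_le_sum
    intro i _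
    have := hgap_each i
    rw [div_le_iff₀ (by positivity : (0:ℝ) < 2*L)] at this
    linarith
  -- vectors
  set v : EuclideanSpace ℝ (Fin d) := ∑ i, y i • a i with hvdef
  clear_value v
  have hxv : lam⁻¹ • v = x - x' := by rw [hx']; abel
  have hvec1 : zh - x + lam⁻¹ • v = zh - x' := by rw [hxv]; abel
  have hvec2 : zh - x' + lam⁻¹ • v = (2:ℝ) • (zh - x') + (x - zh) := by
    rw [hxv]
    have h2 : (2:ℝ) • (zh - x') = (zh - x') + (zh - x') := two_smul ℝ _
    rw [h2]; abel
  -- upper bound on LHS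
  obtain ⟨wh, hwh⟩ := hgx'.1
  simp only at hwh
  have hgstarx'_ge : -((∑ i, φ i ⟪a i, zh⟫) + lam/2*‖zh - x'‖^2) ≤ gstarx' := by
    have hid := gP_identity a φ φstar hlam x' zh wh
    have h1 : 0 ≤ (∑ i, (φstar i (wh i) + φ i ⟪a i, zh⟫ - wh i * ⟪a i, zh⟫)) :=
      Finset.sum_nonneg (fun i _ => hgapnn wh i)
    have h2 : 0 ≤ lam/2 * ‖zh - x' + lam⁻¹ • (∑ i, wh i • a i)‖^2 := by positivity
    rw [← hwh]
    nlinarith [hid]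
  have hUB : ((∑ i, φstar i (y i)) + 1/(2*lam) * ‖v‖^2 - ⟪x', v⟫) - gstarx'
      ≤ S + lam/2 * ‖(2:ℝ) • (zh - x') + (x - zh)‖^2 := by
    have hid := gP_identity a φ φstar hlam x' zh y
    rw [← hvdef, ← hSdef, hvec2] at hid
    nlinarith [hid, hgstarx'_ge]
  -- lower bound on dual gap at x
  have hws_eq : ∀ i, φstar i (ws i) = ws i * ⟪a i, zh⟫ - φ i ⟪a i, zh⟫ := by
    intro i
    rw [hws_i i]
    exact conj_eq (hconv i) (hdiff i) (hφstar i _)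
  have hzero : zh - x + lam⁻¹ • (∑ i, ws i • a i) = 0 := by
    rw [hws_sum, smul_smul, inv_mul_cancel₀ (ne_of_gt hlam), one_smul]
    abel
  have hgstarx_le : gstarx ≤ -((∑ i, φ i ⟪a i, zh⟫) + lam/2*‖zh - x‖^2) := by
    have hid := gP_identity a φ φstar hlam x zh ws
    rw [hzero] at hid
    have h1 : (∑ i, (φstar i (ws i) + φ i ⟪a i, zh⟫ - ws i * ⟪a i, zh⟫)) = 0 := by
      apply Finset.sum_eq_zero
      intro i _
      rw [hws_eq i]; ring
    rw [h1] at hid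
    simp only [norm_zero] at hid
    have h2 := hgx.2 ⟨ws, rfl⟩
    simp only at h2
    nlinarith [hid, h2]
  have hLB : S + lam/2 * ‖zh - x'‖^2
      ≤ ((∑ i, φstar i (y i)) + 1/(2*lam) * ‖v‖^2 - ⟪x, v⟫) - gstarx := by
    have hid := gP_identity a φ φstar hlam x zh y
    rw [← hvdef, ← hSdef, hvec1] at hid
    nlinarith [hid, hgstarx_le]
  -- norm expansion
  have hexp : ‖(2:ℝ) • (zh - x') + (x - zh)‖^2
      = 4*‖zh - x'‖^2 + 4*⟪zh - x', x - zh⟫ + ‖x - zh‖^2 := by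
    rw [norm_add_sq_real, real_inner_smul_left, norm_smul, Real.norm_eq_abs]
    rw [abs_of_nonneg (by norm_num : (0:ℝ) ≤ 2), mul_pow]
    ring
  -- scalar facts
  have hsc_min : ∀ z : EuclideanSpace ℝ (Fin d),
      μ/2 * ‖z - xh‖^2 ≤ (∑ i, φ i ⟪a i, z⟫) - Fstar := by
    intro z
    have hmin : ∀ z', (∑ i, φ i ⟪a i, xh⟫) ≤ ∑ i, φ i ⟪a i, z'⟫ := by
      intro z'
      rw [hxh]
      exact hFlb z'
    have := sc_min hμ hsc hmin z
    rw [hxh] at this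
    exact this
  have hpu6 : μ*‖zh - x'‖^2 ≤ 4*(((∑ i, φ i ⟪a i, zh⟫) - Fstar)
      + ((∑ i, φ i ⟪a i, x'⟫) - Fstar)) := by
    have t1 := hsc_min zh
    have t2 := hsc_min x'
    have htri : ‖zh - x'‖ ≤ ‖zh - xh‖ + ‖x' - xh‖ := by
      have h := dist_triangle zh xh x'
      rw [dist_eq_norm, dist_eq_norm, dist_eq_norm, norm_sub_rev xh x'] at h
      exact h
    exact tri_sq hμ htri (norm_nonneg _) (norm_nonneg _) (norm_nonneg _) t1 t2
  have hgradF : ((∑ i, φ i ⟪a i, zh⟫) - Fstar) + lam*‖x - zh‖^2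
      ≤ (∑ i, φ i ⟪a i, x⟫) - Fstar := by
    have hsum : (∑ i, φ i ⟪a i, zh⟫) + (∑ i, ws i * (⟪a i, x⟫ - ⟪a i, zh⟫))
        ≤ ∑ i, φ i ⟪a i, x⟫ := by
      rw [← Finset.sum_add_distrib]
      apply Finset.sum_le_sum
      intro i _
      have := grad_ineq (hconv i) (hdiff i) ⟪a i, zh⟫ ⟪a i, x⟫
      rw [← hws_i i] at this
      linarith
    have hinner : (∑ i, ws i * (⟪a i, x⟫ - ⟪a i, zh⟫)) = lam*‖x - zh‖^2 := by
      have h1 : ∀ i, ⟪a i, x⟫ - ⟪a i, zh⟫ = ⟪a i, x - zh⟫ := by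
        intro i; rw [inner_sub_right]
      have h2 : (∑ i, ws i * ⟪a i, x - zh⟫) = ⟪∑ i, ws i • a i, x - zh⟫ := by
        rw [sum_inner]
        apply Finset.sum_congr rfl
        intro i _
        rw [real_inner_smul_left]
      simp_rw [h1]
      rw [h2, hws_sum, real_inner_smul_left, real_inner_self_eq_norm_sq]
    rw [hinner] at hsum
    linarith
  have hS_lb : lam^2*‖zh - x'‖^2 ≤ 2*(N*μ)*S := by
    have hveq : lam • (zh - x') = ∑ i, (y i - ws i) • a i := by
      have h1 : lam • (zh - x') = lam • (zh - x) + lam • (lam⁻¹ • v) := by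
        rw [hxv]
        simp only [smul_sub]
        abel
      rw [smul_smul, mul_inv_cancel₀ (ne_of_gt hlam), one_smul] at h1
      have h2 : lam • (zh - x) = -(∑ i, ws i • a i) := by
        rw [hws_sum, ← smul_neg, neg_sub]
      rw [h2] at h1
      rw [h1, hvdef, neg_add_eq_sub, ← Finset.sum_sub_distrib]
      apply Finset.sum_congr rfl
      intro i _
      rw [sub_smul]
    have hnorm1 : ‖∑ i, (y i - ws i) • a i‖ ≤ ∑ i, |y i - ws i| * R := by
      calc ‖∑ i, (y i - ws i) • a i‖ ≤ ∑ i, ‖(y i - ws i) • a i‖ := norm_sum_le _ _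
      _ ≤ ∑ i, |y i - ws i| * R := by
          apply Finset.sum_le_sum
          intro i _
          rw [norm_smul, Real.norm_eq_abs]
          exact mul_le_mul_of_nonneg_left (hR i) (abs_nonneg _)
    have hCS : (∑ i, |y i - ws i| * R)^2 ≤ (n:ℝ) * R^2 * (∑ i, (y i - ws i)^2) := by
      have h3 : (∑ i, |y i - ws i| * R) = (∑ i, |y i - ws i|) * R := by
        rw [← Finset.sum_mul]
      rw [h3, mul_pow]
      have h4 : (∑ i, |y i - ws i|)^2 ≤ (n:ℝ) * (∑ i, |y i - ws i|^2) := by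
        have := sq_sum_le_card_mul_sum_sq (s := Finset.univ) (f := fun i => |y i - ws i|)
        simpa using this
      have h5 : (∑ i, |y i - ws i|^2) = ∑ i, (y i - ws i)^2 := by
        apply Finset.sum_congr rfl
        intro i _
        exact sq_abs _
      rw [h5] at h4
      calc (∑ i, |y i - ws i|)^2 * R^2 ≤ ((n:ℝ) * ∑ i, (y i - ws i)^2) * R^2 :=
            mul_le_mul_of_nonneg_right h4 (sq_nonneg R)
      _ = (n:ℝ) * R^2 * (∑ i, (y i - ws i)^2) := by ring
    have hlhs : lam^2*‖zh - x'‖^2 = ‖∑ i, (y i - ws i) • a i‖^2 := by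
      rw [← hveq, norm_smul, Real.norm_eq_abs, abs_of_pos hlam, mul_pow]
    rw [hlhs]
    have h7 : ‖∑ i, (y i - ws i) • a i‖^2 ≤ (∑ i, |y i - ws i| * R)^2 :=
      pow_le_pow_left₀ (norm_nonneg _) hnorm1 2
    have h9 : (n:ℝ) * R^2 * (∑ i, (y i - ws i)^2) ≤ (n:ℝ) * R^2 * (2*L*S) :=
      mul_le_mul_of_nonneg_left hS_lb0 (by positivity)
    have h10 : (n:ℝ) * R^2 * (2*L*S) ≤ 2*(N*μ)*S := by
      have h11 : (n:ℝ) * R^2 * (2*L*S) = 2*(L*(n:ℝ)*R^2)*S := by ring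
      rw [h11]
      have h12 : 2*(L*(n:ℝ)*R^2) ≤ 2*(N*μ) := by linarith
      exact mul_le_mul_of_nonneg_right h12 hSnn
    linarith [h7, hCS, h9, h10]
  have hι : ⟪zh - x', x - zh⟫ ≤ ‖zh - x'‖*‖x - zh‖ := real_inner_le_norm _ _
  have hfin := final_scalar_s15 hlam hμ hN1 hS_lb hpu6 hgradF hι hSnn (norm_nonneg _) (norm_nonneg _)
  -- assemble
  have hq : lam/2 * ‖(2:ℝ) • (zh - x') + (x - zh)‖^2
      = lam*‖zh - x'‖^2 + (lam*‖zh - x'‖^2 + 2*lam*⟪zh - x', x - zh⟫ + lam/2*‖x - zh‖^2) := by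
    rw [hexp]; ring
  have h4Nr : 4 * (n : ℝ) * (⌈L * R ^ 2 / μ⌉₊ : ℝ) = 4*N := by rw [hNdef]; ring
  rw [h4Nr]
  linarith [hUB, hLB, hfin, hq]
end
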